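/- arXiv:1205.1587 — 13 statements merged into one kernel-verified Lean document; each statement's English description precedes it below -/
import Mathlib

section
/- Let m ≥ 1 and let f : 2^[m] → ℝ be any set function with f(∅) = 0. Define w_f by the W-transform of f. Then f is recovered from its W-coefficients: for every T ⊆ [m], f(T) = Σ_{S nonempty, S ∩ T ≠ ∅} w_f(S). -/
open Finset

/-- The W-transform: `Wcoef m f S = Σ_{T : S ∪ T = [m]} (−1)^{|S ∩ T| + 1} f(T)`. -/
noncomputable def Wcoef (m : ℕ) (f : Finset (Fin m) → ℝ) (S : Finset (Fin m)) : ℝ :=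
  ∑ T ∈ univ.filter (fun T : Finset (Fin m) => S ∪ T = univ),
    (-1 : ℝ) ^ ((S ∩ T).card + 1) * f T

lemma powsum {α : Type*} [DecidableEq α] (C : Finset α) :
    ∑ B ∈ C.powerset, (-1:ℝ)^B.card = if C = ∅ then 1 else 0 := by
  have h := Finset.sum_powerset_neg_one_pow_card (x := C)
  have h2 := congrArg (Int.cast : ℤ → ℝ) h
  push_cast at h2
  rw [h2]

lemma key (m : ℕ) (T T' : Finset (Fin m)) :
    (∑ S : Finset (Fin m),
      if (S.Nonempty ∧ (S ∩ T).Nonempty) ∧ S ∪ T' = univ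
      then (-1:ℝ)^((S ∩ T').card + 1) else 0)
    = (if T' = T then 1 else 0) - (if T' = ∅ then 1 else 0) := by
  have hdrop : ∀ S : Finset (Fin m),
      ((S.Nonempty ∧ (S ∩ T).Nonempty) ∧ S ∪ T' = univ) ↔
      ((S ∪ T' = univ) ∧ (S ∩ T).Nonempty) := by
    intro S
    constructor
    · rintro ⟨⟨_, h2⟩, h3⟩; exact ⟨h3, h2⟩
    · rintro ⟨h3, h2⟩
      exact ⟨⟨h2.mono (inter_subset_left), h2⟩, h3⟩
  simp only [hdrop, ite_and]
  rw [← Finset.sum_filter]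
  have hbij : ∑ S ∈ univ.filter (fun S : Finset (Fin m) => S ∪ T' = univ),
      (if (S ∩ T).Nonempty then (-1:ℝ)^((S ∩ T').card + 1) else 0)
      = ∑ B ∈ T'.powerset,
      (if ((T'ᶜ ∪ B) ∩ T).Nonempty then (-1:ℝ)^(B.card + 1) else 0) := by
    refine Finset.sum_nbij' (fun S => S ∩ T') (fun B => T'ᶜ ∪ B) ?_ ?_ ?_ ?_ ?_
    · intro S _; simp [mem_powerset]
    · intro B hB
      simp only [mem_filter, mem_univ, true_and]
      ext x; simp [mem_union]; tauto
    · intro S hS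
      simp only [mem_filter, mem_univ, true_and] at hS
      ext x
      have hx : x ∈ S ∪ T' := hS ▸ mem_univ x
      simp only [mem_union, mem_compl, mem_inter] at *
      tauto
    · intro B hB
      rw [mem_powerset] at hB
      ext x
      have := @hB x
      simp only [mem_union, mem_compl, mem_inter] at *
      tauto
    · intro S hS
      simp only [mem_filter, mem_univ, true_and] at hS
      have h2 : T'ᶜ ∪ S ∩ T' = S := by
        ext x
        have hx : x ∈ S ∪ T' := hS ▸ mem_univ x
        simp only [mem_union, mem_compl, mem_inter] at *
        tauto
      rw [h2]
  rw [hbij]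
  have split1 : ∀ B : Finset (Fin m),
      (if ((T'ᶜ ∪ B) ∩ T).Nonempty then (-1:ℝ)^(B.card + 1) else 0)
      = (-1:ℝ)^(B.card+1) - (if (T'ᶜ ∪ B) ∩ T = ∅ then (-1:ℝ)^(B.card+1) else 0) := by
    intro B
    by_cases h : ((T'ᶜ ∪ B) ∩ T).Nonempty
    · rw [if_pos h, if_neg (by simpa [← Finset.nonempty_iff_ne_empty] using h), sub_zero]
    · rw [if_neg h, if_pos (by rwa [Finset.not_nonempty_iff_eq_empty] at h), sub_self]
  simp only [split1, Finset.sum_sub_distrib]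
  have hfirst : ∑ B ∈ T'.powerset, (-1:ℝ)^(B.card+1) = -(if T' = ∅ then 1 else 0) := by
    have : ∀ B : Finset (Fin m), (-1:ℝ)^(B.card+1) = (-1:ℝ)^B.card * (-1) := by
      intro B; rw [pow_succ]
    simp only [this, ← Finset.sum_mul, powsum]
    split <;> ring
  have hsecond : ∑ B ∈ T'.powerset,
      (if (T'ᶜ ∪ B) ∩ T = ∅ then (-1:ℝ)^(B.card+1) else 0)
      = -(if T' = T then 1 else 0) := by
    rw [← Finset.sum_filter]
    by_cases hTT' : T ⊆ T'
    · have hset : T'.powerset.filter (fun B => (T'ᶜ ∪ B) ∩ T = ∅) = (T' \ T).powerset := by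
        ext B
        simp only [mem_filter, mem_powerset, Finset.subset_sdiff]
        constructor
        · rintro ⟨hB, hempty⟩
          refine ⟨hB, ?_⟩
          rw [Finset.disjoint_left]
          intro x hxB hxT
          have : x ∈ (T'ᶜ ∪ B) ∩ T := by simp [mem_inter, mem_union, hxB, hxT]
          simp [hempty] at this
        · rintro ⟨hB, hdisj⟩
          refine ⟨hB, ?_⟩
          ext x
          simp only [mem_inter, mem_union, mem_compl, notMem_empty, iff_false]
          rintro ⟨hx1 | hx2, hxT⟩
          · exact hx1 (hTT' hxT)
          · exact Finset.disjoint_left.mp hdisj hx2 hxT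
      rw [hset]
      have : ∀ B : Finset (Fin m), (-1:ℝ)^(B.card+1) = (-1:ℝ)^B.card * (-1) := by
        intro B; rw [pow_succ]
      simp only [this, ← Finset.sum_mul, powsum]
      have : T' \ T = ∅ ↔ T' = T := by
        rw [Finset.sdiff_eq_empty_iff_subset]
        exact ⟨fun h => Finset.Subset.antisymm h hTT', fun h => h ▸ Finset.Subset.refl _⟩
      simp only [this]
      split <;> ring
    · have hset : T'.powerset.filter (fun B => (T'ᶜ ∪ B) ∩ T = ∅) = ∅ := by
        ext B
        simp only [mem_filter, mem_powerset, notMem_empty, iff_false, not_and]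
        intro hB hempty
        obtain ⟨x, hxT, hxT'⟩ := Finset.not_subset.mp hTT'
        have : x ∈ (T'ᶜ ∪ B) ∩ T := by simp [mem_inter, mem_union, mem_compl, hxT, hxT']
        simp [hempty] at this
      rw [hset, Finset.sum_empty]
      have : T' ≠ T := fun h => hTT' (h ▸ Finset.Subset.refl _)
      simp [this]
  rw [hfirst, hsecond]
  ring

theorem stmt0 (m : ℕ) (hm : 1 ≤ m) (f : Finset (Fin m) → ℝ) (hf : f ∅ = 0)
    (T : Finset (Fin m)) :
    f T = ∑ S ∈ univ.filter (fun S : Finset (Fin m) => S.Nonempty ∧ (S ∩ T).Nonempty),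
      Wcoef m f S := by
  rw [Finset.sum_filter]
  unfold Wcoef
  simp only [Finset.sum_filter]
  have hpush : ∀ S : Finset (Fin m),
      (if S.Nonempty ∧ (S ∩ T).Nonempty then
        (∑ T' : Finset (Fin m), if S ∪ T' = univ then (-1:ℝ)^((S ∩ T').card + 1) * f T' else 0)
        else 0)
      = ∑ T' : Finset (Fin m),
        if (S.Nonempty ∧ (S ∩ T).Nonempty) ∧ S ∪ T' = univ
        then (-1:ℝ)^((S ∩ T').card + 1) * f T' else 0 := by
    intro S
    split
    · next h => exact Finset.sum_congr rfl fun T' _ => by simp [h]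
    · next h => simp [h]
  simp only [hpush]
  rw [Finset.sum_comm]
  have : ∀ T' : Finset (Fin m),
      (∑ S : Finset (Fin m),
        if (S.Nonempty ∧ (S ∩ T).Nonempty) ∧ S ∪ T' = univ
        then (-1:ℝ)^((S ∩ T').card + 1) * f T' else 0)
      = ((if T' = T then 1 else 0) - (if T' = ∅ then 1 else 0)) * f T' := by
    intro T'
    rw [← key m T T', Finset.sum_mul]
    exact Finset.sum_congr rfl fun S _ => by split <;> simp
  simp only [this, sub_mul, Finset.sum_sub_distrib, ite_mul, one_mul, zero_mul,
    Finset.sum_ite_eq', mem_univ, if_true, hf, sub_zero]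
end

section
/- Let m ≥ 1 and let w be any real-valued function on the nonempty subsets of [m]. Define f : 2^[m] → ℝ by f(T) = Σ_{S nonempty, S ∩ T ≠ ∅} w(S). Then the W-transform of f equals w: for every nonempty S ⊆ [m], Σ_{T ⊆ [m] : S ∪ T = [m]} (−1)^{|S ∩ T| + 1} f(T) = w(S). In particular, two different weight functions on nonempty subsets induce different set functions. -/
open Finset

/-- The set function induced by a weight function on the nonempty subsets of `[m]`:
`f(T) = Σ_{S nonempty, S ∩ T ≠ ∅} w(S)`. -/
noncomputable def inducedF (m : ℕ) (w : Finset (Fin m) → ℝ) (T : Finset (Fin m)) : ℝ :=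
  ∑ S ∈ univ.filter (fun S : Finset (Fin m) => S.Nonempty ∧ (S ∩ T).Nonempty), w S

lemma pow_sum_real {α : Type*} [DecidableEq α] (x : Finset α) :
    ∑ U ∈ x.powerset, (-1 : ℝ) ^ U.card = if x = ∅ then 1 else 0 := by
  have h := Finset.sum_powerset_neg_one_pow_card (x := x)
  calc ∑ U ∈ x.powerset, (-1 : ℝ) ^ U.card
      = ((∑ U ∈ x.powerset, (-1 : ℤ) ^ U.card : ℤ) : ℝ) := by push_cast; rfl
    _ = if x = ∅ then 1 else 0 := by rw [h]; split <;> simp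

lemma Winner_sum (m : ℕ) (w : Finset (Fin m) → ℝ) (S : Finset (Fin m)) (hS : S.Nonempty)
    (A : Finset (Fin m)) :
    ∑ T ∈ univ.filter (fun T : Finset (Fin m) => S ∪ T = univ),
      (-1 : ℝ) ^ ((S ∩ T).card + 1) *
        (if A.Nonempty ∧ (A ∩ T).Nonempty then w A else 0)
    = if A = S then w A else 0 := by
  classical
  have hSne : S ≠ ∅ := hS.ne_empty
  -- reindex by U = S ∩ T over powerset of S
  have hre : ∑ T ∈ univ.filter (fun T : Finset (Fin m) => S ∪ T = univ),
      (-1 : ℝ) ^ ((S ∩ T).card + 1) *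
        (if A.Nonempty ∧ (A ∩ T).Nonempty then w A else 0)
    = ∑ U ∈ S.powerset, (-1 : ℝ) ^ (U.card + 1) *
        (if A.Nonempty ∧ (A ∩ (Sᶜ ∪ U)).Nonempty then w A else 0) := by
    apply Finset.sum_nbij' (i := fun T => S ∩ T) (j := fun U => Sᶜ ∪ U)
    · intro T hT
      simp [Finset.inter_subset_left]
    · intro U hU
      simp only [mem_filter, mem_univ, true_and]
      ext a; simp; tauto
    · intro T hT
      simp only [mem_filter, mem_univ, true_and] at hT
      have : ∀ a : Fin m, a ∈ S ∨ a ∈ T := by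
        intro a
        have := Finset.mem_univ a
        rw [← hT] at this
        simpa using this
      ext a; simp only [mem_union, mem_compl, mem_inter]
      have := this a; tauto
    · intro U hU
      rw [mem_powerset] at hU
      ext a; simp only [mem_inter, mem_union, mem_compl]
      constructor
      · rintro ⟨h1, h2 | h2⟩
        · exact absurd h1 h2
        · exact h2
      · intro h; exact ⟨hU h, Or.inr h⟩
    · intro T hT
      simp only [mem_filter, mem_univ, true_and] at hT
      have hST : Sᶜ ∪ S ∩ T = T := by
        have : ∀ a : Fin m, a ∈ S ∨ a ∈ T := by
          intro a
          have h := Finset.mem_univ a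
          rw [← hT] at h
          simpa using h
        ext a; simp only [mem_union, mem_compl, mem_inter]
        have := this a; tauto
      rw [hST]
  rw [hre]
  by_cases hA0 : A = ∅
  · subst hA0
    simp [Finset.not_nonempty_empty, Ne.symm hSne]
  have hAne : A.Nonempty := Finset.nonempty_iff_ne_empty.mpr hA0
  by_cases hAS : A ⊆ S
  · -- A ⊆ S nonempty: condition reduces to (A ∩ U).Nonempty
    have hcap : ∀ U : Finset (Fin m), A ∩ (Sᶜ ∪ U) = A ∩ U := by
      intro U
      ext a; simp only [mem_inter, mem_union, mem_compl]
      constructor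
      · rintro ⟨h1, h2 | h2⟩
        · exact absurd (hAS h1) h2
        · exact ⟨h1, h2⟩
      · rintro ⟨h1, h2⟩; exact ⟨h1, Or.inr h2⟩
    simp only [hcap, hAne, true_and]
    have hsplit : ∀ U : Finset (Fin m),
        (-1 : ℝ) ^ (U.card + 1) * (if (A ∩ U).Nonempty then w A else 0)
        = (-1 : ℝ) ^ (U.card + 1) * w A
          - (-1 : ℝ) ^ (U.card + 1) * (if ¬ (A ∩ U).Nonempty then w A else 0) := by
      intro U
      by_cases h : (A ∩ U).Nonempty <;> simp [h]
    rw [Finset.sum_congr rfl (fun U _ => hsplit U), Finset.sum_sub_distrib]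
    have hz : ∑ U ∈ S.powerset, (-1 : ℝ) ^ (U.card + 1) * w A = 0 := by
      rw [← Finset.sum_mul]
      have : ∑ U ∈ S.powerset, (-1 : ℝ) ^ (U.card + 1)
          = -∑ U ∈ S.powerset, (-1 : ℝ) ^ U.card := by
        rw [← Finset.sum_neg_distrib]
        exact Finset.sum_congr rfl (fun U _ => by ring)
      rw [this, pow_sum_real, if_neg hSne]
      ring
    rw [hz, zero_sub]
    have hfil : ∑ U ∈ S.powerset, (-1 : ℝ) ^ (U.card + 1) * (if ¬ (A ∩ U).Nonempty then w A else 0)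
        = ∑ U ∈ (S \ A).powerset, (-1 : ℝ) ^ (U.card + 1) * w A := by
      have hmi : ∀ U : Finset (Fin m),
          (-1 : ℝ) ^ (U.card + 1) * (if ¬ (A ∩ U).Nonempty then w A else 0)
          = if ¬ (A ∩ U).Nonempty then (-1 : ℝ) ^ (U.card + 1) * w A else 0 := by
        intro U; split <;> simp
      rw [Finset.sum_congr rfl (fun U _ => hmi U), ← Finset.sum_filter]
      apply Finset.sum_congr
      · ext U
        simp only [mem_filter, mem_powerset, Finset.not_nonempty_iff_eq_empty,
          Finset.subset_sdiff]
        constructor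
        · rintro ⟨h1, h2⟩
          exact ⟨h1, Finset.disjoint_left.mpr fun a ha haA =>
            (Finset.eq_empty_iff_forall_notMem.mp h2 a) (Finset.mem_inter.mpr ⟨haA, ha⟩)⟩
        · rintro ⟨h1, h2⟩
          refine ⟨h1, Finset.eq_empty_iff_forall_notMem.mpr fun a ha => ?_⟩
          rw [Finset.mem_inter] at ha
          exact (Finset.disjoint_right.mp h2) ha.1 ha.2
      · intro U hU; rfl
    rw [hfil, ← Finset.sum_mul]
    have : ∑ U ∈ (S \ A).powerset, (-1 : ℝ) ^ (U.card + 1)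
        = -∑ U ∈ (S \ A).powerset, (-1 : ℝ) ^ U.card := by
      rw [← Finset.sum_neg_distrib]
      exact Finset.sum_congr rfl (fun U _ => by ring)
    rw [this, pow_sum_real]
    have hiff : (S \ A = ∅) ↔ A = S := by
      constructor
      · intro h
        exact Finset.Subset.antisymm hAS (Finset.sdiff_eq_empty_iff_subset.mp h)
      · intro h; subst h; simp
    by_cases h : A = S
    · rw [if_pos (hiff.mpr h), if_pos h]; ring
    · rw [if_neg (fun hc => h (hiff.mp hc)), if_neg h]; ring
  · -- A ⊄ S : condition always true
    have hAS' : A ≠ S := fun h => hAS (h ▸ le_refl _)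
    obtain ⟨a, haA, haS⟩ := Finset.not_subset.mp hAS
    have hcond : ∀ U : Finset (Fin m), (A ∩ (Sᶜ ∪ U)).Nonempty := by
      intro U
      exact ⟨a, Finset.mem_inter.mpr ⟨haA, Finset.mem_union_left _ (Finset.mem_compl.mpr haS)⟩⟩
    simp only [hcond, hAne, true_and, if_true, if_neg hAS']
    rw [← Finset.sum_mul]
    have : ∑ U ∈ S.powerset, (-1 : ℝ) ^ (U.card + 1)
        = -∑ U ∈ S.powerset, (-1 : ℝ) ^ U.card := by
      rw [← Finset.sum_neg_distrib]
      exact Finset.sum_congr rfl (fun U _ => by ring)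
    rw [this, pow_sum_real, if_neg hSne]
    ring

lemma Wcoef_inducedF (m : ℕ) (w : Finset (Fin m) → ℝ) (S : Finset (Fin m)) (hS : S.Nonempty) :
    Wcoef m (inducedF m w) S = w S := by
  classical
  unfold Wcoef inducedF
  have step1 : ∀ T : Finset (Fin m),
      (-1 : ℝ) ^ ((S ∩ T).card + 1) *
        ∑ A ∈ univ.filter (fun A : Finset (Fin m) => A.Nonempty ∧ (A ∩ T).Nonempty), w A
      = ∑ A : Finset (Fin m), (-1 : ℝ) ^ ((S ∩ T).card + 1) *
          (if A.Nonempty ∧ (A ∩ T).Nonempty then w A else 0) := by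
    intro T
    rw [Finset.mul_sum, Finset.sum_filter]
    exact Finset.sum_congr rfl (fun A _ => by by_cases h : A.Nonempty ∧ (A ∩ T).Nonempty <;> simp [h])
  rw [Finset.sum_congr rfl (fun T _ => step1 T), Finset.sum_comm]
  rw [Finset.sum_congr rfl (fun A _ => Winner_sum m w S hS A)]
  simp

theorem stmt1 (m : ℕ) (hm : 1 ≤ m) (w w' : Finset (Fin m) → ℝ) :
    (∀ S : Finset (Fin m), S.Nonempty → Wcoef m (inducedF m w) S = w S) ∧
    ((∃ S : Finset (Fin m), S.Nonempty ∧ w S ≠ w' S) → inducedF m w ≠ inducedF m w') := by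
  constructor
  · intro S hS
    exact Wcoef_inducedF m w S hS
  · rintro ⟨S, hS, hne⟩ heq
    apply hne
    rw [← Wcoef_inducedF m w S hS, ← Wcoef_inducedF m w' S hS, heq]
end

section
/- Let m ≥ 1 and let f : 2^[m] → ℝ be a set function with f(∅) = 0. Then f is a coverage function if and only if all of its W-coefficients are nonnegative, i.e., w_f(S) ≥ 0 for every nonempty S ⊆ [m]. -/
open Finset

/-- `f` is a coverage function: there is a finite universe `U`, sets `A_1, …, A_m ⊆ U` and
nonnegative weights on `U` so that `f(T)` is the total weight of `∪_{i ∈ T} A_i`. -/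
def IsCoverage (m : ℕ) (f : Finset (Fin m) → ℝ) : Prop :=
  ∃ (U : Type) (_ : Fintype U) (_ : DecidableEq U) (A : Fin m → Finset U) (wt : U → ℝ),
    (∀ u, 0 ≤ wt u) ∧ ∀ T : Finset (Fin m), f T = ∑ u ∈ T.biUnion A, wt u

lemma sum_pow_real {m : ℕ} (A : Finset (Fin m)) :
    ∑ X ∈ A.powerset, (-1 : ℝ) ^ X.card = if A = ∅ then 1 else 0 := by
  have h := Finset.sum_powerset_neg_one_pow_card (x := A)
  have : ((∑ X ∈ A.powerset, (-1 : ℤ) ^ X.card : ℤ) : ℝ)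
      = ∑ X ∈ A.powerset, (-1 : ℝ) ^ X.card := by push_cast; rfl
  rw [← this, h]
  split <;> simp

lemma disj_compl {m : ℕ} (A B X : Finset (Fin m)) :
    ((Aᶜ ∪ X) ∩ B = ∅) ↔ (B ⊆ A ∧ X ∩ B = ∅) := by
  rw [union_inter_distrib_right, union_eq_empty]
  constructor
  · rintro ⟨h1, h2⟩
    refine ⟨fun b hb => ?_, h2⟩
    by_contra hbA
    exact (Finset.eq_empty_iff_forall_notMem.mp h1 b) (mem_inter.mpr ⟨mem_compl.mpr hbA, hb⟩)
  · rintro ⟨h1, h2⟩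
    refine ⟨Finset.eq_empty_iff_forall_notMem.mpr fun b hb => ?_, h2⟩
    rcases mem_inter.mp hb with ⟨hc, hB⟩
    exact (mem_compl.mp hc) (h1 hB)

lemma core {m : ℕ} (A B : Finset (Fin m)) :
    ∑ S ∈ univ.filter (fun S : Finset (Fin m) => S ∪ A = univ),
      (-1 : ℝ) ^ ((S ∩ A).card + 1) * (if (S ∩ B).Nonempty then 1 else 0)
    = (if A = B then 1 else 0) - (if A = ∅ then 1 else 0) := by
  have hre : ∑ S ∈ univ.filter (fun S : Finset (Fin m) => S ∪ A = univ),
      (-1 : ℝ) ^ ((S ∩ A).card + 1) * (if (S ∩ B).Nonempty then 1 else 0)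
    = ∑ X ∈ A.powerset,
      (-1 : ℝ) ^ (X.card + 1) * (if ((Aᶜ ∪ X) ∩ B).Nonempty then 1 else 0) := by
    have key : ∀ S ∈ univ.filter (fun S : Finset (Fin m) => S ∪ A = univ),
        Aᶜ ∪ (S ∩ A) = S := by
      intro S hS
      have hS' := (mem_filter.mp hS).2
      have h' : ∀ a, a ∈ S ∨ a ∈ A := fun a => by
        have h2 : a ∈ S ∪ A := hS' ▸ mem_univ a
        simpa using h2
      ext a
      simp only [mem_union, mem_compl, mem_inter]
      constructor
      · rintro (h | ⟨h, _⟩)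
        · exact (h' a).resolve_right h
        · exact h
      · intro h
        by_cases hA : a ∈ A
        · exact Or.inr ⟨h, hA⟩
        · exact Or.inl hA
    refine Finset.sum_nbij' (fun S => S ∩ A) (fun X => Aᶜ ∪ X) ?_ ?_ ?_ ?_ ?_
    · intro S _; exact mem_powerset.mpr inter_subset_right
    · intro X hX
      have hX' := mem_powerset.mp hX
      simp only [mem_filter, mem_univ, true_and]
      rw [union_assoc, union_eq_right.mpr hX']
      rw [union_comm]
      exact union_compl A
    · exact key
    · intro X hX
      have hX' := mem_powerset.mp hX
      ext a
      simp only [mem_inter, mem_union, mem_compl]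
      constructor
      · rintro ⟨h1 | h1, h2⟩
        · exact absurd h2 h1
        · exact h1
      · intro h; exact ⟨Or.inr h, hX' h⟩
    · intro S hS
      rw [key S hS]
  rw [hre]
  have hsplit : ∀ X ∈ A.powerset,
      (-1 : ℝ) ^ (X.card + 1) * (if ((Aᶜ ∪ X) ∩ B).Nonempty then 1 else 0)
      = (if B ⊆ A ∧ X ∩ B = ∅ then (-1 : ℝ) ^ X.card else 0) - (-1 : ℝ) ^ X.card := by
    intro X _
    by_cases hc : ((Aᶜ ∪ X) ∩ B).Nonempty
    · rw [if_pos hc, if_neg, pow_succ]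
      · ring
      · rw [← disj_compl A B X]
        exact nonempty_iff_ne_empty.mp hc
    · rw [if_neg hc, if_pos, mul_zero]
      · ring
      · rw [← disj_compl A B X]
        exact not_nonempty_iff_eq_empty.mp hc
  rw [Finset.sum_congr rfl hsplit, Finset.sum_sub_distrib, sum_pow_real]
  congr 1
  by_cases hBA : B ⊆ A
  · simp only [hBA, true_and]
    have heq : A.powerset.filter (fun X => X ∩ B = ∅) = (A \ B).powerset := by
      ext X
      simp only [mem_filter, mem_powerset, subset_sdiff,
        ← disjoint_iff_inter_eq_empty]
    rw [← Finset.sum_filter, heq, sum_pow_real]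
    have hAB : A \ B = ∅ ↔ A = B := by
      rw [sdiff_eq_empty_iff_subset]
      exact ⟨fun h => subset_antisymm h hBA, fun h => h ▸ Subset.rfl⟩
    simp [hAB]
  · have hAB : A ≠ B := fun h => hBA (h ▸ Subset.rfl)
    simp [hBA, hAB]

lemma core' {m : ℕ} (S B : Finset (Fin m)) :
    ∑ T ∈ univ.filter (fun T : Finset (Fin m) => S ∪ T = univ),
      (-1 : ℝ) ^ ((S ∩ T).card + 1) * (if (T ∩ B).Nonempty then 1 else 0)
    = (if S = B then 1 else 0) - (if S = ∅ then 1 else 0) := by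
  rw [← core S B]
  refine Finset.sum_congr ?_ fun T _ => ?_
  · ext T; simp [union_comm]
  · rw [inter_comm S T]

theorem stmt2 (m : ℕ) (hm : 1 ≤ m) (f : Finset (Fin m) → ℝ) (hf : f ∅ = 0) :
    IsCoverage m f ↔ ∀ S : Finset (Fin m), S.Nonempty → 0 ≤ Wcoef m f S := by
  constructor
  · rintro ⟨U, _, _, A, wt, hwt, hfT⟩ S hS
    classical
    set B : U → Finset (Fin m) := fun u => univ.filter (fun i => u ∈ A i) with hB
    have hfT' : ∀ T : Finset (Fin m),
        f T = ∑ u : U, wt u * (if (T ∩ B u).Nonempty then 1 else 0) := by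
      intro T
      rw [hfT T]
      have : T.biUnion A = univ.filter (fun u => (T ∩ B u).Nonempty) := by
        ext u
        simp only [mem_biUnion, mem_filter, mem_univ, true_and, Finset.Nonempty,
          mem_inter, hB]
      rw [this, Finset.sum_filter]
      refine Finset.sum_congr rfl fun u _ => ?_
      split <;> ring
    have key : Wcoef m f S = ∑ u : U, wt u *
        ((if S = B u then 1 else 0) - (if S = ∅ then 1 else 0)) := by
      unfold Wcoef
      calc ∑ T ∈ univ.filter (fun T : Finset (Fin m) => S ∪ T = univ),
            (-1 : ℝ) ^ ((S ∩ T).card + 1) * f T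
          = ∑ T ∈ univ.filter (fun T : Finset (Fin m) => S ∪ T = univ),
            ∑ u : U, wt u * ((-1 : ℝ) ^ ((S ∩ T).card + 1) *
              (if (T ∩ B u).Nonempty then 1 else 0)) := by
            refine Finset.sum_congr rfl fun T _ => ?_
            rw [hfT' T, Finset.mul_sum]
            refine Finset.sum_congr rfl fun u _ => ?_
            ring
        _ = ∑ u : U, ∑ T ∈ univ.filter (fun T : Finset (Fin m) => S ∪ T = univ),
            wt u * ((-1 : ℝ) ^ ((S ∩ T).card + 1) *
              (if (T ∩ B u).Nonempty then 1 else 0)) := Finset.sum_comm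
        _ = ∑ u : U, wt u * ((if S = B u then 1 else 0) - (if S = ∅ then 1 else 0)) := by
            refine Finset.sum_congr rfl fun u _ => ?_
            rw [← Finset.mul_sum, core']
    rw [key]
    refine Finset.sum_nonneg fun u _ => mul_nonneg (hwt u) ?_
    rw [if_neg (nonempty_iff_ne_empty.mp hS)]
    split <;> norm_num
  · intro hw
    classical
    refine ⟨Finset (Fin m), inferInstance, inferInstance,
      fun i => univ.filter (fun S => i ∈ S),
      fun S => if S.Nonempty then Wcoef m f S else 0,
      fun S => ?_, fun T => ?_⟩
    · dsimp only
      split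
      · exact hw S ‹_›
      · exact le_refl 0
    · have hbi : T.biUnion (fun i => univ.filter (fun S : Finset (Fin m) => i ∈ S))
          = univ.filter (fun S : Finset (Fin m) => (S ∩ T).Nonempty) := by
        ext S
        simp only [mem_biUnion, mem_filter, mem_univ, true_and, Finset.Nonempty, mem_inter]
        tauto
      rw [hbi]
      have h1 : ∑ S ∈ univ.filter (fun S : Finset (Fin m) => (S ∩ T).Nonempty),
          (if S.Nonempty then Wcoef m f S else 0)
          = ∑ S ∈ univ, (if (S ∩ T).Nonempty then Wcoef m f S else 0) := by
        rw [Finset.sum_filter]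
        refine Finset.sum_congr rfl fun S _ => ?_
        by_cases h : (S ∩ T).Nonempty
        · rw [if_pos h, if_pos h, if_pos (h.mono inter_subset_left)]
        · rw [if_neg h, if_neg h]
      rw [h1]
      have h2 : ∀ S : Finset (Fin m), (if (S ∩ T).Nonempty then Wcoef m f S else 0)
          = ∑ R ∈ univ, (if S ∪ R = univ then
              ((-1 : ℝ) ^ ((S ∩ R).card + 1) * (if (S ∩ T).Nonempty then 1 else 0)) * f R
            else 0) := by
        intro S
        rw [← Finset.sum_filter]
        by_cases h : (S ∩ T).Nonempty
        · rw [if_pos h]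
          unfold Wcoef
          refine Finset.sum_congr rfl fun R _ => ?_
          rw [if_pos h]; ring
        · rw [if_neg h]
          symm
          refine Finset.sum_eq_zero fun R _ => ?_
          rw [if_neg h]; ring
      symm
      calc ∑ S ∈ univ, (if (S ∩ T).Nonempty then Wcoef m f S else 0)
          = ∑ S ∈ univ, ∑ R ∈ univ, (if S ∪ R = univ then
              ((-1 : ℝ) ^ ((S ∩ R).card + 1) * (if (S ∩ T).Nonempty then 1 else 0)) * f R
            else 0) := Finset.sum_congr rfl fun S _ => h2 S
        _ = ∑ R ∈ univ, ∑ S ∈ univ, (if S ∪ R = univ then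
              ((-1 : ℝ) ^ ((S ∩ R).card + 1) * (if (S ∩ T).Nonempty then 1 else 0)) * f R
            else 0) := Finset.sum_comm
        _ = ∑ R ∈ univ, ((if R = T then 1 else 0) - (if R = ∅ then 1 else 0)) * f R := by
            refine Finset.sum_congr rfl fun R _ => ?_
            rw [← core R T, Finset.sum_filter, Finset.sum_mul]
            refine Finset.sum_congr rfl fun S _ => ?_
            split <;> ring
        _ = f T := by
            simp only [sub_mul, one_mul, zero_mul, ite_mul, Finset.sum_sub_distrib]
            rw [Finset.sum_ite_eq' univ T f, Finset.sum_ite_eq' univ ∅ f]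
            simp [hf]
end

section
/- Let m ≥ 1, let U be a finite set, A_1, …, A_m ⊆ U, and wt : U → ℝ with wt(u) ≥ 0 for all u, and let f(T) = Σ_{u ∈ ∪_{i ∈ T} A_i} wt(u) for every T ⊆ [m]. Then for every nonempty S ⊆ [m], the W-coefficient of f at S equals the total weight of the elements whose incidence set is exactly S: w_f(S) = Σ_{u ∈ U : {i ∈ [m] : u ∈ A_i} = S} wt(u). -/
open Finset

lemma aux_reindex (m : ℕ) (S : Finset (Fin m)) (F : Finset (Fin m) → ℝ) :
    ∑ T ∈ univ.filter (fun T : Finset (Fin m) => S ∪ T = univ), F T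
      = ∑ R ∈ S.powerset, F (Sᶜ ∪ R) := by
  refine Finset.sum_nbij' (i := fun T => S ∩ T) (j := fun R => Sᶜ ∪ R) ?_ ?_ ?_ ?_ ?_
  · intro T hT
    simp [Finset.mem_powerset]
  · intro R hR
    simp only [Finset.mem_filter, Finset.mem_univ, true_and]
    ext x
    simp only [Finset.mem_union, Finset.mem_compl, Finset.mem_univ, iff_true]
    tauto
  · intro T hT
    simp only [Finset.mem_filter, Finset.mem_univ, true_and] at hT
    ext x
    have hx : x ∈ S ∪ T := hT ▸ Finset.mem_univ x
    simp only [Finset.mem_union] at hx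
    simp only [Finset.mem_union, Finset.mem_compl, Finset.mem_inter]
    tauto
  · intro R hR
    simp only [Finset.mem_powerset] at hR
    ext x
    simp only [Finset.mem_inter, Finset.mem_union, Finset.mem_compl]
    constructor
    · rintro ⟨h1, h2 | h3⟩
      · exact absurd h1 h2
      · exact h3
    · intro hx; exact ⟨hR hx, Or.inr hx⟩
  · intro T hT
    simp only [Finset.mem_filter, Finset.mem_univ, true_and] at hT
    congr 1
    ext x
    have hx : x ∈ S ∪ T := hT ▸ Finset.mem_univ x
    simp only [Finset.mem_union] at hx
    simp only [Finset.mem_union, Finset.mem_compl, Finset.mem_inter]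
    tauto

lemma aux_pow_sum (m : ℕ) (D : Finset (Fin m)) :
    ∑ R ∈ D.powerset, (-1 : ℝ) ^ R.card = if D = ∅ then 1 else 0 := by
  have := Finset.sum_powerset_neg_one_pow_card (x := D)
  have h := congrArg (fun z : ℤ => (z : ℝ)) this
  push_cast at h
  simpa [apply_ite (fun z : ℤ => (z : ℝ))] using h

lemma aux_sum (m : ℕ) (S I : Finset (Fin m)) (hS : S.Nonempty) :
    ∑ T ∈ univ.filter (fun T : Finset (Fin m) => S ∪ T = univ),
      (-1 : ℝ) ^ ((S ∩ T).card + 1) * (if (T ∩ I).Nonempty then (1:ℝ) else 0)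
    = if I = S then 1 else 0 := by
  rw [aux_reindex]
  have hcard : ∀ R ∈ S.powerset, (S ∩ (Sᶜ ∪ R)) = R := by
    intro R hR
    simp only [Finset.mem_powerset] at hR
    ext x
    simp only [Finset.mem_inter, Finset.mem_union, Finset.mem_compl]
    constructor
    · rintro ⟨h1, h2 | h3⟩
      · exact absurd h1 h2
      · exact h3
    · intro hx; exact ⟨hR hx, Or.inr hx⟩
  have hSne : S ≠ ∅ := Finset.nonempty_iff_ne_empty.mp hS
  by_cases hI : I ⊆ S
  · have hind : ∀ R ∈ S.powerset, ((Sᶜ ∪ R) ∩ I) = R ∩ I := by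
      intro R hR
      ext x
      simp only [Finset.mem_inter, Finset.mem_union, Finset.mem_compl]
      constructor
      · rintro ⟨h1 | h2, h3⟩
        · exact absurd (hI h3) h1
        · exact ⟨h2, h3⟩
      · rintro ⟨h1, h2⟩; exact ⟨Or.inr h1, h2⟩
    calc ∑ R ∈ S.powerset, (-1:ℝ)^((S ∩ (Sᶜ ∪ R)).card + 1) * (if ((Sᶜ ∪ R) ∩ I).Nonempty then (1:ℝ) else 0)
        = ∑ R ∈ S.powerset, ((-1:ℝ)^(R.card + 1) - (-1:ℝ)^(R.card + 1) * (if (R ∩ I) = ∅ then (1:ℝ) else 0)) := by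
          refine Finset.sum_congr rfl fun R hR => ?_
          rw [hcard R hR, hind R hR]
          rcases eq_or_ne (R ∩ I) ∅ with h | h
          · simp [h]
          · simp [h, Finset.nonempty_iff_ne_empty.mpr h]
      _ = (∑ R ∈ S.powerset, (-1:ℝ)^(R.card + 1))
            - ∑ R ∈ S.powerset, (if (R ∩ I) = ∅ then (-1:ℝ)^(R.card + 1) else 0) := by
          rw [Finset.sum_sub_distrib]
          congr 1
          refine Finset.sum_congr rfl fun R hR => ?_
          split <;> simp
      _ = if I = S then 1 else 0 := by
          rw [← Finset.sum_filter]
          have hfil : S.powerset.filter (fun R => R ∩ I = ∅) = (S \ I).powerset := by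
            ext R
            simp only [Finset.mem_filter, Finset.mem_powerset, Finset.subset_sdiff,
              ← Finset.disjoint_iff_inter_eq_empty]
          rw [hfil]
          have e1 : ∀ D : Finset (Fin m), ∑ R ∈ D.powerset, (-1:ℝ)^(R.card + 1)
              = -(if D = ∅ then 1 else 0) := by
            intro D
            rw [← aux_pow_sum m D, ← Finset.sum_neg_distrib]
            exact Finset.sum_congr rfl fun R _ => by ring
          rw [e1, e1, if_neg hSne]
          by_cases h : I = S
          · have : S \ I = ∅ := by rw [h]; simp
            simp [h, this]
          · have : S \ I ≠ ∅ := by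
              intro hc
              exact h (Finset.Subset.antisymm hI (Finset.sdiff_eq_empty_iff_subset.mp hc))
            simp [h, this]
  · have hIS : I ≠ S := fun h => hI (h ▸ Finset.Subset.refl S)
    rw [if_neg hIS]
    obtain ⟨x, hxI, hxS⟩ := Finset.not_subset.mp hI
    calc ∑ R ∈ S.powerset, (-1:ℝ)^((S ∩ (Sᶜ ∪ R)).card + 1) * (if ((Sᶜ ∪ R) ∩ I).Nonempty then (1:ℝ) else 0)
        = ∑ R ∈ S.powerset, (-1:ℝ)^(R.card + 1) := by
          refine Finset.sum_congr rfl fun R hR => ?_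
          rw [hcard R hR, if_pos ⟨x, Finset.mem_inter.mpr ⟨Finset.mem_union_left _ (Finset.mem_compl.mpr hxS), hxI⟩⟩, mul_one]
      _ = 0 := by
          rw [show (0:ℝ) = -(if S = ∅ then 1 else 0) by rw [if_neg hSne]; ring,
            ← aux_pow_sum m S, ← Finset.sum_neg_distrib]
          exact Finset.sum_congr rfl fun R _ => by ring

theorem stmt3 (m : ℕ) (hm : 1 ≤ m) (U : Type) [Fintype U] [DecidableEq U]
    (A : Fin m → Finset U) (wt : U → ℝ) (hwt : ∀ u, 0 ≤ wt u)
    (f : Finset (Fin m) → ℝ) (hf : ∀ T : Finset (Fin m), f T = ∑ u ∈ T.biUnion A, wt u)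
    (S : Finset (Fin m)) (hS : S.Nonempty) :
    Wcoef m f S
      = ∑ u ∈ univ.filter (fun u : U => univ.filter (fun i : Fin m => u ∈ A i) = S), wt u := by
  have key : ∀ T : Finset (Fin m), f T
      = ∑ u : U, (if (T ∩ univ.filter (fun i : Fin m => u ∈ A i)).Nonempty then (1:ℝ) else 0) * wt u := by
    intro T
    rw [hf T]
    have hdom : T.biUnion A
        = univ.filter (fun u => (T ∩ univ.filter (fun i : Fin m => u ∈ A i)).Nonempty) := by
      ext v
      simp only [Finset.mem_biUnion, Finset.mem_filter, Finset.mem_univ, true_and,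
        Finset.Nonempty, Finset.mem_inter]
    rw [hdom, Finset.sum_filter]
    exact Finset.sum_congr rfl fun u _ => by split <;> simp
  rw [Wcoef]
  calc ∑ T ∈ univ.filter (fun T : Finset (Fin m) => S ∪ T = univ),
        (-1 : ℝ) ^ ((S ∩ T).card + 1) * f T
      = ∑ T ∈ univ.filter (fun T : Finset (Fin m) => S ∪ T = univ), ∑ u : U,
          (-1 : ℝ) ^ ((S ∩ T).card + 1) * (if (T ∩ univ.filter (fun i : Fin m => u ∈ A i)).Nonempty then (1:ℝ) else 0) * wt u := by
        refine Finset.sum_congr rfl fun T hT => ?_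
        rw [key T, Finset.mul_sum]
        exact Finset.sum_congr rfl fun u _ => by ring
    _ = ∑ u : U, (∑ T ∈ univ.filter (fun T : Finset (Fin m) => S ∪ T = univ),
          (-1 : ℝ) ^ ((S ∩ T).card + 1) * (if (T ∩ univ.filter (fun i : Fin m => u ∈ A i)).Nonempty then (1:ℝ) else 0)) * wt u := by
        rw [Finset.sum_comm]
        exact Finset.sum_congr rfl fun u _ => by rw [Finset.sum_mul]
    _ = ∑ u : U, (if univ.filter (fun i : Fin m => u ∈ A i) = S then (1:ℝ) else 0) * wt u := by
        refine Finset.sum_congr rfl fun u _ => ?_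
        rw [aux_sum m S _ hS]
    _ = ∑ u ∈ univ.filter (fun u : U => univ.filter (fun i : Fin m => u ∈ A i) = S), wt u := by
        rw [Finset.sum_filter]
        exact Finset.sum_congr rfl fun u _ => by split <;> simp
end

section
/- Let 𝒥 be any family of subsets of [m] with |𝒥| < 2^k. Then there exists a coverage function g : 2^[m] → ℝ that is consistent with f* on all queried sets, i.e., g(T) = f*(T) for every T ∈ 𝒥. -/
open Finset

/-- The weights defining the hard function `f*`: `N` on nonempty sets of size `≤ k`
and `−1` on sets of size `> k`. -/
noncomputable def wstar (m k : ℕ) (N : ℝ) (S : Finset (Fin m)) : ℝ :=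
  if S.card ≤ k then N else -1

/-- The hard function `f*(T) = Σ_{S nonempty, S ∩ T ≠ ∅} w*(S)`. -/
noncomputable def fstar (m k : ℕ) (N : ℝ) (T : Finset (Fin m)) : ℝ :=
  ∑ S ∈ univ.filter (fun S : Finset (Fin m) => S.Nonempty ∧ (S ∩ T).Nonempty), wstar m k N S

namespace Stmt8


variable {m : ℕ}

noncomputable def nu (R Y : Finset (Fin m)) : ℝ := if R ∩ Y = ∅ then 1 else 0

noncomputable def isum (c : Finset (Fin m) → ℝ) (Y : Finset (Fin m)) : ℝ :=
  ∑ R : Finset (Fin m), c R * nu R Y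

noncomputable def cMul (i : Fin m) (c : Finset (Fin m) → ℝ) : Finset (Fin m) → ℝ :=
  fun R => if i ∈ R then c R + c (R.erase i) else 0

lemma sum_erase_eq (i : Fin m) (g : Finset (Fin m) → ℝ) :
    ∑ R ∈ univ.filter (fun R : Finset (Fin m) => i ∈ R), g (R.erase i)
      = ∑ R ∈ univ.filter (fun R : Finset (Fin m) => ¬ i ∈ R), g R := by
  refine Finset.sum_nbij' (fun R => R.erase i) (fun R => insert i R) ?_ ?_ ?_ ?_ ?_
  · intro a ha; simp
  · intro a ha; simp
  · intro a ha; simp only [Finset.mem_filter] at ha; exact Finset.insert_erase ha.2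
  · intro a ha; simp only [Finset.mem_filter] at ha; exact Finset.erase_insert ha.2
  · intro a ha; rfl

lemma isum_add (a b : Finset (Fin m) → ℝ) (Y : Finset (Fin m)) :
    isum (fun R => a R + b R) Y = isum a Y + isum b Y := by
  simp [isum, add_mul, Finset.sum_add_distrib]

lemma isum_sub (a b : Finset (Fin m) → ℝ) (Y : Finset (Fin m)) :
    isum (fun R => a R - b R) Y = isum a Y - isum b Y := by
  simp [isum, sub_mul, Finset.sum_sub_distrib]

lemma abs_isum_le (c : Finset (Fin m) → ℝ) (Y : Finset (Fin m)) :
    |isum c Y| ≤ ∑ R : Finset (Fin m), |c R| := by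
  refine (Finset.abs_sum_le_sum_abs _ _).trans (Finset.sum_le_sum ?_)
  intro R _
  rw [abs_mul]
  rcases le_or_gt (|c R| * |nu R Y|) (|c R|) with h | h
  · exact h
  · unfold nu; split <;> simp [abs_of_nonneg] <;> nlinarith [abs_nonneg (c R)]

lemma isum_cMul (i : Fin m) (c : Finset (Fin m) → ℝ) (Y : Finset (Fin m)) :
    isum (cMul i c) Y = if i ∈ Y then 0 else isum c Y := by
  by_cases hiY : i ∈ Y
  · rw [if_pos hiY]
    apply Finset.sum_eq_zero
    intro R _
    by_cases hiR : i ∈ R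
    · have hne : ¬ (R ∩ Y = ∅) := by
        intro h
        have : i ∈ R ∩ Y := Finset.mem_inter.mpr ⟨hiR, hiY⟩
        simp [h] at this
      simp only [cMul, nu, if_pos hiR, if_neg hne, mul_zero]
    · simp only [cMul, nu, if_neg hiR, zero_mul]
  · rw [if_neg hiY]
    unfold isum
    rw [← Finset.sum_filter_add_sum_filter_not univ (fun R : Finset (Fin m) => i ∈ R)
        (fun R => c R * nu R Y)]
    rw [← Finset.sum_filter_add_sum_filter_not univ (fun R : Finset (Fin m) => i ∈ R)
        (fun R => cMul i c R * nu R Y)]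
    have hzero : ∑ R ∈ univ.filter (fun R : Finset (Fin m) => ¬ i ∈ R), cMul i c R * nu R Y = 0 := by
      apply Finset.sum_eq_zero
      intro R hR
      simp only [Finset.mem_filter] at hR
      simp only [cMul, if_neg hR.2, zero_mul]
    rw [hzero, add_zero]
    have hsum : ∀ R ∈ univ.filter (fun R : Finset (Fin m) => i ∈ R),
        cMul i c R * nu R Y
          = c R * nu R Y + (fun R => c R * nu R Y) (R.erase i) := by
      intro R hR
      simp only [Finset.mem_filter] at hR
      have hint : R ∩ Y = (R.erase i) ∩ Y := by
        ext x
        simp only [Finset.mem_inter, Finset.mem_erase]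
        constructor
        · rintro ⟨hxR, hxY⟩
          exact ⟨⟨fun h => hiY (h ▸ hxY), hxR⟩, hxY⟩
        · rintro ⟨⟨_, hxR⟩, hxY⟩
          exact ⟨hxR, hxY⟩
      simp only [cMul, nu, if_pos hR.2, ← hint]
      ring
    rw [Finset.sum_congr rfl hsum, Finset.sum_add_distrib,
      sum_erase_eq i (fun R => c R * nu R Y)]

lemma norm_cMul (i : Fin m) (c : Finset (Fin m) → ℝ) :
    ∑ R : Finset (Fin m), |cMul i c R| ≤ ∑ R : Finset (Fin m), |c R| := by
  rw [← Finset.sum_filter_add_sum_filter_not univ (fun R : Finset (Fin m) => i ∈ R)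
      (fun R => |cMul i c R|)]
  have hzero : ∑ R ∈ univ.filter (fun R : Finset (Fin m) => ¬ i ∈ R), |cMul i c R| = 0 := by
    apply Finset.sum_eq_zero
    intro R hR
    simp only [Finset.mem_filter] at hR
    simp [cMul, if_neg hR.2]
  rw [hzero, add_zero]
  calc ∑ R ∈ univ.filter (fun R : Finset (Fin m) => i ∈ R), |cMul i c R|
      ≤ ∑ R ∈ univ.filter (fun R : Finset (Fin m) => i ∈ R), (|c R| + |(fun R => |c R|) (R.erase i)|) := by
        apply Finset.sum_le_sum
        intro R hR
        simp only [Finset.mem_filter] at hR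
        simp only [cMul, if_pos hR.2]
        exact (abs_add_le _ _).trans (by simp)
    _ = ∑ R ∈ univ.filter (fun R : Finset (Fin m) => i ∈ R), |c R|
          + ∑ R ∈ univ.filter (fun R : Finset (Fin m) => i ∈ R), (fun R => |c R|) (R.erase i) := by
        rw [Finset.sum_add_distrib]
        congr 1
        apply Finset.sum_congr rfl
        intro R _; simp [abs_abs]
    _ = ∑ R ∈ univ.filter (fun R : Finset (Fin m) => i ∈ R), |c R|
          + ∑ R ∈ univ.filter (fun R : Finset (Fin m) => ¬ i ∈ R), |c R| := by
        rw [sum_erase_eq i (fun R => |c R|)]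
    _ = ∑ R : Finset (Fin m), |c R| :=
        Finset.sum_filter_add_sum_filter_not univ _ _

lemma cMul_supp (i : Fin m) (c : Finset (Fin m) → ℝ) (k : ℕ) (hk : 1 ≤ k)
    (hc : ∀ R, c R ≠ 0 → R.card ≤ k - 1) :
    ∀ R, cMul i c R ≠ 0 → R.card ≤ k := by
  intro R hR
  simp only [cMul] at hR
  by_cases hiR : i ∈ R
  · rw [if_pos hiR] at hR
    have : c R ≠ 0 ∨ c (R.erase i) ≠ 0 := by
      by_contra h
      push_neg at h
      rw [h.1, h.2] at hR
      simp at hR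
    rcases this with h | h
    · exact (hc R h).trans (Nat.sub_le k 1)
    · have h1 := hc _ h
      have h2 := Finset.card_erase_add_one hiR
      omega
  · rw [if_neg hiR] at hR; simp at hR

lemma interp : ∀ (n k : ℕ) (S : Finset (Finset (Fin m))), S.card = n → S.Nonempty →
    S.card ≤ 2 ^ k →
    ∀ (φ : Finset (Fin m) → ℝ) (M : ℝ), (∀ Y ∈ S, |φ Y| ≤ M) →
    ∃ c : Finset (Fin m) → ℝ,
      (∀ R, c R ≠ 0 → R.card ≤ k) ∧
      (∑ R : Finset (Fin m), |c R|) ≤ ((2:ℝ) ^ (2 * n - 1) - 1) * M ∧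
      (∀ Y ∈ S, isum c Y = φ Y) := by
  intro n
  induction n using Nat.strong_induction_on with
  | _ n IH =>
  intro k S hn hne hle φ M hM
  have hM0 : 0 ≤ M := by
    obtain ⟨Y0, hY0⟩ := hne
    exact (abs_nonneg _).trans (hM Y0 hY0)
  by_cases hn2 : 2 ≤ S.card
  · -- splitting case
    have hk : 1 ≤ k := by
      by_contra h
      push_neg at h
      interval_cases k
      simp at hle
      omega
    obtain ⟨Y1, hY1, Y2, hY2, hY12⟩ := Finset.one_lt_card.mp hn2
    have hex : ∃ i : Fin m, (i ∈ Y1 ∧ i ∉ Y2) ∨ (i ∉ Y1 ∧ i ∈ Y2) := by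
      by_contra h
      push_neg at h
      apply hY12
      ext x
      have := h x
      tauto
    obtain ⟨i, hi⟩ := hex
    have hne_in : (S.filter (fun Y => i ∈ Y)).Nonempty := by
      rcases hi with ⟨h1, _⟩ | ⟨_, h2⟩
      · exact ⟨Y1, Finset.mem_filter.mpr ⟨hY1, h1⟩⟩
      · exact ⟨Y2, Finset.mem_filter.mpr ⟨hY2, h2⟩⟩
    have hne_out : (S.filter (fun Y => ¬ i ∈ Y)).Nonempty := by
      rcases hi with ⟨_, h1⟩ | ⟨h2, _⟩
      · exact ⟨Y2, Finset.mem_filter.mpr ⟨hY2, h1⟩⟩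
      · exact ⟨Y1, Finset.mem_filter.mpr ⟨hY1, h2⟩⟩
    have hfc : (S.filter (fun Y => i ∈ Y)).card + (S.filter (fun Y => ¬ i ∈ Y)).card = S.card :=
      Finset.card_filter_add_card_filter_not _
    have hpow : 2 ^ k = 2 * 2 ^ (k - 1) := by
      obtain ⟨k', hk'⟩ : ∃ k', k = k' + 1 := ⟨k - 1, by omega⟩
      subst hk'
      simp [pow_succ, Nat.mul_comm]
    have hpos_in := hne_in.card_pos
    have hpos_out := hne_out.card_pos
    rcases le_total (S.filter (fun Y => i ∈ Y)).card (S.filter (fun Y => ¬ i ∈ Y)).card with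
      hcmp | hcmp
    · -- S0 = in-side (smaller), op = p - cMul i p
      set S0 := S.filter (fun Y => i ∈ Y) with hS0
      set S1 := S.filter (fun Y => ¬ i ∈ Y) with hS1
      have hlt1 : S1.card < n := by omega
      have hlt0 : S0.card < n := by
        have := hne_out.card_pos
        omega
      obtain ⟨q, hq_supp, hq_norm, hq_val⟩ :=
        IH S1.card hlt1 k S1 rfl hne_out (by omega) φ M
          (fun Y hY => hM Y (Finset.mem_filter.mp hY).1)
      have hS0le : S0.card ≤ 2 ^ (k - 1) := by omega
      set b : ℝ := (2:ℝ) ^ (2 * S1.card - 1) with hbdef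
      have hb1 : (1:ℝ) ≤ b := one_le_pow₀ one_le_two
      have hM' : ∀ Y ∈ S0, |φ Y - isum q Y| ≤ b * M := by
        intro Y hY
        have h1 := hM Y (Finset.mem_filter.mp hY).1
        have h2 : |isum q Y| ≤ (b - 1) * M := (abs_isum_le q Y).trans hq_norm
        calc |φ Y - isum q Y| ≤ |φ Y| + |isum q Y| := abs_sub _ _
          _ ≤ M + (b - 1) * M := add_le_add h1 h2
          _ = b * M := by ring
      obtain ⟨p, hp_supp, hp_norm, hp_val⟩ :=
        IH S0.card hlt0 (k - 1) S0 rfl hne_in hS0le (fun Y => φ Y - isum q Y) (b * M) hM'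
      refine ⟨fun R => q R + (p R - cMul i p R), ?_, ?_, ?_⟩
      · intro R hR
        have : q R ≠ 0 ∨ (p R ≠ 0 ∨ cMul i p R ≠ 0) := by
          by_contra h
          push_neg at h
          apply hR
          show q R + (p R - cMul i p R) = 0
          rw [h.1, h.2.1, h.2.2]
          ring
        rcases this with h | h | h
        · exact hq_supp R h
        · exact (hp_supp R h).trans (Nat.sub_le k 1)
        · exact cMul_supp i p k hk hp_supp R h
      · set a : ℝ := (2:ℝ) ^ (2 * S0.card - 1) with hadef
        have hab : a * b * 2 = (2:ℝ) ^ (2 * n - 1) := by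
          rw [hadef, hbdef, ← pow_add, ← pow_succ]
          congr 1
          have h0 := hne_in.card_pos
          have h1 := hne_out.card_pos
          omega
        have hnorm2 : ∑ R : Finset (Fin m), |cMul i p R| ≤ (a - 1) * (b * M) :=
          (norm_cMul i p).trans hp_norm
        calc ∑ R : Finset (Fin m), |q R + (p R - cMul i p R)|
            ≤ ∑ R : Finset (Fin m), (|q R| + (|p R| + |cMul i p R|)) := by
              apply Finset.sum_le_sum
              intro R _
              exact (abs_add_le _ _).trans (add_le_add_right (abs_sub _ _) _)
          _ = (∑ R : Finset (Fin m), |q R|) + ((∑ R : Finset (Fin m), |p R|)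
                + ∑ R : Finset (Fin m), |cMul i p R|) := by
              rw [Finset.sum_add_distrib, Finset.sum_add_distrib]
          _ ≤ (b - 1) * M + ((a - 1) * (b * M) + (a - 1) * (b * M)) := by
              exact add_le_add hq_norm (add_le_add hp_norm hnorm2)
          _ ≤ (a * b * 2 - 1) * M := by
              have hb0 : (0:ℝ) ≤ b := by linarith
              nlinarith [mul_nonneg hb0 hM0]
          _ = ((2:ℝ) ^ (2 * n - 1) - 1) * M := by rw [hab]
      · intro Y hY
        rw [isum_add, isum_sub, isum_cMul]
        by_cases hiY : i ∈ Y
        · rw [if_pos hiY]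
          have hY0 : Y ∈ S0 := Finset.mem_filter.mpr ⟨hY, hiY⟩
          rw [hp_val Y hY0]
          ring
        · rw [if_neg hiY]
          have hY1 : Y ∈ S1 := Finset.mem_filter.mpr ⟨hY, hiY⟩
          rw [hq_val Y hY1]
          ring
    · -- S0 = out-side (smaller), op = cMul i p
      set S0 := S.filter (fun Y => ¬ i ∈ Y) with hS0
      set S1 := S.filter (fun Y => i ∈ Y) with hS1
      have hlt1 : S1.card < n := by
        have := hne_out.card_pos
        omega
      have hlt0 : S0.card < n := by
        have := hne_in.card_pos
        omega
      obtain ⟨q, hq_supp, hq_norm, hq_val⟩ :=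
        IH S1.card hlt1 k S1 rfl hne_in (by omega) φ M
          (fun Y hY => hM Y (Finset.mem_filter.mp hY).1)
      have hS0le : S0.card ≤ 2 ^ (k - 1) := by omega
      set b : ℝ := (2:ℝ) ^ (2 * S1.card - 1) with hbdef
      have hb1 : (1:ℝ) ≤ b := one_le_pow₀ one_le_two
      have hM' : ∀ Y ∈ S0, |φ Y - isum q Y| ≤ b * M := by
        intro Y hY
        have h1 := hM Y (Finset.mem_filter.mp hY).1
        have h2 : |isum q Y| ≤ (b - 1) * M := (abs_isum_le q Y).trans hq_norm
        calc |φ Y - isum q Y| ≤ |φ Y| + |isum q Y| := abs_sub _ _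
          _ ≤ M + (b - 1) * M := add_le_add h1 h2
          _ = b * M := by ring
      obtain ⟨p, hp_supp, hp_norm, hp_val⟩ :=
        IH S0.card hlt0 (k - 1) S0 rfl hne_out hS0le (fun Y => φ Y - isum q Y) (b * M) hM'
      refine ⟨fun R => q R + cMul i p R, ?_, ?_, ?_⟩
      · intro R hR
        have : q R ≠ 0 ∨ cMul i p R ≠ 0 := by
          by_contra h
          push_neg at h
          apply hR
          show q R + cMul i p R = 0
          rw [h.1, h.2]
          ring
        rcases this with h | h
        · exact hq_supp R h
        · exact cMul_supp i p k hk hp_supp R h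
      · set a : ℝ := (2:ℝ) ^ (2 * S0.card - 1) with hadef
        have hab : a * b * 2 = (2:ℝ) ^ (2 * n - 1) := by
          rw [hadef, hbdef, ← pow_add, ← pow_succ]
          congr 1
          have h0 := hne_in.card_pos
          have h1 := hne_out.card_pos
          omega
        have hnorm2 : ∑ R : Finset (Fin m), |cMul i p R| ≤ (a - 1) * (b * M) :=
          (norm_cMul i p).trans hp_norm
        calc ∑ R : Finset (Fin m), |q R + cMul i p R|
            ≤ ∑ R : Finset (Fin m), (|q R| + |cMul i p R|) := by
              apply Finset.sum_le_sum
              intro R _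
              exact abs_add_le _ _
          _ = (∑ R : Finset (Fin m), |q R|) + ∑ R : Finset (Fin m), |cMul i p R| := by
              rw [Finset.sum_add_distrib]
          _ ≤ (b - 1) * M + (a - 1) * (b * M) := add_le_add hq_norm hnorm2
          _ ≤ (a * b * 2 - 1) * M := by
              have hb0 : (0:ℝ) ≤ b := by linarith
              have ha1 : (1:ℝ) ≤ a := one_le_pow₀ one_le_two
              nlinarith [mul_nonneg (mul_nonneg (by linarith : (0:ℝ) ≤ a) hb0) hM0,
                mul_nonneg hb0 hM0]
          _ = ((2:ℝ) ^ (2 * n - 1) - 1) * M := by rw [hab]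
      · intro Y hY
        rw [isum_add, isum_cMul]
        by_cases hiY : i ∈ Y
        · rw [if_pos hiY]
          have hY1 : Y ∈ S1 := Finset.mem_filter.mpr ⟨hY, hiY⟩
          rw [hq_val Y hY1]
          ring
        · rw [if_neg hiY]
          have hY0 : Y ∈ S0 := Finset.mem_filter.mpr ⟨hY, hiY⟩
          rw [hp_val Y hY0]
          ring
  · -- base case : card = 1
    have hcard1 : S.card = 1 := by
      have := hne.card_pos
      omega
    obtain ⟨Y0, hS⟩ := Finset.card_eq_one.mp hcard1
    refine ⟨fun R => if R = ∅ then φ Y0 else 0, ?_, ?_, ?_⟩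
    · intro R hR
      by_cases h : R = ∅
      · simp [h]
      · simp [h] at hR
    · have h1 : ∑ R : Finset (Fin m), |if R = ∅ then φ Y0 else 0| = |φ Y0| := by
        rw [Finset.sum_eq_single (∅ : Finset (Fin m))]
        · simp
        · intro R _ hR; simp [hR]
        · intro h; simp at h
      rw [h1]
      have : |φ Y0| ≤ M := hM Y0 (by simp [hS])
      have hpow : (1:ℝ) ≤ (2:ℝ) ^ (2 * n - 1) := one_le_pow₀ one_le_two
      have h2 : n = 1 := by omega
      subst h2
      norm_num
      exact this
    · intro Y hY
      rw [hS, Finset.mem_singleton] at hY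
      subst hY
      unfold isum
      rw [Finset.sum_eq_single (∅ : Finset (Fin m))]
      · simp [nu]
      · intro R _ hR; simp [hR]
      · intro h; simp at h


lemma two_le_pow_aux : ∀ M : ℕ, 2 ≤ M → M + 2 ≤ 2 ^ M := by
  intro M hM
  induction M with
  | zero => omega
  | succ m IH =>
    rcases Nat.lt_or_ge m 2 with h | h
    · interval_cases m <;> simp_all <;> omega
    · have := IH h
      have : 2 ^ (m + 1) = 2 * 2 ^ m := by rw [pow_succ]; ring
      omega

lemma factBound : ∀ M : ℕ, 2 ≤ M → 2 ^ (2 ^ M - 1) * (2 ^ M - (M + 1)) ≤ Nat.factorial (2 ^ M) := by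
  intro M hM
  induction M with
  | zero => omega
  | succ m IH =>
    rcases Nat.lt_or_ge m 2 with h | h
    · interval_cases m
      · omega
      · norm_num [Nat.factorial]
    · have IH' := IH h
      have hm2 : m + 2 ≤ 2 ^ m := two_le_pow_aux m h
      set P := 2 ^ m with hP
      have hP4 : 4 ≤ P := by
        calc 4 = 2 ^ 2 := by norm_num
          _ ≤ 2 ^ m := Nat.pow_le_pow_right (by norm_num) h
      have h2P : 2 ^ (m + 1) = P + P := by rw [pow_succ]; omega
      have hfact : Nat.factorial P * (P + 1) ^ P ≤ Nat.factorial (P + P) := Nat.factorial_mul_pow_le_factorial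
      -- P! ≥ 2^(P-1) * 1
      have hPfact : 2 ^ (P - 1) ≤ Nat.factorial P := by
        have h1 : 2 ^ (P - 1) * 1 ≤ 2 ^ (P - 1) * (P - (m + 1)) := by
          apply Nat.mul_le_mul_left
          omega
        omega
      -- (P+1)^P ≥ 4^P = 2^(2P)
      have hpow4 : 2 ^ (2 * P) ≤ (P + 1) ^ P := by
        calc 2 ^ (2 * P) = (2 ^ 2) ^ P := by rw [← pow_mul]
          _ = 4 ^ P := by norm_num
          _ ≤ (P + 1) ^ P := Nat.pow_le_pow_left (by omega) P
      have hchain : 2 ^ (P - 1) * 2 ^ (2 * P) ≤ Nat.factorial (P + P) :=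
        le_trans (Nat.mul_le_mul hPfact hpow4) hfact
      have hexp : 2 ^ (P - 1) * 2 ^ (2 * P) = 2 ^ (P + P - 1) * 2 ^ P := by
        rw [← pow_add, ← pow_add]
        congr 1
        omega
      -- target : 2^(P+P-1) * (P+P - (m+2)) ≤ (P+P)!
      have htarget : 2 ^ (P + P - 1) * (P + P - (m + 2)) ≤ 2 ^ (P + P - 1) * 2 ^ P := by
        apply Nat.mul_le_mul_left
        -- P + P ≤ 2^P : P ≤ 2^(P-1)
        have : P < 2 ^ P := Nat.lt_two_pow_self (n := P)
        have h2 : 2 ^ P = 2 * 2 ^ (P - 1) := by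
          obtain ⟨Q, hQ⟩ : ∃ Q, P = Q + 1 := ⟨P - 1, by omega⟩
          rw [hQ, pow_succ, Nat.add_sub_cancel]
          ring
        have h3 : P ≤ 2 ^ (P - 1) := by
          have := Nat.lt_two_pow_self (n := P - 1)
          omega
        omega
      rw [h2P]
      calc 2 ^ (P + P - 1) * (P + P - (m + 1 + 1)) ≤ 2 ^ (P + P - 1) * 2 ^ P := by
            have : m + 1 + 1 = m + 2 := by omega
            rw [this]; exact htarget
        _ = 2 ^ (P - 1) * 2 ^ (2 * P) := hexp.symm
        _ ≤ Nat.factorial (P + P) := hchain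

end Stmt8

theorem stmt8 (m k : ℕ) (hm : 2 ≤ m) (hk1 : 1 ≤ k) (hk2 : k ≤ m - 1)
    (N : ℝ) (hN : (Nat.factorial (2 ^ m) : ℝ) < N)
    (J : Finset (Finset (Fin m))) (hJ : J.card < 2 ^ k) :
    ∃ g : Finset (Fin m) → ℝ, IsCoverage m g ∧ ∀ T ∈ J, g T = fstar m k N T := by

  classical
  have hkm : k + 1 ≤ m := by omega
  set φ : Finset (Fin m) → ℝ :=
    fun Y => ((univ.filter (fun S : Finset (Fin m) => k < S.card ∧ (S ∩ Y).Nonempty)).card : ℝ)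
    with hφ
  set Mn : ℕ := (univ.filter (fun S : Finset (Fin m) => 2 ≤ S.card)).card with hMn
  set 𝒮 : Finset (Finset (Fin m)) := insert ∅ J with h𝒮
  have h𝒮card : 𝒮.card ≤ 2 ^ k := le_trans (Finset.card_insert_le _ _) (by omega)
  have h𝒮ne : 𝒮.Nonempty := ⟨∅, Finset.mem_insert_self _ _⟩
  have hMbound : ∀ Y ∈ 𝒮, |φ Y| ≤ (Mn : ℝ) := by
    intro Y _
    rw [abs_of_nonneg (by positivity)]
    have hsub : univ.filter (fun S : Finset (Fin m) => k < S.card ∧ (S ∩ Y).Nonempty) ⊆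
        univ.filter (fun S : Finset (Fin m) => 2 ≤ S.card) := by
      intro S hS
      simp only [Finset.mem_filter, Finset.mem_univ, true_and] at hS ⊢
      omega
    simp only [hφ, hMn]
    exact_mod_cast Finset.card_le_card hsub
  obtain ⟨c, hsupp, hnorm, hval⟩ := Stmt8.interp 𝒮.card k 𝒮 rfl h𝒮ne h𝒮card φ (Mn : ℝ) hMbound
  have hσ : ∑ R : Finset (Fin m), c R = 0 := by
    have h0 := hval ∅ (Finset.mem_insert_self _ _)
    have h1 : Stmt8.isum c ∅ = ∑ R : Finset (Fin m), c R := by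
      unfold Stmt8.isum Stmt8.nu
      apply Finset.sum_congr rfl
      intro R _
      simp
    have h2 : φ ∅ = 0 := by
      rw [hφ]
      simp
    rw [h1, h2] at h0
    exact h0
  -- bound Mn
  have hMnb : Mn + (m + 1) ≤ 2 ^ m := by
    have hsub : insert (∅ : Finset (Fin m)) (univ.image fun i : Fin m => ({i} : Finset (Fin m)))
        ⊆ univ.filter (fun S : Finset (Fin m) => ¬ 2 ≤ S.card) := by
      intro S hS
      simp only [Finset.mem_insert, Finset.mem_image, Finset.mem_univ, true_and] at hS
      simp only [Finset.mem_filter, Finset.mem_univ, true_and, not_le]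
      rcases hS with rfl | ⟨i, rfl⟩
      · simp
      · simp
    have hcard1 : (insert (∅ : Finset (Fin m))
        (univ.image fun i : Fin m => ({i} : Finset (Fin m)))).card = m + 1 := by
      rw [Finset.card_insert_of_notMem (by simp)]
      rw [Finset.card_image_of_injective _ Finset.singleton_injective]
      simp
    have htot := Finset.card_filter_add_card_filter_not
      (s := (univ : Finset (Finset (Fin m)))) (p := fun S : Finset (Fin m) => 2 ≤ S.card)
    have hcu : (univ : Finset (Finset (Fin m))).card = 2 ^ m := by
      simp [Finset.card_univ, Fintype.card_finset]
    have hle := Finset.card_le_card hsub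
    rw [hcard1] at hle
    omega
  have hcbound : ∀ S : Finset (Fin m), |c S| ≤ (Nat.factorial (2 ^ m) : ℝ) := by
    intro S
    have h1 : |c S| ≤ ∑ R : Finset (Fin m), |c R| :=
      Finset.single_le_sum (fun R _ => abs_nonneg (c R)) (Finset.mem_univ S)
    have hc1 : 2 * 𝒮.card - 1 ≤ 2 ^ m - 1 := by
      have ha : (2:ℕ) ^ (k + 1) = 2 * 2 ^ k := by rw [pow_succ]; ring
      have hb : (2:ℕ) ^ (k + 1) ≤ 2 ^ m := Nat.pow_le_pow_right (by norm_num) hkm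
      omega
    have hp1 : ((2:ℝ) ^ (2 * 𝒮.card - 1) - 1) ≤ (2:ℝ) ^ (2 ^ m - 1) := by
      have := pow_le_pow_right₀ (one_le_two : (1:ℝ) ≤ 2) hc1
      linarith
    have hMn2 : (Mn : ℝ) ≤ ((2 ^ m - (m + 1) : ℕ) : ℝ) := by
      exact_mod_cast (by omega : Mn ≤ 2 ^ m - (m + 1))
    have h2 : ((2:ℝ) ^ (2 * 𝒮.card - 1) - 1) * (Mn : ℝ) ≤ (Nat.factorial (2 ^ m) : ℝ) := by
      calc ((2:ℝ) ^ (2 * 𝒮.card - 1) - 1) * (Mn : ℝ)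
          ≤ (2:ℝ) ^ (2 ^ m - 1) * ((2 ^ m - (m + 1) : ℕ) : ℝ) := by
            apply mul_le_mul hp1 hMn2 (by positivity) (by positivity)
        _ = ((2 ^ (2 ^ m - 1) * (2 ^ m - (m + 1)) : ℕ) : ℝ) := by push_cast; ring
        _ ≤ (Nat.factorial (2 ^ m) : ℝ) := by exact_mod_cast Stmt8.factBound m hm
    exact h1.trans (hnorm.trans h2)
  refine ⟨fun T => ∑ u ∈ T.biUnion (fun i => univ.filter (fun S : Finset (Fin m) => i ∈ S)),
      (if u.Nonempty ∧ u.card ≤ k then N + c u else 0),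
    ⟨Finset (Fin m), inferInstance, inferInstance,
      (fun i => univ.filter (fun S : Finset (Fin m) => i ∈ S)),
      (fun u => if u.Nonempty ∧ u.card ≤ k then N + c u else 0), ?_, fun T => rfl⟩, ?_⟩
  · -- nonnegativity
    intro S
    dsimp only
    split
    · have h1 := abs_le.mp (hcbound S)
      linarith
    · exact le_rfl
  · -- agreement on J
    intro T hT
    have hbi : T.biUnion (fun i => univ.filter (fun S : Finset (Fin m) => i ∈ S))
        = univ.filter (fun S : Finset (Fin m) => (S ∩ T).Nonempty) := by
      ext S
      simp only [Finset.mem_biUnion, Finset.mem_filter, Finset.mem_univ, true_and]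
      constructor
      · rintro ⟨i, hiT, hiS⟩
        exact ⟨i, Finset.mem_inter.mpr ⟨hiS, hiT⟩⟩
      · rintro ⟨i, hi⟩
        rcases Finset.mem_inter.mp hi with ⟨h1, h2⟩
        exact ⟨i, h2, h1⟩
    have hfil : univ.filter (fun S : Finset (Fin m) => S.Nonempty ∧ (S ∩ T).Nonempty)
        = univ.filter (fun S : Finset (Fin m) => (S ∩ T).Nonempty) := by
      apply Finset.filter_congr
      intro S _
      constructor
      · rintro ⟨_, h⟩; exact h
      · intro h; exact ⟨h.mono Finset.inter_subset_left, h⟩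
    dsimp only
    rw [hbi]
    unfold fstar
    rw [hfil]
    set H := univ.filter (fun S : Finset (Fin m) => (S ∩ T).Nonempty) with hH
    have hmemH : ∀ S ∈ H, S.Nonempty := by
      intro S hS
      have h1 := (Finset.mem_filter.mp hS).2
      exact h1.mono Finset.inter_subset_left
    rw [← Finset.sum_filter_add_sum_filter_not H (fun S => S.card ≤ k)
        (fun S => if S.Nonempty ∧ S.card ≤ k then N + c S else 0),
      ← Finset.sum_filter_add_sum_filter_not H (fun S => S.card ≤ k) (wstar m k N)]
    have e1 : ∑ S ∈ H.filter (fun S => S.card ≤ k),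
        (if S.Nonempty ∧ S.card ≤ k then N + c S else 0)
        = ∑ S ∈ H.filter (fun S => S.card ≤ k), (N + c S) := by
      apply Finset.sum_congr rfl
      intro S hS
      have h1 := Finset.mem_filter.mp hS
      rw [if_pos ⟨hmemH S h1.1, h1.2⟩]
    have e2 : ∑ S ∈ H.filter (fun S => ¬ S.card ≤ k),
        (if S.Nonempty ∧ S.card ≤ k then N + c S else 0) = 0 := by
      apply Finset.sum_eq_zero
      intro S hS
      have h1 := Finset.mem_filter.mp hS
      rw [if_neg (fun h => h1.2 h.2)]
    have e3 : ∑ S ∈ H.filter (fun S => S.card ≤ k), wstar m k N S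
        = ∑ S ∈ H.filter (fun S => S.card ≤ k), N := by
      apply Finset.sum_congr rfl
      intro S hS
      have h1 := Finset.mem_filter.mp hS
      unfold wstar
      rw [if_pos h1.2]
    have e4 : ∑ S ∈ H.filter (fun S => ¬ S.card ≤ k), wstar m k N S
        = ∑ S ∈ H.filter (fun S => ¬ S.card ≤ k), (-1 : ℝ) := by
      apply Finset.sum_congr rfl
      intro S hS
      have h1 := Finset.mem_filter.mp hS
      unfold wstar
      rw [if_neg h1.2]
    rw [e1, e2, e3, e4, add_zero, Finset.sum_add_distrib]
    have hz : ∑ S ∈ H.filter (fun S => ¬ S.card ≤ k), c S = 0 := by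
      apply Finset.sum_eq_zero
      intro S hS
      have h1 := Finset.mem_filter.mp hS
      by_contra hc
      exact h1.2 (hsupp S hc)
    have hisum : Stmt8.isum c T
        = ∑ R ∈ univ.filter (fun R : Finset (Fin m) => R ∩ T = ∅), c R := by
      rw [Finset.sum_filter]
      unfold Stmt8.isum Stmt8.nu
      apply Finset.sum_congr rfl
      intro R _
      split <;> simp
    have hcompl : univ.filter (fun R : Finset (Fin m) => ¬ (R ∩ T).Nonempty)
        = univ.filter (fun R : Finset (Fin m) => R ∩ T = ∅) := by
      apply Finset.filter_congr
      intro R _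
      exact not_nonempty_iff_eq_empty
    have hsplit3 := Finset.sum_filter_add_sum_filter_not univ
      (fun R : Finset (Fin m) => (R ∩ T).Nonempty) c
    have hvalT := hval T (Finset.mem_insert_of_mem hT)
    rw [hisum] at hvalT
    have hHc : ∑ S ∈ H, c S = - φ T := by
      rw [hcompl] at hsplit3
      rw [hH]
      rw [hσ] at hsplit3
      linarith [hvalT, hsplit3]
    have hsplit4 := Finset.sum_filter_add_sum_filter_not H (fun S => S.card ≤ k) c
    have hkey : ∑ S ∈ H.filter (fun S => S.card ≤ k), c S = - φ T := by
      rw [hz] at hsplit4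
      linarith [hHc, hsplit4]
    have hφcard : φ T = ((H.filter (fun S => ¬ S.card ≤ k)).card : ℝ) := by
      have hset : H.filter (fun S => ¬ S.card ≤ k)
          = univ.filter (fun S : Finset (Fin m) => k < S.card ∧ (S ∩ T).Nonempty) := by
        rw [hH, Finset.filter_filter]
        apply Finset.filter_congr
        intro S _
        constructor
        · rintro ⟨h1, h2⟩
          exact ⟨Nat.lt_of_not_le h2, h1⟩
        · rintro ⟨h1, h2⟩
          exact ⟨h2, Nat.not_le.mpr h1⟩
      rw [hset, hφ]
    rw [hkey, hφcard, Finset.sum_const, Finset.sum_const]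
    simp only [nsmul_eq_mul]
    ring
end

section
/- Any certificate of non-coverageness of f* must be of size at least 2^k: if 𝒥 is a family of subsets of [m] such that no coverage function g satisfies g(T) = f*(T) for all T ∈ 𝒥, then |𝒥| ≥ 2^k. -/
open Finset

noncomputable def costsum {m : ℕ} (w : Finset (Fin m) → ℝ) (T : Finset (Fin m)) : ℝ :=
  ∑ S ∈ univ.filter (fun S : Finset (Fin m) => (S ∩ T).Nonempty), w S

def gam (m j : ℕ) : ℕ := 2 ^ (∑ i ∈ Finset.range j, Nat.choose m (m - i))

lemma neg_one_pow_sub_real (c d : ℕ) (h : d ≤ c) :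
    (-1:ℝ)^(c-d) = (-1)^c * (-1)^d := by
  have h1 : (-1:ℝ)^(c-d) * (-1)^d = (-1)^c := by
    rw [← pow_add, Nat.sub_add_cancel h]
  have h2 : (-1:ℝ)^d * (-1)^d = 1 := by
    rw [← pow_add, ← two_mul, pow_mul]; norm_num
  calc (-1:ℝ)^(c-d) = (-1:ℝ)^(c-d) * ((-1)^d * (-1)^d) := by rw [h2, mul_one]
    _ = ((-1:ℝ)^(c-d) * (-1)^d) * (-1)^d := by ring
    _ = (-1)^c * (-1)^d := by rw [h1]

lemma sum_pow_neg_one_real {α : Type*} [DecidableEq α] (s : Finset α) (hs : s.Nonempty) :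
    ∑ a ∈ s.powerset, (-1:ℝ)^a.card = 0 := by
  have h := Finset.sum_powerset_neg_one_pow_card_of_nonempty (x := s) hs
  have h2 : ((∑ a ∈ s.powerset, (-1:ℤ)^a.card : ℤ) : ℝ) = 0 := by rw [h]; norm_num
  rw [Int.cast_sum] at h2
  simpa using h2

lemma master {m : ℕ} (L U P' : Finset (Fin m)) (hLU : L ⊆ U) (hne : L ≠ U)
    (hUP : U \ L ⊆ P') :
    ∑ S' ∈ univ.filter (fun S' : Finset (Fin m) => L ⊆ S' ∧ S' ⊆ U),
      (-1:ℝ)^((P' \ S').card) = 0 := by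
  have key : ∑ S' ∈ univ.filter (fun S' : Finset (Fin m) => L ⊆ S' ∧ S' ⊆ U),
      (-1:ℝ)^((P' \ S').card)
      = ∑ a ∈ (U \ L).powerset, (-1:ℝ)^((P' \ L).card) * (-1:ℝ)^a.card := by
    refine Finset.sum_nbij' (fun S' => S' \ L) (fun a => L ∪ a) ?_ ?_ ?_ ?_ ?_
    · intro S' hS'
      simp only [mem_filter, mem_powerset] at *
      exact sdiff_subset_sdiff hS'.2.2 (Subset.refl _)
    · intro a ha
      simp only [mem_filter, mem_powerset] at *
      exact ⟨mem_univ _, subset_union_left, union_subset hLU (ha.trans sdiff_subset)⟩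
    · intro S' hS'
      simp only [mem_filter] at hS'
      exact union_sdiff_of_subset hS'.2.1
    · intro a ha
      simp only [mem_powerset] at ha
      exact union_sdiff_cancel_left (disjoint_of_subset_right ha sdiff_disjoint.symm)
    · intro S' hS'
      simp only [mem_filter] at hS'
      obtain ⟨-, h1, h2⟩ := hS'
      have hsub : S' \ L ⊆ P' \ L :=
        subset_sdiff.2 ⟨(sdiff_subset_sdiff h2 (Subset.refl L)).trans hUP, sdiff_disjoint⟩
      have heq : P' \ S' = (P' \ L) \ (S' \ L) := by
        ext x
        simp only [mem_sdiff]
        constructor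
        · intro ⟨hxP, hxS⟩
          exact ⟨⟨hxP, fun hxL => hxS (h1 hxL)⟩, fun ⟨hxS', _⟩ => hxS hxS'⟩
        · intro ⟨⟨hxP, hxL⟩, hx⟩
          refine ⟨hxP, fun hxS' => hx ⟨hxS', hxL⟩⟩
      rw [heq, card_sdiff_of_subset hsub, neg_one_pow_sub_real _ _ (card_le_card hsub)]
  rw [key, ← Finset.mul_sum, sum_pow_neg_one_real _ ?_, mul_zero]
  rw [Finset.sdiff_nonempty]
  intro hsub
  exact hne (Finset.Subset.antisymm hLU hsub)

lemma repair {m k : ℕ} (J : Finset (Finset (Fin m))) (hJ : J.card < 2^k)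
    (S : Finset (Fin m)) (hS : k < S.card) :
    ∃ ρ : Finset (Fin m) → ℝ,
      ρ S = 1 ∧ (∀ S', ρ S' ≠ 0 → S' ⊆ S) ∧ (∀ S', |ρ S'| ≤ 1) ∧
      ∀ T ∈ J, ∑ S' ∈ univ.filter (fun S' : Finset (Fin m) => (S' ∩ T).Nonempty), ρ S' = 0 := by
  obtain ⟨P, hPS, hPcard⟩ := Finset.exists_subset_card_eq (s := S) (n := k) (le_of_lt hS)
  have hcard : (J.image (fun T => P \ T)).card < P.powerset.card := by
    rw [card_powerset, hPcard]
    exact lt_of_le_of_lt (Finset.card_image_le) hJ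
  have hnot : ¬ P.powerset ⊆ J.image (fun T => P \ T) := by
    intro hsub
    exact absurd (Finset.card_le_card hsub) (not_le.2 hcard)
  obtain ⟨Q, hQpow, hQnot⟩ := Finset.not_subset.1 hnot
  have hQP : Q ⊆ P := Finset.mem_powerset.1 hQpow
  have hQmiss : ∀ T ∈ J, P \ T ≠ Q := by
    intro T hT heq
    exact hQnot (Finset.mem_image.2 ⟨T, hT, heq⟩)
  have hPneS : P ≠ S := by
    intro h; rw [h] at hPcard; omega
  by_cases hQeqP : Q = P
  · -- hitting-set case
    refine ⟨fun S' => (if S' = S then (1:ℝ) else 0) + (if S' = P then (-1:ℝ) else 0),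
      ?_, ?_, ?_, ?_⟩
    · dsimp only
      rw [if_pos rfl, if_neg (fun h => hPneS h.symm)]; norm_num
    · intro S' h
      dsimp only at h
      by_cases h1 : S' = S
      · exact h1 ▸ Finset.Subset.refl S
      · by_cases h2 : S' = P
        · exact h2 ▸ hPS
        · simp [h1, h2] at h
    · intro S'
      dsimp only
      by_cases h1 : S' = S
      · subst h1; rw [if_pos rfl, if_neg hPneS.symm]; norm_num
      · by_cases h2 : S' = P
        · subst h2; rw [if_neg h1, if_pos rfl]; norm_num
        · rw [if_neg h1, if_neg h2]; norm_num
    · intro T hT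
      have hPT : (P ∩ T).Nonempty := by
        rw [← Finset.not_disjoint_iff_nonempty_inter]
        intro hd
        exact hQmiss T hT (by rw [Finset.sdiff_eq_self_iff_disjoint.2 hd, hQeqP])
      have hST : (S ∩ T).Nonempty := hPT.mono (inter_subset_inter hPS (Finset.Subset.refl T))
      rw [Finset.sum_add_distrib]
      rw [Finset.sum_ite_eq' _ S (fun _ => (1:ℝ)), Finset.sum_ite_eq' _ P (fun _ => (-1:ℝ))]
      rw [if_pos (by simp [hST]), if_pos (by simp [hPT])]
      norm_num
  · -- alternating block case
    have hQssP : Q ⊂ P := ssubset_of_subset_of_ne hQP hQeqP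
    set L : Finset (Fin m) := (S \ P) ∪ Q with hL
    have hLS : L ⊆ S := union_subset sdiff_subset (hQP.trans hPS)
    have hSLP : ∀ (U' : Finset (Fin m)), U' ⊆ S → U' \ L ⊆ P := by
      intro U' hU' x hx
      rw [mem_sdiff] at hx
      have hxS : x ∈ S := hU' hx.1
      by_contra hxP
      exact hx.2 (mem_union_left _ (mem_sdiff.2 ⟨hxS, hxP⟩))
    have hLneS : L ≠ S := by
      intro h
      have h1 : L.card ≤ (S \ P).card + Q.card := card_union_le _ _
      have h2 : (S \ P).card = S.card - P.card := card_sdiff_of_subset hPS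
      have h3 : Q.card < P.card := card_lt_card hQssP
      have h4 : P.card ≤ S.card := card_le_card hPS
      rw [h] at h1; omega
    refine ⟨fun S' => if L ⊆ S' ∧ S' ⊆ S then (-1:ℝ)^((P \ S').card) else 0, ?_, ?_, ?_, ?_⟩
    · dsimp only
      rw [if_pos ⟨hLS, Finset.Subset.refl S⟩, Finset.sdiff_eq_empty_iff_subset.2 hPS]
      simp
    · intro S' h
      dsimp only at h
      by_cases hc : L ⊆ S' ∧ S' ⊆ S
      · exact hc.2
      · simp [hc] at h
    · intro S'
      dsimp only
      by_cases hc : L ⊆ S' ∧ S' ⊆ S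
      · rw [if_pos hc, abs_pow, abs_neg, abs_one, one_pow]
      · rw [if_neg hc]; norm_num
    · intro T hT
      have hsplit := Finset.sum_filter_add_sum_filter_not univ
        (fun S' : Finset (Fin m) => (S' ∩ T).Nonempty)
        (fun S' => if L ⊆ S' ∧ S' ⊆ S then (-1:ℝ)^((P \ S').card) else 0)
      have htot : ∑ S' ∈ (univ : Finset (Finset (Fin m))),
          (if L ⊆ S' ∧ S' ⊆ S then (-1:ℝ)^((P \ S').card) else 0) = 0 := by
        rw [← Finset.sum_filter]
        exact master L S P hLS hLneS (hSLP S (Finset.Subset.refl S))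
      have hneg : ∑ S' ∈ univ.filter (fun S' : Finset (Fin m) => ¬ (S' ∩ T).Nonempty),
          (if L ⊆ S' ∧ S' ⊆ S then (-1:ℝ)^((P \ S').card) else 0) = 0 := by
        rw [← Finset.sum_filter, Finset.filter_filter]
        have hset : univ.filter (fun S' : Finset (Fin m) =>
            ¬ (S' ∩ T).Nonempty ∧ (L ⊆ S' ∧ S' ⊆ S))
            = univ.filter (fun S' : Finset (Fin m) => L ⊆ S' ∧ S' ⊆ S \ T) := by
          apply Finset.filter_congr
          intro S' _
          constructor
          · intro ⟨h1, h2, h3⟩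
            refine ⟨h2, Finset.subset_sdiff.2 ⟨h3, ?_⟩⟩
            rw [Finset.disjoint_iff_inter_eq_empty, ← Finset.not_nonempty_iff_eq_empty]
            exact h1
          · intro ⟨h1, h2⟩
            have h3 := Finset.subset_sdiff.1 h2
            refine ⟨?_, h1, h3.1⟩
            rw [Finset.not_nonempty_iff_eq_empty, ← Finset.disjoint_iff_inter_eq_empty]
            exact h3.2
        rw [hset]
        by_cases hLST : L ⊆ S \ T
        · refine master L (S \ T) P hLST ?_ (hSLP (S \ T) sdiff_subset)
          intro h
          apply hQmiss T hT
          apply Finset.Subset.antisymm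
          · intro x hx
            rw [mem_sdiff] at hx
            have hxS : x ∈ S := hPS hx.1
            have hxL : x ∈ L := by rw [h]; exact mem_sdiff.2 ⟨hxS, hx.2⟩
            rcases mem_union.1 hxL with h' | h'
            · exact absurd hx.1 (mem_sdiff.1 h').2
            · exact h'
          · intro x hx
            have hxL : x ∈ L := mem_union_right _ hx
            rw [h, mem_sdiff] at hxL
            exact mem_sdiff.2 ⟨hQP hx, hxL.2⟩
        · rw [Finset.filter_false_of_mem, Finset.sum_empty]
          intro S' _ hc
          exact hLST (hc.1.trans hc.2)
      linarith [hsplit]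

lemma exists_good_w {m k : ℕ} (N : ℝ) (J : Finset (Finset (Fin m)))
    (hk1 : 1 ≤ k) (hkm : k ≤ m) (hJ : J.card < 2^k) :
    ∀ j : ℕ, j ≤ m - k → ∃ w : Finset (Fin m) → ℝ,
      (∀ T ∈ J, costsum w T = costsum (wstar m k N) T) ∧
      (∀ S : Finset (Fin m), m - j < S.card → 0 ≤ w S) ∧
      (∀ S : Finset (Fin m), wstar m k N S - ((gam m j : ℝ) - 1) ≤ w S) := by
  intro j
  induction j with
  | zero =>
    intro _
    refine ⟨wstar m k N, fun T _ => rfl, ?_, ?_⟩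
    · intro S h
      exfalso
      have h2 : S.card ≤ m := by
        have := Finset.card_le_univ S
        simpa using this
      omega
    · intro S
      simp [gam]
  | succ j ih =>
    intro hj1
    obtain ⟨w, hw1, hw2, hw3⟩ := ih (by omega)
    set s := m - j with hs
    have hks : k < s := by omega
    have hs1 : 1 ≤ s := by omega
    have hsm : s ≤ m := by omega
    have hrep : ∀ S : Finset (Fin m), ∃ ρ : Finset (Fin m) → ℝ,
        k < S.card → (ρ S = 1 ∧ (∀ S', ρ S' ≠ 0 → S' ⊆ S) ∧ (∀ S', |ρ S'| ≤ 1) ∧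
          ∀ T ∈ J, ∑ S' ∈ univ.filter
            (fun S' : Finset (Fin m) => (S' ∩ T).Nonempty), ρ S' = 0) := by
      intro S
      by_cases h : k < S.card
      · obtain ⟨ρ, hρ⟩ := repair J hJ S h
        exact ⟨ρ, fun _ => hρ⟩
      · exact ⟨0, fun h' => absurd h' h⟩
    choose ρ hρ using hrep
    set layer := Finset.powersetCard s (univ : Finset (Fin m)) with hlayer
    have hcards : ∀ S ∈ layer, S.card = s := by
      intro S hS
      rw [hlayer, Finset.mem_powersetCard] at hS
      exact hS.2
    have hmem : ∀ S ∈ layer, k < S.card := by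
      intro S hS
      rw [hcards S hS]
      omega
    set t : Finset (Fin m) → ℝ := fun S => max 0 (-(w S)) with ht
    have hgam1 : (1:ℝ) ≤ (gam m j : ℝ) := by
      have : 1 ≤ gam m j := Nat.one_le_two_pow
      exact_mod_cast this
    have htS : ∀ S ∈ layer, 0 ≤ t S ∧ t S ≤ (gam m j : ℝ) := by
      intro S hS
      refine ⟨le_max_left _ _, ?_⟩
      have h1 := hw3 S
      have h2 : wstar m k N S = -1 := if_neg (by push_neg; rw [hcards S hS]; omega)
      rw [h2] at h1
      apply max_le <;> linarith
    refine ⟨fun S' => w S' + ∑ S ∈ layer, t S * ρ S S', ?_, ?_, ?_⟩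
    · intro T hT
      rw [← hw1 T hT]
      unfold costsum
      rw [Finset.sum_add_distrib]
      have : ∑ S' ∈ univ.filter (fun S' : Finset (Fin m) => (S' ∩ T).Nonempty),
          ∑ S ∈ layer, t S * ρ S S' = 0 := by
        rw [Finset.sum_comm]
        apply Finset.sum_eq_zero
        intro S hS
        rw [← Finset.mul_sum, (hρ S (hmem S hS)).2.2.2 T hT, mul_zero]
      rw [this, add_zero]
    · intro S₀ h₀
      have hms : m - (j+1) = s - 1 := by omega
      rw [hms] at h₀
      dsimp only
      rcases eq_or_lt_of_le (show s ≤ S₀.card by omega) with heq | hlt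
      · have hS₀mem : S₀ ∈ layer := by
          rw [hlayer, Finset.mem_powersetCard]
          exact ⟨Finset.subset_univ _, heq.symm⟩
        have hsum : ∑ S ∈ layer, t S * ρ S S₀ = t S₀ * ρ S₀ S₀ := by
          apply Finset.sum_eq_single_of_mem S₀ hS₀mem
          intro S hS hne
          by_cases hz : ρ S S₀ = 0
          · rw [hz, mul_zero]
          · exfalso
            have hsub : S₀ ⊆ S := (hρ S (hmem S hS)).2.1 S₀ hz
            have hcard : S.card ≤ S₀.card := by
              rw [hcards S hS, ← heq]
            exact hne (Finset.eq_of_subset_of_card_le hsub hcard).symm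
        rw [hsum, (hρ S₀ (hmem S₀ hS₀mem)).1, mul_one]
        have := le_max_right (0:ℝ) (-(w S₀))
        rw [ht]
        dsimp only
        linarith
      · have hsum : ∑ S ∈ layer, t S * ρ S S₀ = 0 := by
          apply Finset.sum_eq_zero
          intro S hS
          by_cases hz : ρ S S₀ = 0
          · rw [hz, mul_zero]
          · exfalso
            have hsub : S₀ ⊆ S := (hρ S (hmem S hS)).2.1 S₀ hz
            have := Finset.card_le_card hsub
            rw [hcards S hS] at this
            omega
        rw [hsum, add_zero]
        exact hw2 S₀ (by omega)
    · intro S'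
      dsimp only
      have hbound : ∑ S ∈ layer, t S * ρ S S' ≥ - (Nat.choose m s * (gam m j : ℝ)) := by
        have h1 : ∀ S ∈ layer, t S * ρ S S' ≥ -(gam m j : ℝ) := by
          intro S hS
          have habs := (hρ S (hmem S hS)).2.2.1 S'
          have h2 : (-1:ℝ) ≤ ρ S S' := neg_le_of_abs_le habs
          have h3 := (htS S hS).1
          have h4 := (htS S hS).2
          nlinarith
        have h2 : ∑ S ∈ layer, t S * ρ S S' ≥ ∑ S ∈ layer, (-(gam m j : ℝ)) :=
          Finset.sum_le_sum h1
        rw [Finset.sum_const] at h2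
        have hcard : layer.card = Nat.choose m s := by
          rw [hlayer, Finset.card_powersetCard, Finset.card_univ, Fintype.card_fin]
        rw [hcard] at h2
        simpa [nsmul_eq_mul, mul_comm] using h2
      have hkey : (gam m j : ℝ) * (1 + Nat.choose m s) ≤ (gam m (j+1) : ℝ) := by
        have hnat : gam m j * (1 + Nat.choose m s) ≤ gam m (j+1) := by
          unfold gam
          rw [Finset.sum_range_succ, pow_add, ← hs]
          apply Nat.mul_le_mul_left
          have := Nat.lt_two_pow_self (n := Nat.choose m s)
          omega
        exact_mod_cast hnat
      have h5 := hw3 S'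
      push_cast at hkey ⊢
      linarith

lemma two_pow_le_factorial {n : ℕ} (h : 4 ≤ n) : 2^n ≤ n.factorial := by
  induction n, h using Nat.le_induction with
  | base => decide
  | succ n hn ih =>
    rw [pow_succ, Nat.factorial_succ]
    calc 2^n * 2 ≤ n.factorial * (n+1) := Nat.mul_le_mul ih (by omega)
      _ = (n+1) * n.factorial := Nat.mul_comm _ _

lemma gam_le {m k : ℕ} (hm : 2 ≤ m) (hk : k ≤ m) :
    gam m (m - k) ≤ Nat.factorial (2^m) := by
  have hE : (∑ i ∈ Finset.range (m - k), Nat.choose m (m - i)) ≤ 2^m := by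
    have himg : ∑ i ∈ Finset.range (m - k), Nat.choose m (m - i)
        = ∑ i' ∈ (Finset.range (m - k)).image (fun i => m - i), Nat.choose m i' := by
      rw [Finset.sum_image]
      intro x hx y hy hxy
      rw [Finset.mem_coe, Finset.mem_range] at hx hy
      simp only at hxy
      omega
    rw [himg]
    calc ∑ i' ∈ (Finset.range (m - k)).image (fun i => m - i), Nat.choose m i'
        ≤ ∑ i' ∈ Finset.range (m + 1), Nat.choose m i' := by
          apply Finset.sum_le_sum_of_subset
          intro x hx
          rw [Finset.mem_image] at hx
          obtain ⟨i, hi, rfl⟩ := hx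
          rw [Finset.mem_range]
          omega
      _ = 2^m := Nat.sum_range_choose m
  calc gam m (m - k) = 2 ^ (∑ i ∈ Finset.range (m - k), Nat.choose m (m - i)) := rfl
    _ ≤ 2 ^ (2^m) := Nat.pow_le_pow_right (by norm_num) hE
    _ ≤ Nat.factorial (2^m) := two_pow_le_factorial (by
        calc 4 = 2^2 := rfl
          _ ≤ 2^m := Nat.pow_le_pow_right (by norm_num) hm)

theorem stmt9 (m k : ℕ) (hm : 2 ≤ m) (hk1 : 1 ≤ k) (hk2 : k ≤ m - 1)
    (N : ℝ) (hN : (Nat.factorial (2 ^ m) : ℝ) < N)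
    (J : Finset (Finset (Fin m)))
    (hcert : ¬ ∃ g : Finset (Fin m) → ℝ, IsCoverage m g ∧ ∀ T ∈ J, g T = fstar m k N T) :
    2 ^ k ≤ J.card := by
  by_contra hcon
  push_neg at hcon
  have hkm : k ≤ m := by omega
  obtain ⟨w, hw1, hw2, hw3⟩ := exists_good_w N J hk1 hkm hcon (m - k) le_rfl
  have hgamN : (gam m (m - k) : ℝ) ≤ (Nat.factorial (2^m) : ℝ) := by
    exact_mod_cast gam_le hm hkm
  have h0 : ∀ S : Finset (Fin m), 0 ≤ w S := by
    intro S
    by_cases hc : k < S.card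
    · exact hw2 S (by omega)
    · have := hw3 S
      rw [wstar, if_pos (by omega)] at this
      linarith
  apply hcert
  refine ⟨costsum w, ?_, ?_⟩
  · refine ⟨Finset (Fin m), inferInstance, inferInstance,
      fun i => univ.filter (fun S => i ∈ S), w, h0, ?_⟩
    intro T
    unfold costsum
    congr 1
    ext S
    simp only [Finset.mem_biUnion, Finset.mem_filter, Finset.mem_univ, true_and]
    simp only [Finset.Nonempty, Finset.mem_inter]
    tauto
  · intro T hT
    rw [hw1 T hT]
    unfold costsum fstar
    apply Finset.sum_congr _ (fun _ _ => rfl)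
    apply Finset.filter_congr
    intro S _
    constructor
    · intro h
      exact ⟨h.mono Finset.inter_subset_left, h⟩
    · exact And.right
end

section
/- Let m ≥ 1 and 0 ≤ k ≤ m−1. Let α : 2^[m] → ℝ be a function with α(S) ≥ 0 for all S, such that α(S) = 0 whenever |S| ≤ k, and such that α is not identically zero. Then g_α(T) > 0 for at least 2^k subsets T ⊆ [m]. -/
open Finset

/-- `g_α(T) = Σ_{S : S ∪ T = [m]} (−1)^{|S ∩ T| + 1} α(S)`. -/
noncomputable def gAlpha (m : ℕ) (α : Finset (Fin m) → ℝ) (T : Finset (Fin m)) : ℝ :=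
  ∑ S ∈ univ.filter (fun S : Finset (Fin m) => S ∪ T = univ),
    (-1 : ℝ) ^ ((S ∩ T).card + 1) * α S

lemma sumPowNegOne {m : ℕ} (R : Finset (Fin m)) :
    ∑ U ∈ R.powerset, (-1:ℝ)^U.card = if R = ∅ then 1 else 0 := by
  have h := Finset.sum_powerset_neg_one_pow_card (x := R)
  have h2 : ((∑ U ∈ R.powerset, (-1:ℤ)^U.card : ℤ) : ℝ)
      = ∑ U ∈ R.powerset, (-1:ℝ)^U.card := by push_cast; rfl
  rw [← h2, h]
  split <;> simp

lemma intervalSum {m : ℕ} (α : Finset (Fin m) → ℝ) (Y D : Finset (Fin m))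
    (hYD : Disjoint Y D) :
    ∑ T ∈ univ.filter (fun T : Finset (Fin m) => Y ⊆ T ∧ Disjoint T D), gAlpha m α T
    = ∑ S ∈ univ.filter (fun S : Finset (Fin m) => D ⊆ S ∧ S ⊆ Y ∪ D),
        (-1:ℝ)^((S \ D).card + 1) * α S := by
  unfold gAlpha
  rw [Finset.sum_filter, Finset.sum_filter]
  have step : ∀ T : Finset (Fin m),
      (if Y ⊆ T ∧ Disjoint T D then
        ∑ S ∈ univ.filter (fun S : Finset (Fin m) => S ∪ T = univ),
          (-1 : ℝ) ^ ((S ∩ T).card + 1) * α S else 0)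
      = ∑ S : Finset (Fin m),
          if (Y ⊆ T ∧ Disjoint T D) ∧ S ∪ T = univ then
            (-1 : ℝ) ^ ((S ∩ T).card + 1) * α S else 0 := by
    intro T
    rw [Finset.sum_filter]
    split
    · next h => exact Finset.sum_congr rfl fun S _ => by simp [h]
    · next h => simp [h]
  simp_rw [step]
  rw [Finset.sum_comm]
  refine Finset.sum_congr rfl fun S _ => ?_
  by_cases hDS : D ⊆ S
  · -- reindex over powerset of R := (S \ Y) \ D
    set R : Finset (Fin m) := (S \ Y) \ D with hR
    rw [← Finset.sum_filter]
    have key : ∑ T ∈ univ.filter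
          (fun T : Finset (Fin m) => (Y ⊆ T ∧ Disjoint T D) ∧ S ∪ T = univ),
          (-1 : ℝ) ^ ((S ∩ T).card + 1) * α S
        = ∑ U ∈ R.powerset, (-1:ℝ) ^ ((S ∩ Y).card + U.card + 1) * α S := by
      refine Finset.sum_nbij' (fun T => (T ∩ S) \ Y) (fun U => Y ∪ (Sᶜ ∪ U)) ?_ ?_ ?_ ?_ ?_
      · intro T hT
        simp only [mem_filter, mem_univ, true_and] at hT
        obtain ⟨⟨hYT, hTD⟩, hST⟩ := hT
        rw [mem_powerset]
        intro x hx
        simp only [mem_sdiff, mem_inter] at hx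
        simp only [hR, mem_sdiff]
        exact ⟨⟨hx.1.2, hx.2⟩, Finset.disjoint_left.1 hTD hx.1.1⟩
      · intro U hU
        rw [mem_powerset] at hU
        simp only [mem_filter, mem_univ, true_and]
        refine ⟨⟨fun x hx => by simp [hx], ?_⟩, ?_⟩
        · rw [Finset.disjoint_left]
          intro x hx hxD
          simp only [mem_union, mem_compl] at hx
          rcases hx with h | h | h
          · exact Finset.disjoint_left.1 hYD h hxD
          · exact h (hDS hxD)
          · have := hU h; simp [hR, mem_sdiff] at this; exact this.2 hxD
        · ext x
          simp only [mem_union, mem_compl, mem_univ, iff_true]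
          by_cases hxS : x ∈ S <;> tauto
      · intro T hT
        simp only [mem_filter, mem_univ, true_and] at hT
        obtain ⟨⟨hYT, hTD⟩, hST⟩ := hT
        have hSu : ∀ x : Fin m, x ∈ S ∨ x ∈ T := by
          intro x
          have : x ∈ S ∪ T := by rw [hST]; exact mem_univ x
          simpa [mem_union] using this
        ext x
        simp only [mem_union, mem_compl, mem_sdiff, mem_inter]
        constructor
        · rintro (h | h | h)
          · exact hYT h
          · rcases hSu x with h' | h'
            · exact absurd h' h
            · exact h'
          · exact h.1.1
        · intro hx
          by_cases hxS : x ∈ S <;> by_cases hxY : x ∈ Y <;> tauto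
      · intro U hU
        rw [mem_powerset] at hU
        ext x
        simp only [mem_sdiff, mem_inter, mem_union, mem_compl]
        constructor
        · rintro ⟨⟨h1, h2⟩, h3⟩
          rcases h1 with h | h | h
          · exact absurd h h3
          · exact absurd h2 h
          · exact h
        · intro hx
          have := hU hx
          simp only [hR, mem_sdiff] at this
          exact ⟨⟨Or.inr (Or.inr hx), this.1.1⟩, this.1.2⟩
      · intro T hT
        simp only [mem_filter, mem_univ, true_and] at hT
        obtain ⟨⟨hYT, hTD⟩, hST⟩ := hT
        have hsplit : S ∩ T = (S ∩ Y) ∪ ((T ∩ S) \ Y) := by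
          ext x
          simp only [mem_inter, mem_union, mem_sdiff]
          constructor
          · intro hx
            by_cases hxY : x ∈ Y <;> tauto
          · rintro (⟨h1, h2⟩ | ⟨⟨h1, h2⟩, h3⟩)
            · exact ⟨h1, hYT h2⟩
            · exact ⟨h2, h1⟩
        have hdisj : Disjoint (S ∩ Y) ((T ∩ S) \ Y) := by
          rw [Finset.disjoint_left]
          intro x hx hx'
          simp only [mem_inter] at hx
          simp only [mem_sdiff] at hx'
          exact hx'.2 hx.2
        rw [hsplit, card_union_of_disjoint hdisj]
    rw [key]
    have factor : ∀ U : Finset (Fin m),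
        (-1:ℝ) ^ ((S ∩ Y).card + U.card + 1) * α S
        = ((-1:ℝ) ^ ((S ∩ Y).card + 1) * α S) * (-1:ℝ) ^ U.card := by
      intro U
      rw [show (S ∩ Y).card + U.card + 1 = ((S ∩ Y).card + 1) + U.card by ring,
        pow_add]
      ring
    rw [Finset.sum_congr rfl fun U _ => factor U, ← Finset.mul_sum, sumPowNegOne]
    have hRempty : R = ∅ ↔ S ⊆ Y ∪ D := by
      simp only [hR, Finset.sdiff_eq_empty_iff_subset]
      constructor
      · intro h x hxS
        by_cases hxY : x ∈ Y
        · exact mem_union.2 (Or.inl hxY)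
        · exact mem_union.2 (Or.inr (h (mem_sdiff.2 ⟨hxS, hxY⟩)))
      · intro h x hx
        simp only [mem_sdiff] at hx
        rcases mem_union.1 (h hx.1) with h' | h'
        · exact absurd h' hx.2
        · exact h'
    by_cases hS : S ⊆ Y ∪ D
    · rw [if_pos (hRempty.2 hS), if_pos ⟨hDS, hS⟩]
      have hcard : S ∩ Y = S \ D := by
        ext x
        simp only [mem_inter, mem_sdiff]
        constructor
        · intro hx
          exact ⟨hx.1, fun hD => Finset.disjoint_left.1 hYD hx.2 hD⟩
        · intro hx
          refine ⟨hx.1, ?_⟩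
          rcases mem_union.1 (hS hx.1) with h' | h'
          · exact h'
          · exact absurd h' hx.2
      rw [hcard]
      ring
    · rw [if_neg (fun h => hS (hRempty.1 h)), if_neg (fun h => hS h.2)]
      ring
  · -- D ⊄ S : no T satisfies the conditions
    obtain ⟨x, hxD, hxS⟩ := Finset.not_subset.1 hDS
    rw [if_neg (fun h => hDS h.1)]
    refine Finset.sum_eq_zero fun T _ => ?_
    rw [if_neg]
    rintro ⟨⟨hYT, hTD⟩, hST⟩
    have hxT : x ∈ T := by
      have : x ∈ S ∪ T := by rw [hST]; exact mem_univ x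
      rcases mem_union.1 this with h | h
      · exact absurd h hxS
      · exact h
    exact Finset.disjoint_left.1 hTD hxT hxD

lemma existsPos {m : ℕ} (α : Finset (Fin m) → ℝ) (hα0 : ∀ S, 0 ≤ α S)
    (S0 : Finset (Fin m)) (hS0 : α S0 ≠ 0)
    (hmin : ∀ S, α S ≠ 0 → S0.card ≤ S.card)
    (D : Finset (Fin m)) (hD : D ⊆ S0) (hodd : Odd (S0 \ D).card) :
    ∃ T, 0 < gAlpha m α T ∧ S0 \ D ⊆ T ∧ Disjoint T D := by
  have hYD : Disjoint (S0 \ D) D := Finset.sdiff_disjoint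
  have hYuD : S0 \ D ∪ D = S0 := Finset.sdiff_union_of_subset hD
  have hsum := intervalSum α (S0 \ D) D hYD
  rw [hYuD] at hsum
  have hval : ∑ S ∈ univ.filter (fun S : Finset (Fin m) => D ⊆ S ∧ S ⊆ S0),
      (-1:ℝ)^((S \ D).card + 1) * α S = α S0 := by
    rw [Finset.sum_eq_single_of_mem S0 (by simp [hD])]
    · rw [pow_succ, Odd.neg_one_pow hodd]
      ring
    · intro S hS hne
      simp only [mem_filter, mem_univ, true_and] at hS
      have : α S = 0 := by
        by_contra hc
        exact hne (Finset.eq_of_subset_of_card_le hS.2 (hmin S hc))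
      rw [this]; ring
  rw [hval] at hsum
  have hpos : 0 < α S0 := lt_of_le_of_ne (hα0 S0) (Ne.symm hS0)
  by_contra hcon
  push_neg at hcon
  have hle : ∑ T ∈ univ.filter
      (fun T : Finset (Fin m) => S0 \ D ⊆ T ∧ Disjoint T D), gAlpha m α T ≤ 0 := by
    refine Finset.sum_nonpos fun T hT => ?_
    simp only [mem_filter, mem_univ, true_and] at hT
    exact le_of_not_gt fun hlt => (hcon T hlt hT.1 hT.2).elim
  rw [hsum] at hle
  exact absurd hle (not_le.2 hpos)

theorem stmt11 (m k : ℕ) (hm : 1 ≤ m) (hk : k ≤ m - 1)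
    (α : Finset (Fin m) → ℝ) (hα0 : ∀ S : Finset (Fin m), 0 ≤ α S)
    (hαk : ∀ S : Finset (Fin m), S.card ≤ k → α S = 0)
    (hαne : α ≠ 0) :
    2 ^ k ≤ (univ.filter (fun T : Finset (Fin m) => 0 < gAlpha m α T)).card := by
  classical
  -- pick S0 of minimal card in support
  have hsupp : (univ.filter (fun S : Finset (Fin m) => α S ≠ 0)).Nonempty := by
    obtain ⟨S, hS⟩ := Function.ne_iff.1 hαne
    exact ⟨S, by simpa using hS⟩
  obtain ⟨S0, hS0mem, hS0min⟩ :=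
    Finset.exists_min_image _ (fun S => S.card) hsupp
  simp only [mem_filter, mem_univ, true_and] at hS0mem
  have hmin : ∀ S, α S ≠ 0 → S0.card ≤ S.card := fun S hS =>
    hS0min S (by simp [hS])
  have hS0card : k + 1 ≤ S0.card := by
    by_contra h
    push_neg at h
    exact hS0mem (hαk S0 (Nat.lt_succ_iff.1 h))
  obtain ⟨K', hK'sub, hK'card⟩ := Finset.exists_subset_card_eq hS0card
  have hK'ne : K'.Nonempty := by
    rw [← Finset.card_pos, hK'card]; omega
  obtain ⟨x0, hx0⟩ := hK'ne
  set K := K'.erase x0 with hK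
  have hKcard : K.card = k := by
    rw [hK, Finset.card_erase_of_mem hx0, hK'card]; rfl
  -- for each W ⊆ K, produce T with g T > 0 and T ∩ K = W
  have main : ∀ W : Finset (Fin m), ∃ T : Finset (Fin m),
      W ⊆ K → (0 < gAlpha m α T ∧ T ∩ K = W) := by
    intro W
    by_cases hW : W ⊆ K
    swap
    · exact ⟨∅, fun h => absurd h hW⟩
    refine ?_
    have hWK' : W ⊆ K' := hW.trans (Finset.erase_subset _ _)
    have hx0W : x0 ∉ W := fun h => (Finset.notMem_erase x0 K') (hW h)
    -- choose W' fixing parity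
    obtain ⟨W', hW'K', hWW', hx0cond, hodd⟩ :
        ∃ W' : Finset (Fin m), W' ⊆ K' ∧ W' ∩ K = W ∧ W ⊆ W' ∧
          Odd ((S0 \ (K' \ W')).card) := by
      by_cases hp : Odd ((S0 \ (K' \ W)).card)
      · refine ⟨W, hWK', ?_, Finset.Subset.refl W, hp⟩
        exact Finset.inter_eq_left.2 hW
      · refine ⟨insert x0 W, Finset.insert_subset hx0 hWK', ?_, Finset.subset_insert _ _, ?_⟩
        · ext y
          simp only [mem_inter, mem_insert, hK, mem_erase]
          constructor
          · rintro ⟨h1 | h1, h2⟩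
            · exact (h2.1 h1).elim
            · exact h1
          · intro hy
            exact ⟨Or.inr hy, fun he => hx0W (he ▸ hy), hWK' hy⟩
        · have hx0D : x0 ∈ K' \ W := mem_sdiff.2 ⟨hx0, hx0W⟩
          have hset : K' \ insert x0 W = (K' \ W).erase x0 := by
            ext y
            simp only [mem_sdiff, mem_insert, mem_erase]
            tauto
          have hx0S0 : x0 ∈ S0 := hK'sub hx0
          have hset2 : S0 \ (K' \ insert x0 W) = insert x0 (S0 \ (K' \ W)) := by
            rw [hset]
            ext y
            simp only [mem_sdiff, mem_erase, mem_insert]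
            by_cases hy : y = x0
            · subst hy; tauto
            · tauto
          rw [hset2, Finset.card_insert_of_notMem (by simp [hx0D])]
          rw [Nat.odd_add_one]
          exact hp
    have hDsub : K' \ W' ⊆ S0 := (Finset.sdiff_subset).trans hK'sub
    obtain ⟨T, hTpos, hYT, hTD⟩ := existsPos α hα0 S0 hS0mem hmin (K' \ W') hDsub hodd
    refine ⟨T, fun _ => ⟨hTpos, ?_⟩⟩
    have hW'S0 : W' ⊆ S0 := hW'K'.trans hK'sub
    have hW'Y : W' ⊆ S0 \ (K' \ W') := by
      intro y hy
      simp only [mem_sdiff, not_and, not_not]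
      exact ⟨hW'S0 hy, fun _ => hy⟩
    have hW'T : W' ⊆ T := hW'Y.trans hYT
    ext y
    simp only [mem_inter]
    constructor
    · rintro ⟨hyT, hyK⟩
      have hyK' : y ∈ K' := Finset.erase_subset _ _ hyK
      have hyW' : y ∈ W' := by
        by_contra h
        exact Finset.disjoint_left.1 hTD hyT (mem_sdiff.2 ⟨hyK', h⟩)
      rw [← hWW']
      exact mem_inter.2 ⟨hyW', hyK⟩
    · intro hy
      exact ⟨hW'T (hx0cond hy), hW hy⟩
  -- now count
  choose t ht using main
  have hmem : ∀ W ∈ K.powerset, t W ∈ univ.filter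
      (fun T : Finset (Fin m) => 0 < gAlpha m α T) := by
    intro W hW
    simp only [mem_filter, mem_univ, true_and]
    exact (ht W (mem_powerset.1 hW)).1
  have hinj : Set.InjOn t ↑K.powerset := by
    intro a ha b hb hab
    rw [Finset.mem_coe, mem_powerset] at ha hb
    rw [← (ht a ha).2, ← (ht b hb).2, hab]
  calc 2 ^ k = K.powerset.card := by rw [Finset.card_powerset, hKcard]
    _ ≤ _ := Finset.card_le_card_of_injOn t hmem hinj
end

section
/- Let m ≥ 1 and let α : 2^[m] → ℝ with α(S) ≥ 0 for all S. Suppose S* ⊆ [m] satisfies α(S*) > 0 and α(S) = 0 for every proper subset S ⊊ S*. Then for every nonempty X ⊆ S*, Σ_{T ⊆ [m]∖S*} g_α(T ∪ X) = (−1)^{|X|+1}·α(S*). -/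
open Finset

lemma real_sum_powerset_neg_one_pow_card {n : ℕ} (x : Finset (Fin n)) :
    (∑ U ∈ x.powerset, (-1 : ℝ) ^ U.card) = if x = ∅ then 1 else 0 := by
  have := Finset.sum_powerset_neg_one_pow_card (x := x)
  have h2 : ((∑ U ∈ x.powerset, (-1 : ℤ) ^ U.card : ℤ) : ℝ)
      = ∑ U ∈ x.powerset, (-1 : ℝ) ^ U.card := by push_cast; rfl
  rw [← h2, this]
  split <;> norm_num

lemma gAlpha_inner_sum12 (m : ℕ)
    (α : Finset (Fin m) → ℝ)
    (Sstar : Finset (Fin m))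
    (hmin : ∀ S : Finset (Fin m), S ⊂ Sstar → α S = 0)
    (X : Finset (Fin m)) (hXsub : X ⊆ Sstar) (S : Finset (Fin m)) :
    ∑ T ∈ (univ \ Sstar).powerset,
      (if S ∪ (T ∪ X) = univ then (-1 : ℝ) ^ ((S ∩ (T ∪ X)).card + 1) * α S else 0)
      = if S = Sstar then (-1 : ℝ) ^ (X.card + 1) * α Sstar else 0 := by
  classical
  by_cases h : Sstar ⊆ S ∪ X
  · -- bijection with subsets of E := (univ \ Sstar) ∩ S
    set C : Finset (Fin m) := univ \ Sstar with hC
    set D : Finset (Fin m) := univ \ (S ∪ X) with hD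
    set E : Finset (Fin m) := C ∩ S with hE
    have hDC : D ⊆ C := by
      intro x hx
      simp only [hD, mem_sdiff, mem_univ, true_and] at hx
      simp only [hC, mem_sdiff, mem_univ, true_and]
      exact fun hxS => hx (h hxS)
    have key : ∑ T ∈ C.powerset,
        (if S ∪ (T ∪ X) = univ then (-1 : ℝ) ^ ((S ∩ (T ∪ X)).card + 1) * α S else 0)
        = ∑ U ∈ E.powerset, (-1 : ℝ) ^ (U.card + (S ∩ X).card + 1) * α S := by
      rw [← Finset.sum_filter]
      refine Finset.sum_nbij' (fun T => T ∩ S) (fun U => D ∪ U) ?_ ?_ ?_ ?_ ?_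
      · intro T hT
        simp only [mem_filter, mem_powerset] at hT
        simp only [mem_powerset, hE]
        exact inter_subset_inter hT.1 (Subset.refl S)
      · intro U hU
        simp only [mem_powerset, hE] at hU
        simp only [mem_filter, mem_powerset]
        constructor
        · exact union_subset hDC (hU.trans inter_subset_left)
        · -- S ∪ (D ∪ U ∪ X) = univ
          apply eq_univ_of_forall
          intro x
          by_cases hx : x ∈ S ∪ X
          · simp only [mem_union] at hx ⊢; tauto
          · simp only [mem_union, hD, mem_sdiff, mem_univ, true_and]; tauto
      · intro T hT
        simp only [mem_filter, mem_powerset] at hT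
        -- D ∪ (T ∩ S) = T
        ext x
        simp only [mem_union, mem_inter, hD, mem_sdiff, mem_univ, true_and, mem_union, not_or]
        constructor
        · rintro (hx | hx)
          · have : x ∈ S ∪ (T ∪ X) := hT.2 ▸ mem_univ x
            simp only [mem_union] at this
            tauto
          · exact hx.1
        · intro hxT
          by_cases hxS : x ∈ S
          · exact Or.inr ⟨hxT, hxS⟩
          · left
            refine ⟨hxS, fun hxX => ?_⟩
            have := hT.1 hxT
            simp only [hC, mem_sdiff] at this
            exact this.2 (hXsub hxX)
      · intro U hU
        simp only [mem_powerset, hE] at hU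
        -- (D ∪ U) ∩ S = U
        ext x
        simp only [mem_inter, mem_union, hD, mem_sdiff, mem_univ, true_and, mem_union, not_or]
        constructor
        · rintro ⟨hx | hx, hxS⟩
          · exact absurd hxS hx.1
          · exact hx
        · intro hxU
          have := hU hxU
          simp only [mem_inter] at this
          exact ⟨Or.inr hxU, this.2⟩
      · intro T hT
        simp only [mem_filter, mem_powerset] at hT
        congr 2
        -- (S ∩ (T ∪ X)).card = (T ∩ S).card + (S ∩ X).card
        have hdisj : Disjoint (T ∩ S) (S ∩ X) := by
          have : T ∩ S ⊆ C := inter_subset_left.trans hT.1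
          refine Finset.disjoint_left.mpr fun x hx hx2 => ?_
          have h1 := this hx
          simp only [hC, mem_sdiff] at h1
          simp only [mem_inter] at hx2
          exact h1.2 (hXsub hx2.2)
        have heq : S ∩ (T ∪ X) = (T ∩ S) ∪ (S ∩ X) := by
          ext x; simp only [mem_inter, mem_union]; tauto
        rw [heq, card_union_of_disjoint hdisj]
    rw [key]
    have : ∑ U ∈ E.powerset, (-1 : ℝ) ^ (U.card + (S ∩ X).card + 1) * α S
        = ((-1 : ℝ) ^ ((S ∩ X).card + 1) * α S) * ∑ U ∈ E.powerset, (-1 : ℝ) ^ U.card := by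
      rw [Finset.mul_sum]
      refine Finset.sum_congr rfl fun U _ => ?_
      ring
    rw [this, real_sum_powerset_neg_one_pow_card]
    by_cases hEe : E = ∅
    · have hSsub : S ⊆ Sstar := by
        intro x hxS
        by_contra hxn
        have : x ∈ E := by simp [hE, hC, hxS, hxn]
        simp [hEe] at this
      by_cases hSeq : S = Sstar
      · subst hSeq
        have : S ∩ X = X := inter_eq_right.mpr hXsub
        simp [hEe, this]
      · have : α S = 0 := hmin S (ssubset_of_ne_of_subset hSeq hSsub)
        simp [this, hSeq]
    · have hSne : S ≠ Sstar := by
        intro hSeq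
        apply hEe
        subst hSeq
        simp only [hE, hC]
        ext x; simp only [mem_inter, mem_sdiff, mem_univ, true_and, notMem_empty]
        tauto
      simp [hEe, hSne]
  · -- no T satisfies the condition
    have hz : ∀ T ∈ (univ \ Sstar).powerset,
        (if S ∪ (T ∪ X) = univ then (-1 : ℝ) ^ ((S ∩ (T ∪ X)).card + 1) * α S else 0) = 0 := by
      intro T hT
      simp only [mem_powerset] at hT
      rw [if_neg]
      intro hu
      apply h
      intro x hx
      have : x ∈ S ∪ (T ∪ X) := hu ▸ mem_univ x
      simp only [mem_union] at this ⊢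
      rcases this with h1 | h2 | h3
      · exact Or.inl h1
      · exact absurd (hT h2) (by simp [hx])
      · exact Or.inr h3
    have hSne : S ≠ Sstar := by
      intro hSeq; subst hSeq; exact h subset_union_left
    rw [Finset.sum_eq_zero hz, if_neg hSne]

theorem stmt12 (m : ℕ) (hm : 1 ≤ m)
    (α : Finset (Fin m) → ℝ) (hα0 : ∀ S : Finset (Fin m), 0 ≤ α S)
    (Sstar : Finset (Fin m)) (hSstar : 0 < α Sstar)
    (hmin : ∀ S : Finset (Fin m), S ⊂ Sstar → α S = 0)
    (X : Finset (Fin m)) (hX : X.Nonempty) (hXsub : X ⊆ Sstar) :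
    ∑ T ∈ (univ \ Sstar).powerset, gAlpha m α (T ∪ X)
      = (-1 : ℝ) ^ (X.card + 1) * α Sstar := by
  classical
  have h1 : ∀ T : Finset (Fin m), gAlpha m α (T ∪ X)
      = ∑ S : Finset (Fin m),
        (if S ∪ (T ∪ X) = univ then (-1 : ℝ) ^ ((S ∩ (T ∪ X)).card + 1) * α S else 0) := by
    intro T
    rw [gAlpha, Finset.sum_filter]
  simp_rw [h1]
  rw [Finset.sum_comm]
  rw [Finset.sum_congr rfl fun S _ => gAlpha_inner_sum12 m α Sstar hmin X hXsub S]
  simp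
end

section
/- There exist constants c > 0 and m_0 such that for every integer m ≥ m_0 that is a multiple of 8, there is a set function f : 2^[m] → ℝ with f(∅) = 0 such that at least (1 − e^{−c·m})·(2^m − 1) of its W-coefficients w_f(S) (over nonempty S ⊆ [m]) are negative, and yet there exists a coverage function f' : 2^[m] → ℝ with |{T ⊆ [m] : f(T) ≠ f'(T)}| ≤ e^{−c·m}·2^m. -/
open Finset

namespace Stmt13Aux

open Polynomial

/-- forward difference of a polynomial evaluation -/
lemma eval_fwdDiff (p : ℝ[X]) :
    fwdDiff 1 (fun s : ℕ => p.eval (s : ℝ)) =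
      fun s : ℕ => (p.comp (X + 1) - p).eval (s : ℝ) := by
  funext s
  simp only [fwdDiff, eval_sub, eval_comp, eval_add, eval_X, eval_one]
  push_cast
  ring_nf

lemma fwdDiff_iter_poly_eq_zero :
    ∀ (N : ℕ) (p : ℝ[X]), p.natDegree < N →
      ∀ s : ℕ, (fwdDiff 1)^[N] (fun t : ℕ => p.eval (t : ℝ)) s = 0 := by
  intro N
  induction N with
  | zero => intro p hp; omega
  | succ N ih =>
    intro p hp s
    rw [Function.iterate_succ_apply, eval_fwdDiff]
    set q := p.comp (X + 1) - p with hq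
    by_cases hq0 : q = 0
    · rw [hq0]
      have h0 : (fun t : ℕ => (0 : ℝ[X]).eval (t : ℝ)) = (fun _ : ℕ => (0:ℝ)) := by
        funext t; simp
      rw [h0, Function.iterate_fixed (fwdDiff_const 1 (0:ℝ))]
    · apply ih
      rcases Nat.eq_zero_or_pos p.natDegree with h0 | hpos
      · exfalso
        apply hq0
        rw [hq, Polynomial.eq_C_of_natDegree_eq_zero h0, C_comp, sub_self]
      · have hp0 : p ≠ 0 := fun h => by simp [h] at hpos
        have hx1 : (X + 1 : ℝ[X]) = X + C 1 := by simp
        have hnd : (p.comp (X + 1)).natDegree = p.natDegree := by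
          rw [natDegree_comp, hx1, natDegree_X_add_C, mul_one]
        have hc0 : p.comp (X + 1) ≠ 0 := by
          intro h
          rw [h, natDegree_zero] at hnd
          omega
        have hdeg : (p.comp (X + 1)).degree = p.degree := by
          rw [degree_eq_natDegree hc0, degree_eq_natDegree hp0, hnd]
        have hlc : (p.comp (X + 1)).leadingCoeff = p.leadingCoeff := by
          rw [hx1, leadingCoeff_comp (by rw [natDegree_X_add_C]; omega),
            leadingCoeff_X_add_C, one_pow, mul_one]
        have hlt : q.degree < p.degree := by
          have := Polynomial.degree_sub_lt hdeg hc0 hlc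
          rwa [hdeg] at this
        have : q.natDegree < p.natDegree := by
          rw [Polynomial.natDegree_lt_iff_degree_lt hq0]
          rwa [degree_eq_natDegree hp0] at hlt
        omega

lemma newton_sum (f : ℕ → ℝ) (s : ℕ) :
    f s = ∑ k ∈ range (s + 1), (s.choose k : ℝ) * (fwdDiff 1)^[k] f 0 := by
  have h := shift_eq_sum_fwdDiff_iter (1 : ℕ) f s 0
  simpa [nsmul_eq_mul] using h

noncomputable def Ppoly (n : ℕ) : ℝ[X] :=
  C ((-1 : ℝ) ^ (3 * n)) * ∏ i ∈ range (2 * n), (C (((3 * n + i : ℕ) : ℝ) + 1/2) - X)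

lemma Ppoly_natDegree (n : ℕ) : (Ppoly n).natDegree ≤ 2 * n := by
  refine le_trans (natDegree_C_mul_le _ _) (le_trans (natDegree_prod_le _ _) ?_)
  calc ∑ i ∈ range (2 * n), (C (((3 * n + i : ℕ) : ℝ) + 1/2) - X).natDegree
      ≤ ∑ _i ∈ range (2 * n), 1 := by
        refine Finset.sum_le_sum fun i _ => ?_
        have : (C (((3 * n + i : ℕ) : ℝ) + 1/2) - X) = -(X - C (((3 * n + i : ℕ) : ℝ) + 1/2)) := by
          ring
        rw [this, natDegree_neg, natDegree_X_sub_C]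
    _ = 2 * n := by simp

noncomputable def cc (n j : ℕ) : ℝ :=
  (fwdDiff 1)^[j] (fun s : ℕ => (Ppoly n).eval (s : ℝ)) 0

lemma cc_eq_zero (n j : ℕ) (hj : 2 * n < j) : cc n j = 0 := by
  obtain ⟨k, rfl⟩ : ∃ k, j = (2 * n + 1) + k := ⟨j - (2 * n + 1), by omega⟩
  unfold cc
  rw [add_comm, Function.iterate_add_apply]
  have h0 : (fwdDiff 1)^[2 * n + 1] (fun s : ℕ => (Ppoly n).eval (s : ℝ)) = fun _ => 0 :=
    funext (fwdDiff_iter_poly_eq_zero _ _ (by have := Ppoly_natDegree n; omega))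
  rw [h0, Function.iterate_fixed (fwdDiff_const 1 (0 : ℝ))]

lemma newton_P (n s : ℕ) :
    ∑ k ∈ range (s + 1), (s.choose k : ℝ) * cc n k = (Ppoly n).eval (s : ℝ) :=
  (newton_sum (fun t : ℕ => (Ppoly n).eval (t : ℝ)) s).symm

lemma Ppoly_sign (n t : ℕ) (ht : t ≤ 2 * n) :
    0 < (-1 : ℝ) ^ (3 * n + t) * (Ppoly n).eval (((3 * n + t : ℕ) : ℝ)) := by
  have hprod : (Ppoly n).eval (((3 * n + t : ℕ) : ℝ)) =
      (-1 : ℝ) ^ (3 * n) * ∏ i ∈ range (2 * n), ((i : ℝ) + 1/2 - t) := by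
    unfold Ppoly
    rw [eval_mul, eval_C, eval_prod]
    congr 1
    refine Finset.prod_congr rfl fun i _ => ?_
    simp only [eval_sub, eval_C, eval_X]
    push_cast
    ring
  rw [hprod]
  have hA : ∀ i ∈ range t, ((i : ℝ) + 1/2 - t) = (-1) * ((t : ℝ) - i - 1/2) := by
    intro i _; ring
  have hApos : 0 < ∏ i ∈ range t, ((t : ℝ) - i - 1/2) := by
    refine Finset.prod_pos fun i hi => ?_
    rw [mem_range] at hi
    have : (i : ℝ) + 1 ≤ t := by exact_mod_cast hi
    linarith
  have hBpos : 0 < ∏ i ∈ Ico t (2 * n), ((i : ℝ) + 1/2 - t) := by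
    refine Finset.prod_pos fun i hi => ?_
    rw [mem_Ico] at hi
    have : (t : ℝ) ≤ i := by exact_mod_cast hi.1
    linarith
  have hsplit : ∏ i ∈ range (2 * n), ((i : ℝ) + 1/2 - t) =
      ((-1 : ℝ) ^ t * ∏ i ∈ range t, ((t : ℝ) - i - 1/2)) *
        ∏ i ∈ Ico t (2 * n), ((i : ℝ) + 1/2 - t) := by
    rw [← Finset.prod_range_mul_prod_Ico _ ht]
    congr 1
    rw [Finset.prod_congr rfl hA, Finset.prod_mul_distrib, Finset.prod_const, card_range]
  rw [hsplit]
  have h1 : (-1 : ℝ) ^ (3 * n + t) * ((-1 : ℝ) ^ (3 * n) *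
        (((-1 : ℝ) ^ t * ∏ i ∈ range t, ((t : ℝ) - i - 1/2)) *
          ∏ i ∈ Ico t (2 * n), ((i : ℝ) + 1/2 - t))) =
      (((-1 : ℝ) ^ (3 * n)) ^ 2 * ((-1 : ℝ) ^ t) ^ 2) *
        ((∏ i ∈ range t, ((t : ℝ) - i - 1/2)) * ∏ i ∈ Ico t (2 * n), ((i : ℝ) + 1/2 - t)) := by
    rw [pow_add]; ring
  have hsq : ∀ k : ℕ, ((-1 : ℝ) ^ k) ^ 2 = 1 := fun k => by
    rw [← pow_mul, mul_comm, pow_mul, neg_one_sq, one_pow]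
  rw [h1, hsq, hsq, one_mul, one_mul]
  exact mul_pos hApos hBpos

noncomputable def gfun (m n : ℕ) : Finset (Fin m) → ℝ :=
  fun T => (-1 : ℝ) ^ (m - T.card) * cc n (m - T.card)

lemma card_le_m {m : ℕ} (S : Finset (Fin m)) : S.card ≤ m := by
  have := Finset.card_le_card (Finset.subset_univ S)
  rwa [Finset.card_univ, Fintype.card_fin] at this

lemma union_eq_univ_iff {m : ℕ} (S T : Finset (Fin m)) : S ∪ T = univ ↔ Tᶜ ⊆ S := by
  simp only [Finset.eq_univ_iff_forall, Finset.subset_iff, mem_union, mem_compl]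
  constructor
  · intro h x hx
    rcases h x with h' | h'
    · exact h'
    · exact absurd h' hx
  · intro h x
    by_cases hx : x ∈ T
    · exact Or.inr hx
    · exact Or.inl (h hx)

lemma Wcoef_gfun (n m : ℕ) (S : Finset (Fin m)) :
    Wcoef m (gfun m n) S = (-1 : ℝ) ^ (S.card + 1) * (Ppoly n).eval (S.card : ℝ) := by
  unfold Wcoef
  have hbij : ∑ T ∈ univ.filter (fun T : Finset (Fin m) => S ∪ T = univ),
      (-1 : ℝ) ^ ((S ∩ T).card + 1) * gfun m n T
      = ∑ A ∈ S.powerset, (-1 : ℝ) ^ (S.card + 1) * cc n A.card := by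
    refine Finset.sum_bij' (fun T _ => Tᶜ) (fun A _ => Aᶜ) ?_ ?_ ?_ ?_ ?_
    · intro T hT
      rw [mem_filter] at hT
      rw [Finset.mem_powerset]
      exact (union_eq_univ_iff S T).mp hT.2
    · intro A hA
      rw [Finset.mem_powerset] at hA
      rw [mem_filter]
      refine ⟨mem_univ _, ?_⟩
      rw [union_eq_univ_iff]
      rwa [compl_compl]
    · intro T _; exact compl_compl T
    · intro A _; exact compl_compl A
    · intro T hT
      rw [mem_filter] at hT
      have hsub : Tᶜ ⊆ S := (union_eq_univ_iff S T).mp hT.2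
      have h1 : S ∩ T = S \ Tᶜ := by ext x; simp [Finset.mem_sdiff]
      have h2 : (S ∩ T).card = S.card - Tᶜ.card := by
        rw [h1, Finset.card_sdiff_of_subset hsub]
      have h3 : m - T.card = Tᶜ.card := by
        rw [Finset.card_compl, Fintype.card_fin]
      have hle : Tᶜ.card ≤ S.card := Finset.card_le_card hsub
      rw [h2]
      unfold gfun
      rw [h3]
      rw [← mul_assoc, ← pow_add]
      congr 2
      omega
  rw [hbij, ← Finset.mul_sum]
  congr 1
  rw [Finset.sum_powerset]
  rw [← newton_P n S.card]
  refine Finset.sum_congr rfl fun j hj => ?_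
  have : ∀ A ∈ Finset.powersetCard j S, cc n A.card = cc n j := by
    intro A hA
    rw [(Finset.mem_powersetCard.mp hA).2]
  rw [Finset.sum_congr rfl this, Finset.sum_const, Finset.card_powersetCard, nsmul_eq_mul]

lemma card_filter_card_eq (m j : ℕ) :
    (univ.filter (fun S : Finset (Fin m) => S.card = j)).card = m.choose j := by
  rw [← Finset.powerset_univ, ← Finset.powersetCard_eq_filter, Finset.card_powersetCard,
    Finset.card_univ, Fintype.card_fin]

lemma card_filter_cardP (m : ℕ) (p : ℕ → Prop) [DecidablePred p] :
    (univ.filter (fun S : Finset (Fin m) => p S.card)).card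
      = ∑ j ∈ (range (m + 1)).filter p, m.choose j := by
  rw [Finset.card_eq_sum_card_fiberwise
    (f := fun S : Finset (Fin m) => S.card) (t := (range (m + 1)).filter p) ?_]
  · refine Finset.sum_congr rfl fun j hj => ?_
    rw [mem_filter, mem_range] at hj
    rw [Finset.filter_filter, ← card_filter_card_eq m j]
    congr 1
    refine Finset.filter_congr fun S _ => ?_
    constructor
    · rintro ⟨_, h⟩; exact h
    · intro h; exact ⟨by rw [h]; exact hj.2, h⟩
  · intro S hS
    rw [mem_coe, mem_filter] at hS
    rw [mem_coe, mem_filter, mem_range]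
    refine ⟨?_, hS.2⟩
    show S.card < m + 1
    have := card_le_m S
    omega

lemma card_filter_compl (m : ℕ) (p : ℕ → Prop) [DecidablePred p] :
    (univ.filter (fun S : Finset (Fin m) => p S.card)).card
      = (univ.filter (fun S : Finset (Fin m) => p (m - S.card))).card := by
  refine Finset.card_bij' (fun S _ => Sᶜ) (fun S _ => Sᶜ) ?_ ?_ ?_ ?_
  · intro S hS
    rw [mem_filter] at hS ⊢
    refine ⟨mem_univ _, ?_⟩
    rw [Finset.card_compl, Fintype.card_fin, Nat.sub_sub_self (card_le_m S)]
    exact hS.2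
  · intro S hS
    rw [mem_filter] at hS ⊢
    refine ⟨mem_univ _, ?_⟩
    rw [Finset.card_compl, Fintype.card_fin]
    exact hS.2
  · intro S _; exact compl_compl S
  · intro S _; exact compl_compl S

lemma tail_bound (n k : ℕ) (hk : k ≤ 3 * n) :
    (∑ j ∈ range (k + 1), ((8 * n).choose j : ℝ)) ≤ 199 ^ n := by
  have h1 : ∀ j ∈ range (k + 1), ((8 * n).choose j : ℝ)
      ≤ (5/3 : ℝ) ^ (3 * n) * (((8 * n).choose j : ℝ) * (3/5 : ℝ) ^ j) := by
    intro j hj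
    rw [mem_range] at hj
    have hj3 : j ≤ 3 * n := by omega
    have hpow : (3/5 : ℝ) ^ (3 * n) ≤ (3/5 : ℝ) ^ j :=
      pow_le_pow_of_le_one (by norm_num) (by norm_num) hj3
    have hone : (1 : ℝ) ≤ (5/3 : ℝ) ^ (3 * n) * (3/5 : ℝ) ^ j := by
      have h0 : (5/3 : ℝ) ^ (3 * n) * (3/5 : ℝ) ^ (3 * n) = 1 := by
        rw [← mul_pow]; norm_num
      calc (1 : ℝ) = (5/3 : ℝ) ^ (3 * n) * (3/5 : ℝ) ^ (3 * n) := h0.symm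
        _ ≤ (5/3 : ℝ) ^ (3 * n) * (3/5 : ℝ) ^ j :=
          mul_le_mul_of_nonneg_left hpow (by positivity)
    calc ((8 * n).choose j : ℝ) = ((8 * n).choose j : ℝ) * 1 := by ring
      _ ≤ ((8 * n).choose j : ℝ) * ((5/3 : ℝ) ^ (3 * n) * (3/5 : ℝ) ^ j) :=
          mul_le_mul_of_nonneg_left hone (by positivity)
      _ = (5/3 : ℝ) ^ (3 * n) * (((8 * n).choose j : ℝ) * (3/5 : ℝ) ^ j) := by ring
  calc (∑ j ∈ range (k + 1), ((8 * n).choose j : ℝ))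
      ≤ ∑ j ∈ range (k + 1), (5/3 : ℝ) ^ (3 * n) * (((8 * n).choose j : ℝ) * (3/5 : ℝ) ^ j) :=
        Finset.sum_le_sum h1
    _ = (5/3 : ℝ) ^ (3 * n) * ∑ j ∈ range (k + 1), (((8 * n).choose j : ℝ) * (3/5 : ℝ) ^ j) := by
        rw [Finset.mul_sum]
    _ ≤ (5/3 : ℝ) ^ (3 * n) * ∑ j ∈ range (8 * n + 1), (((8 * n).choose j : ℝ) * (3/5 : ℝ) ^ j) := by
        refine mul_le_mul_of_nonneg_left ?_ (by positivity)
        refine Finset.sum_le_sum_of_subset_of_nonneg ?_ (fun i _ _ => by positivity)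
        exact Finset.range_subset_range.mpr (by omega)
    _ = (5/3 : ℝ) ^ (3 * n) * (3/5 + 1 : ℝ) ^ (8 * n) := by
        rw [add_pow]
        congr 1
        refine Finset.sum_congr rfl fun j _ => ?_
        rw [one_pow]; ring
    _ = ((5/3 : ℝ) ^ 3) ^ n * ((8/5 : ℝ) ^ 8) ^ n := by
        rw [← pow_mul, ← pow_mul]; norm_num [mul_comm]
    _ = ((5/3 : ℝ) ^ 3 * (8/5 : ℝ) ^ 8) ^ n := by rw [mul_pow]
    _ ≤ 199 ^ n := by
        refine pow_le_pow_left₀ (by positivity) ?_ n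
        norm_num

end Stmt13Aux

open Stmt13Aux Polynomial in
theorem stmt13 :
    ∃ c : ℝ, 0 < c ∧ ∃ m₀ : ℕ, ∀ m : ℕ, m₀ ≤ m → 8 ∣ m →
      ∃ f : Finset (Fin m) → ℝ, f ∅ = 0 ∧
        (1 - Real.exp (-c * m)) * (2 ^ m - 1)
          ≤ ((univ.filter
                (fun S : Finset (Fin m) => S.Nonempty ∧ Wcoef m f S < 0)).card : ℝ) ∧
        ∃ f' : Finset (Fin m) → ℝ, IsCoverage m f' ∧
          ((univ.filter (fun T : Finset (Fin m) => f T ≠ f' T)).card : ℝ)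
            ≤ Real.exp (-c * m) * 2 ^ m := by
  refine ⟨Real.log (9/8) / 8, by positivity, 48, ?_⟩
  intro m hm48 hdvd
  obtain ⟨n, hm⟩ := hdvd
  subst hm
  have hn6 : 6 ≤ n := by omega
  have hexp : Real.exp (-(Real.log (9/8) / 8) * ((8 * n : ℕ) : ℝ)) = (8/9 : ℝ) ^ n := by
    have h89 : Real.log (8/9 : ℝ) = -Real.log (9/8) := by
      rw [← Real.log_inv]; norm_num
    have harg : (-(Real.log (9/8) / 8)) * ((8 * n : ℕ) : ℝ) = Real.log ((8/9 : ℝ) ^ n) := by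
      rw [Real.log_pow, h89]
      push_cast
      ring
    rw [harg, Real.exp_log (by positivity)]
  have h2m : ((2:ℝ)) ^ (8 * n) = 256 ^ n := by rw [pow_mul]; norm_num
  have hε1 : ((8:ℝ)/9) ^ n ≤ 1 := pow_le_one₀ (by norm_num) (by norm_num)
  have hε0 : (0:ℝ) ≤ ((8:ℝ)/9) ^ n := by positivity
  refine ⟨gfun (8 * n) n, ?_, ?_, ?_⟩
  · unfold gfun
    rw [Finset.card_empty, Nat.sub_zero, cc_eq_zero n (8 * n) (by omega), mul_zero]
  · -- main negativity count
    have hsub : univ.filter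
        (fun S : Finset (Fin (8 * n)) => 3 * n ≤ S.card ∧ S.card ≤ 5 * n) ⊆ univ.filter
        (fun S : Finset (Fin (8 * n)) => S.Nonempty ∧ Wcoef (8 * n) (gfun (8 * n) n) S < 0) := by
      intro S hS
      rw [mem_filter] at hS
      obtain ⟨-, h3, h5⟩ := hS
      rw [mem_filter]
      refine ⟨mem_univ _, Finset.card_pos.mp (by omega), ?_⟩
      rw [Wcoef_gfun]
      set t := S.card - 3 * n with htdef
      have hst : S.card = 3 * n + t := by omega
      have ht : t ≤ 2 * n := by omega
      have key := Ppoly_sign n t ht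
      have heq : (-1 : ℝ) ^ (S.card + 1) * (Ppoly n).eval (S.card : ℝ)
          = -((-1 : ℝ) ^ (3 * n + t) * (Ppoly n).eval (((3 * n + t : ℕ) : ℝ))) := by
        rw [hst, pow_succ]
        ring
      rw [heq]
      linarith
    have huniv : (univ : Finset (Finset (Fin (8 * n)))).card = 2 ^ (8 * n) := by
      rw [Finset.card_univ, Fintype.card_finset, Fintype.card_fin]
    have hpart1 := Finset.card_filter_add_card_filter_not
      (s := (univ : Finset (Finset (Fin (8 * n))))) (p := fun S => S.card < 3 * n)
    have hne : univ.filter (fun S : Finset (Fin (8 * n)) => ¬ S.card < 3 * n)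
        = univ.filter (fun S : Finset (Fin (8 * n)) => 3 * n ≤ S.card) :=
      Finset.filter_congr fun S _ => by omega
    rw [hne, huniv] at hpart1
    have hpart2 := Finset.card_filter_add_card_filter_not
      (s := univ.filter (fun S : Finset (Fin (8 * n)) => 3 * n ≤ S.card))
      (p := fun S => S.card ≤ 5 * n)
    rw [Finset.filter_filter, Finset.filter_filter] at hpart2
    have hh2 : univ.filter (fun S : Finset (Fin (8 * n)) => 3 * n ≤ S.card ∧ ¬ S.card ≤ 5 * n)
        = univ.filter (fun S : Finset (Fin (8 * n)) => 5 * n < S.card) :=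
      Finset.filter_congr fun S _ => by omega
    rw [hh2] at hpart2
    have hlo_le : ((univ.filter
        (fun S : Finset (Fin (8 * n)) => S.card < 3 * n)).card : ℝ) ≤ 199 ^ n := by
      have h1 := card_filter_cardP (8 * n) (fun j => j < 3 * n)
      have h2 : (range (8 * n + 1)).filter (fun j => j < 3 * n) = range (3 * n) := by
        ext j; simp only [mem_filter, mem_range]; omega
      have h3 : range (3 * n) = range ((3 * n - 1) + 1) := by congr 1; omega
      rw [h1, h2, h3]
      push_cast
      exact tail_bound n (3 * n - 1) (by omega)
    have hhi_eq : (univ.filter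
          (fun S : Finset (Fin (8 * n)) => 5 * n < S.card)).card
        = (univ.filter (fun S : Finset (Fin (8 * n)) => S.card < 3 * n)).card := by
      rw [card_filter_compl (8 * n) (fun x => 5 * n < x)]
      congr 1
      refine Finset.filter_congr fun S _ => ?_
      have := card_le_m S
      constructor <;> intro <;> omega
    have hgood : ((univ.filter
          (fun S : Finset (Fin (8 * n)) => 3 * n ≤ S.card ∧ S.card ≤ 5 * n)).card : ℝ)
        ≤ ((univ.filter
          (fun S : Finset (Fin (8 * n)) =>
            S.Nonempty ∧ Wcoef (8 * n) (gfun (8 * n) n) S < 0)).card : ℝ) := by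
      exact_mod_cast Finset.card_le_card hsub
    have hkey : 2 * (199:ℝ) ^ n ≤ (8/9 : ℝ) ^ n * 256 ^ n := by
      rw [← mul_pow]
      have h89256 : (8/9 : ℝ) * 256 = 2048/9 := by norm_num
      rw [h89256]
      obtain ⟨k, rfl⟩ : ∃ k, n = 6 + k := ⟨n - 6, by omega⟩
      rw [pow_add, pow_add]
      have h6 : 2 * (199:ℝ) ^ 6 ≤ (2048/9 : ℝ) ^ 6 := by norm_num
      have hk : (199:ℝ) ^ k ≤ (2048/9 : ℝ) ^ k :=
        pow_le_pow_left₀ (by norm_num) (by norm_num) k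
      calc 2 * ((199:ℝ)^6 * 199^k) = (2 * 199^6) * 199^k := by ring
        _ ≤ (2048/9:ℝ)^6 * (2048/9)^k := mul_le_mul h6 hk (by positivity) (by positivity)
    rw [hexp]
    have hcast : ((univ.filter
          (fun S : Finset (Fin (8 * n)) => S.card < 3 * n)).card : ℝ)
        + ((univ.filter
          (fun S : Finset (Fin (8 * n)) => 3 * n ≤ S.card ∧ S.card ≤ 5 * n)).card : ℝ)
        + ((univ.filter
          (fun S : Finset (Fin (8 * n)) => 5 * n < S.card)).card : ℝ) = 2 ^ (8 * n) := by
      have : (univ.filter (fun S : Finset (Fin (8 * n)) => S.card < 3 * n)).card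
          + ((univ.filter
            (fun S : Finset (Fin (8 * n)) => 3 * n ≤ S.card ∧ S.card ≤ 5 * n)).card
          + (univ.filter (fun S : Finset (Fin (8 * n)) => 5 * n < S.card)).card)
          = 2 ^ (8 * n) := by omega
      exact_mod_cast by push_cast [← this]; ring
    have hhi_le : ((univ.filter
        (fun S : Finset (Fin (8 * n)) => 5 * n < S.card)).card : ℝ) ≤ 199 ^ n := by
      rw [hhi_eq]; exact hlo_le
    have hkey2 : 2 * (199:ℝ) ^ n ≤ (8/9 : ℝ) ^ n * 2 ^ (8 * n) := by rw [h2m]; exact hkey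
    have hexpand : (1 - (8/9 : ℝ) ^ n) * ((2:ℝ) ^ (8 * n) - 1)
        = (2:ℝ) ^ (8 * n) - 1 - (8/9 : ℝ) ^ n * 2 ^ (8 * n) + (8/9 : ℝ) ^ n := by ring
    rw [hexpand]
    linarith
  · -- the coverage function f' = 0
    refine ⟨fun _ => 0, ⟨Fin 1, inferInstance, inferInstance, fun _ => ∅, fun _ => 0,
      fun u => le_refl 0, fun T => by simp⟩, ?_⟩
    have hsubs : univ.filter (fun T : Finset (Fin (8 * n)) =>
          gfun (8 * n) n T ≠ (fun _ : Finset (Fin (8 * n)) => (0:ℝ)) T)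
        ⊆ univ.filter (fun T : Finset (Fin (8 * n)) => 6 * n ≤ T.card) := by
      intro T hT
      rw [mem_filter] at hT ⊢
      refine ⟨mem_univ _, ?_⟩
      by_contra hc
      push_neg at hc
      apply hT.2
      show gfun (8 * n) n T = 0
      unfold gfun
      rw [cc_eq_zero n _ (by have := card_le_m T; omega), mul_zero]
    have hcount : ((univ.filter
        (fun T : Finset (Fin (8 * n)) => 6 * n ≤ T.card)).card : ℝ) ≤ 199 ^ n := by
      rw [card_filter_compl (8 * n) (fun x => 6 * n ≤ x)]
      have heq : univ.filter (fun S : Finset (Fin (8 * n)) => 6 * n ≤ 8 * n - S.card)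
          = univ.filter (fun S : Finset (Fin (8 * n)) => S.card ≤ 2 * n) :=
        Finset.filter_congr fun S _ => by
          have := card_le_m S
          constructor <;> intro <;> omega
      rw [heq, card_filter_cardP (8 * n) (fun j => j ≤ 2 * n)]
      have h2 : (range (8 * n + 1)).filter (fun j => j ≤ 2 * n) = range (2 * n + 1) := by
        ext j; simp only [mem_filter, mem_range]; omega
      rw [h2]
      push_cast
      exact tail_bound n (2 * n) (by omega)
    rw [hexp]
    calc ((univ.filter (fun T : Finset (Fin (8 * n)) =>
            gfun (8 * n) n T ≠ (fun _ : Finset (Fin (8 * n)) => (0:ℝ)) T)).card : ℝ)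
        ≤ ((univ.filter
            (fun T : Finset (Fin (8 * n)) => 6 * n ≤ T.card)).card : ℝ) := by
          exact_mod_cast Finset.card_le_card hsubs
      _ ≤ 199 ^ n := hcount
      _ ≤ (8/9 : ℝ) ^ n * 2 ^ (8 * n) := by
          rw [h2m, ← mul_pow]
          refine pow_le_pow_left₀ (by norm_num) (by norm_num) n
end

section
/- Let m ≥ 2 and define f : 2^[m] → ℝ by f(T) = Σ_{S nonempty, S ∩ T ≠ ∅} w(S), where w(S) = m if |S| = 1, w(S) = −1 if |S| = 2, and w(S) = 0 if |S| ≥ 3. Then exactly m(m−1)/2 of the 2^m − 1 W-coefficients of f are negative, yet every coverage function g : 2^[m] → ℝ satisfies |{T ⊆ [m] : g(T) ≠ f(T)}| ≥ 2^{m−2}. -/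
open Finset

/-- The weights `w(S) = m` for `|S| = 1`, `w(S) = −1` for `|S| = 2`, `w(S) = 0` otherwise. -/
noncomputable def wSupermod (m : ℕ) (S : Finset (Fin m)) : ℝ :=
  if S.card = 1 then (m : ℝ) else if S.card = 2 then -1 else 0

/-- The induced set function `f(T) = Σ_{S nonempty, S ∩ T ≠ ∅} w(S)`. -/
noncomputable def fSupermod (m : ℕ) (T : Finset (Fin m)) : ℝ :=
  ∑ S ∈ univ.filter (fun S : Finset (Fin m) => S.Nonempty ∧ (S ∩ T).Nonempty), wSupermod m S

section Helpers
variable {m : ℕ}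

lemma sum_pow_neg_one_real_s14 (s : Finset (Fin m)) :
    (∑ X ∈ s.powerset, (-1 : ℝ) ^ X.card) = if s = ∅ then 1 else 0 := by
  have h := Finset.sum_powerset_neg_one_pow_card (x := s)
  have h2 : (∑ X ∈ s.powerset, (-1 : ℝ) ^ X.card)
      = ((∑ X ∈ s.powerset, (-1 : ℤ) ^ X.card : ℤ) : ℝ) := by push_cast; rfl
  rw [h2, h]; split_ifs <;> simp

lemma innerSum (S R : Finset (Fin m)) (hS : S.Nonempty) :
    ∑ T ∈ univ.filter (fun T : Finset (Fin m) => S ∪ T = univ),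
      (-1 : ℝ) ^ ((S ∩ T).card + 1) * (if (R ∩ T).Nonempty then (1:ℝ) else 0)
    = if R = S then 1 else 0 := by
  have key : ∀ T ∈ univ.filter (fun T : Finset (Fin m) => S ∪ T = univ), Sᶜ ∪ (S ∩ T) = T := by
    intro T hT
    simp only [mem_filter, mem_univ, true_and] at hT
    ext x
    simp only [mem_union, mem_compl, mem_inter]
    constructor
    · rintro (hx | ⟨-, hx⟩)
      · have : x ∈ S ∪ T := hT ▸ mem_univ x
        rcases mem_union.1 this with h | h
        · exact absurd h hx
        · exact h
      · exact hx
    · intro hx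
      by_cases hxS : x ∈ S
      · exact Or.inr ⟨hxS, hx⟩
      · exact Or.inl hxS
  have reindex :
      ∑ T ∈ univ.filter (fun T : Finset (Fin m) => S ∪ T = univ),
        (-1 : ℝ) ^ ((S ∩ T).card + 1) * (if (R ∩ T).Nonempty then (1:ℝ) else 0)
      = ∑ X ∈ S.powerset,
        (-1 : ℝ) ^ (X.card + 1) * (if (R ∩ (Sᶜ ∪ X)).Nonempty then (1:ℝ) else 0) := by
    refine Finset.sum_nbij' (i := fun T => S ∩ T) (j := fun X => Sᶜ ∪ X) ?_ ?_ ?_ ?_ ?_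
    · intro T _; exact mem_powerset.2 inter_subset_left
    · intro X hX
      simp only [mem_filter, mem_univ, true_and]
      ext x; simp; tauto
    · exact key
    · intro X hX
      have h0 : S ∩ Sᶜ = ∅ := by simp
      rw [inter_union_distrib_left, h0, empty_union,
        inter_eq_right.2 (mem_powerset.1 hX)]
    · intro T hT
      rw [key T hT]
  rw [reindex]
  by_cases hRS : (R ∩ Sᶜ).Nonempty
  · have hind : ∀ X ∈ S.powerset, (R ∩ (Sᶜ ∪ X)).Nonempty := fun X _ =>
      hRS.mono (inter_subset_inter (Finset.Subset.refl R) subset_union_left)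
    rw [Finset.sum_congr rfl (fun X hX => by rw [if_pos (hind X hX), mul_one])]
    have e : ∑ X ∈ S.powerset, (-1:ℝ)^(X.card+1) = -∑ X ∈ S.powerset, (-1:ℝ)^X.card := by
      rw [← Finset.sum_neg_distrib]
      exact Finset.sum_congr rfl fun X _ => by ring
    rw [e, sum_pow_neg_one_real_s14, if_neg (nonempty_iff_ne_empty.1 hS), neg_zero]
    rw [if_neg]
    rintro rfl
    simp at hRS
  · have hRsub : R ⊆ S := by
      intro x hx
      by_contra hxS
      exact hRS ⟨x, mem_inter.2 ⟨hx, mem_compl.2 hxS⟩⟩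
    have hre : ∀ X : Finset (Fin m), R ∩ (Sᶜ ∪ X) = R ∩ X := by
      intro X
      rw [inter_union_distrib_left, (not_nonempty_iff_eq_empty.1 hRS), empty_union]
    simp only [hre]
    have step : ∀ X : Finset (Fin m),
        (-1:ℝ)^(X.card+1) * (if (R ∩ X).Nonempty then (1:ℝ) else 0)
        = (-1:ℝ)^(X.card+1) + (if R ∩ X = ∅ then (-1:ℝ)^X.card else 0) := by
      intro X
      by_cases h : (R ∩ X).Nonempty
      · rw [if_pos h, if_neg (nonempty_iff_ne_empty.1 h)]; ring
      · rw [if_neg h, if_pos (not_nonempty_iff_eq_empty.1 h)]; ring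
    rw [Finset.sum_congr rfl (fun X _ => step X), Finset.sum_add_distrib]
    have e1 : ∑ X ∈ S.powerset, (-1:ℝ)^(X.card+1) = 0 := by
      have e : ∑ X ∈ S.powerset, (-1:ℝ)^(X.card+1) = -∑ X ∈ S.powerset, (-1:ℝ)^X.card := by
        rw [← Finset.sum_neg_distrib]
        exact Finset.sum_congr rfl fun X _ => by ring
      rw [e, sum_pow_neg_one_real_s14, if_neg (nonempty_iff_ne_empty.1 hS), neg_zero]
    have efilter : S.powerset.filter (fun X => R ∩ X = ∅) = (S \ R).powerset := by
      ext X
      simp only [mem_filter, mem_powerset, subset_sdiff]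
      constructor
      · rintro ⟨h1, h2⟩
        exact ⟨h1, disjoint_left.2 fun a ha haR =>
          (eq_empty_iff_forall_notMem.1 h2 a) (mem_inter.2 ⟨haR, ha⟩)⟩
      · rintro ⟨h1, h2⟩
        refine ⟨h1, eq_empty_iff_forall_notMem.2 fun a ha => ?_⟩
        rcases mem_inter.1 ha with ⟨haR, haX⟩
        exact (disjoint_left.1 h2 haX) haR
    have e2 : ∑ X ∈ S.powerset, (if R ∩ X = ∅ then (-1:ℝ)^X.card else 0)
        = ∑ X ∈ (S \ R).powerset, (-1:ℝ)^X.card := by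
      rw [← Finset.sum_filter, efilter]
    rw [e1, e2, zero_add, sum_pow_neg_one_real_s14]
    by_cases h : R = S
    · rw [if_pos h, if_pos (by rw [h]; simp)]
    · rw [if_neg h, if_neg
        (fun hd => h (subset_antisymm hRsub (sdiff_eq_empty_iff_subset.1 hd)))]
end Helpers

lemma fSupermod_expand (m : ℕ) (T : Finset (Fin m)) :
    fSupermod m T
      = ∑ R : Finset (Fin m), wSupermod m R * (if (R ∩ T).Nonempty then (1:ℝ) else 0) := by
  rw [fSupermod, Finset.sum_filter]
  refine Finset.sum_congr rfl fun R _ => ?_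
  by_cases h : (R ∩ T).Nonempty
  · rw [if_pos ⟨h.mono inter_subset_left, h⟩, if_pos h, mul_one]
  · rw [if_neg (fun hc => h hc.2), if_neg h, mul_zero]

lemma Wcoef_eq (m : ℕ) (S : Finset (Fin m)) (hS : S.Nonempty) :
    Wcoef m (fSupermod m) S = wSupermod m S := by
  rw [Wcoef]
  calc ∑ T ∈ univ.filter (fun T : Finset (Fin m) => S ∪ T = univ),
        (-1 : ℝ) ^ ((S ∩ T).card + 1) * fSupermod m T
      = ∑ T ∈ univ.filter (fun T : Finset (Fin m) => S ∪ T = univ),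
          ∑ R : Finset (Fin m),
            wSupermod m R *
              ((-1 : ℝ) ^ ((S ∩ T).card + 1) * (if (R ∩ T).Nonempty then (1:ℝ) else 0)) := by
        refine Finset.sum_congr rfl fun T _ => ?_
        rw [fSupermod_expand, Finset.mul_sum]
        exact Finset.sum_congr rfl fun R _ => by ring
    _ = ∑ R : Finset (Fin m),
          wSupermod m R *
            ∑ T ∈ univ.filter (fun T : Finset (Fin m) => S ∪ T = univ),
              (-1 : ℝ) ^ ((S ∩ T).card + 1) * (if (R ∩ T).Nonempty then (1:ℝ) else 0) := by
        rw [Finset.sum_comm]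
        exact Finset.sum_congr rfl fun R _ => (Finset.mul_sum _ _ _).symm
    _ = ∑ R : Finset (Fin m), wSupermod m R * (if R = S then (1:ℝ) else 0) := by
        exact Finset.sum_congr rfl fun R _ => by rw [innerSum S R hS]
    _ = wSupermod m S := by
        simp [mul_ite, mul_one, mul_zero]

section Main
variable {m : ℕ}

lemma inter_insert_nonempty (S T : Finset (Fin m)) (i : Fin m) :
    (S ∩ insert i T).Nonempty ↔ i ∈ S ∨ (S ∩ T).Nonempty := by
  simp only [Finset.Nonempty, mem_inter, mem_insert]
  aesop

lemma fdiff (i j : Fin m) (hij : i ≠ j) (T : Finset (Fin m)) (hi : i ∉ T) (hj : j ∉ T) :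
    fSupermod m (insert i (insert j T)) + fSupermod m T
      = fSupermod m (insert i T) + fSupermod m (insert j T) + 1 := by
  have hone : (1 : ℝ) = ∑ S : Finset (Fin m), (if S = ({i,j} : Finset (Fin m)) then (1:ℝ) else 0) := by
    rw [Finset.sum_ite_eq' univ ({i,j} : Finset (Fin m)) (fun _ => (1:ℝ)), if_pos (mem_univ _)]
  rw [fSupermod_expand, fSupermod_expand, fSupermod_expand, fSupermod_expand, hone,
    ← Finset.sum_add_distrib, ← Finset.sum_add_distrib, ← Finset.sum_add_distrib]
  refine Finset.sum_congr rfl fun S _ => ?_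
  have h12 : (S ∩ insert i (insert j T)).Nonempty ↔ (i ∈ S ∨ j ∈ S ∨ (S ∩ T).Nonempty) := by
    rw [inter_insert_nonempty, inter_insert_nonempty]
  have hii : (S ∩ insert i T).Nonempty ↔ (i ∈ S ∨ (S ∩ T).Nonempty) := inter_insert_nonempty ..
  have hjj : (S ∩ insert j T).Nonempty ↔ (j ∈ S ∨ (S ∩ T).Nonempty) := inter_insert_nonempty ..
  have hcardij : ({i,j} : Finset (Fin m)).card = 2 := by
    rw [card_insert_of_notMem (by simp [hij]), card_singleton]
  by_cases ha : (S ∩ T).Nonempty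
  · have hne : S ≠ ({i,j} : Finset (Fin m)) := by
      rintro rfl
      obtain ⟨x, hx⟩ := ha
      rcases mem_inter.1 hx with ⟨hxS, hxT⟩
      rcases mem_insert.1 hxS with rfl | hxS
      · exact hi hxT
      · exact hj ((mem_singleton.1 hxS) ▸ hxT)
    rw [if_pos (h12.2 (Or.inr (Or.inr ha))), if_pos ha, if_pos (hii.2 (Or.inr ha)),
      if_pos (hjj.2 (Or.inr ha)), if_neg hne]
    ring
  · by_cases hb : i ∈ S <;> by_cases hc : j ∈ S
    · -- i, j ∈ S, S ∩ T = ∅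
      rw [if_pos (h12.2 (Or.inl hb)), if_neg ha, if_pos (hii.2 (Or.inl hb)),
        if_pos (hjj.2 (Or.inl hc))]
      by_cases hS : S = ({i,j} : Finset (Fin m))
      · rw [if_pos hS, hS, wSupermod, hcardij]
        norm_num
      · rw [if_neg hS]
        have hsub : ({i,j} : Finset (Fin m)) ⊆ S := by
          intro x hx
          rcases mem_insert.1 hx with rfl | hx
          · exact hb
          · exact (mem_singleton.1 hx) ▸ hc
        have hw : wSupermod m S = 0 := by
          have h2le : 2 ≤ S.card := hcardij ▸ card_le_card hsub
          rw [wSupermod, if_neg (by omega), if_neg]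
          intro h2
          exact hS (Finset.eq_of_subset_of_card_le hsub (by omega)).symm
        rw [hw]; ring
    · rw [if_pos (h12.2 (Or.inl hb)), if_neg ha, if_pos (hii.2 (Or.inl hb)),
        if_neg (fun h => by rcases hjj.1 h with h | h; exacts [hc h, ha h]),
        if_neg (fun hS : S = _ => hc (hS ▸ (by simp : j ∈ ({i,j} : Finset (Fin m)))))]
      ring
    · rw [if_pos (h12.2 (Or.inr (Or.inl hc))), if_neg ha,
        if_neg (fun h => by rcases hii.1 h with h | h; exacts [hb h, ha h]),
        if_pos (hjj.2 (Or.inl hc)),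
        if_neg (fun hS : S = _ => hb (hS ▸ (by simp : i ∈ ({i,j} : Finset (Fin m)))))]
      ring
    · rw [if_neg (fun h => by rcases h12.1 h with h | h | h; exacts [hb h, hc h, ha h]),
        if_neg ha,
        if_neg (fun h => by rcases hii.1 h with h | h; exacts [hb h, ha h]),
        if_neg (fun h => by rcases hjj.1 h with h | h; exacts [hc h, ha h]),
        if_neg (fun hS : S = _ => hb (hS ▸ (by simp : i ∈ ({i,j} : Finset (Fin m)))))]
      ring
end Main

lemma coverage_ineq {m : ℕ} {g : Finset (Fin m) → ℝ} (hcov : IsCoverage m g)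
    (i j : Fin m) (T : Finset (Fin m)) :
    g (insert i (insert j T)) + g T ≤ g (insert i T) + g (insert j T) := by
  obtain ⟨U, _, _, A, wt, hwt, hg⟩ := hcov
  rw [hg, hg, hg, hg]
  have hXY : (insert i (insert j T)).biUnion A
      = (insert i T).biUnion A ∪ (insert j T).biUnion A := by
    ext u
    simp only [mem_biUnion, mem_union, mem_insert]
    constructor
    · rintro ⟨a, (rfl | rfl | ha), hu⟩
      · exact Or.inl ⟨a, Or.inl rfl, hu⟩
      · exact Or.inr ⟨a, Or.inl rfl, hu⟩
      · exact Or.inl ⟨a, Or.inr ha, hu⟩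
    · rintro (⟨a, (rfl | ha), hu⟩ | ⟨a, (rfl | ha), hu⟩)
      · exact ⟨a, Or.inl rfl, hu⟩
      · exact ⟨a, Or.inr (Or.inr ha), hu⟩
      · exact ⟨a, Or.inr (Or.inl rfl), hu⟩
      · exact ⟨a, Or.inr (Or.inr ha), hu⟩
  have hsub : T.biUnion A ⊆ (insert i T).biUnion A ∩ (insert j T).biUnion A := by
    intro u hu
    exact mem_inter.2
      ⟨biUnion_subset_biUnion_of_subset_left A (subset_insert i T) hu,
       biUnion_subset_biUnion_of_subset_left A (subset_insert j T) hu⟩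
  have key := Finset.sum_union_inter (s₁ := (insert i T).biUnion A)
    (s₂ := (insert j T).biUnion A) (f := wt)
  have hmono : ∑ u ∈ T.biUnion A, wt u
      ≤ ∑ u ∈ (insert i T).biUnion A ∩ (insert j T).biUnion A, wt u :=
    Finset.sum_le_sum_of_subset_of_nonneg hsub (fun u _ _ => hwt u)
  rw [hXY]
  linarith

theorem stmt14 (m : ℕ) (hm : 2 ≤ m) :
    (univ.filter
        (fun S : Finset (Fin m) => S.Nonempty ∧ Wcoef m (fSupermod m) S < 0)).card
      = m * (m - 1) / 2 ∧
    ∀ g : Finset (Fin m) → ℝ, IsCoverage m g →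
      2 ^ (m - 2) ≤ (univ.filter (fun T : Finset (Fin m) => g T ≠ fSupermod m T)).card := by
  constructor
  · -- counting part
    have hfe : univ.filter
        (fun S : Finset (Fin m) => S.Nonempty ∧ Wcoef m (fSupermod m) S < 0)
        = univ.filter (fun S : Finset (Fin m) => S.card = 2) := by
      apply Finset.filter_congr
      intro S _
      constructor
      · rintro ⟨hne, hlt⟩
        rw [Wcoef_eq m S hne, wSupermod] at hlt
        split_ifs at hlt with h1 h2
        · exact absurd hlt (not_lt.2 (Nat.cast_nonneg m))
        · exact h2
        · exact absurd hlt (by norm_num)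
      · intro h2
        have hne : S.Nonempty := Finset.card_pos.1 (by omega)
        refine ⟨hne, ?_⟩
        rw [Wcoef_eq m S hne, wSupermod, if_neg (by omega), if_pos h2]
        norm_num
    rw [hfe]
    have : univ.filter (fun S : Finset (Fin m) => S.card = 2)
        = Finset.powersetCard 2 (univ : Finset (Fin m)) := by
      rw [Finset.powersetCard_eq_filter, Finset.powerset_univ]
    rw [this, Finset.card_powersetCard, card_univ, Fintype.card_fin, Nat.choose_two_right]
  · -- coverage part
    intro g hcov
    set i : Fin m := ⟨0, by omega⟩
    set j : Fin m := ⟨1, by omega⟩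
    have hij : i ≠ j := by simp [i, j, Fin.ext_iff]
    set D := univ.filter (fun T : Finset (Fin m) => g T ≠ fSupermod m T) with hD
    set c : Finset (Fin m) → Finset (Fin m) := fun T =>
      if g T ≠ fSupermod m T then T
      else if g (insert i T) ≠ fSupermod m (insert i T) then insert i T
      else if g (insert j T) ≠ fSupermod m (insert j T) then insert j T
      else insert i (insert j T) with hc
    have hmem : ∀ T ∈ ((univ : Finset (Fin m)) \ {i, j}).powerset, c T ∈ D := by
      intro T hT
      rw [mem_powerset, subset_sdiff] at hT
      obtain ⟨-, hdisj⟩ := hT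
      have hiT : i ∉ T := fun h => (disjoint_right.1 hdisj (by simp)) h
      have hjT : j ∉ T := fun h => (disjoint_right.1 hdisj (by simp)) h
      rw [hD, mem_filter]
      refine ⟨mem_univ _, ?_⟩
      simp only [hc]
      split_ifs with h1 h2 h3
      · exact h1
      · exact h2
      · exact h3
      · -- all agree; derive contradiction from supermodularity vs submodularity
        push_neg at h1 h2 h3
        intro h4
        have hf := fdiff i j hij T hiT hjT
        have hg := coverage_ineq hcov i j T
        rw [h1, h2, h3, h4] at hg
        linarith
    have hstrip : ∀ T ∈ ((univ : Finset (Fin m)) \ {i, j}).powerset, c T \ {i, j} = T := by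
      intro T hT
      rw [mem_powerset, subset_sdiff] at hT
      obtain ⟨-, hdisj⟩ := hT
      have hiT : i ∉ T := fun h => (disjoint_right.1 hdisj (by simp)) h
      have hjT : j ∉ T := fun h => (disjoint_right.1 hdisj (by simp)) h
      have hT' : T \ {i, j} = T := by
        ext x
        simp only [mem_sdiff, mem_insert, mem_singleton]
        constructor
        · exact fun h => h.1
        · intro hx
          refine ⟨hx, ?_⟩
          rintro (rfl | rfl) <;> [exact hiT hx; exact hjT hx]
      simp only [hc]
      have hmi : i ∈ ({i, j} : Finset (Fin m)) := by simp
      have hmj : j ∈ ({i, j} : Finset (Fin m)) := by simp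
      split_ifs
      · exact hT'
      · rw [insert_sdiff_of_mem _ hmi, hT']
      · rw [insert_sdiff_of_mem _ hmj, hT']
      · rw [insert_sdiff_of_mem _ hmi, insert_sdiff_of_mem _ hmj, hT']
    have hinj : Set.InjOn c ((univ : Finset (Fin m)) \ {i, j}).powerset := by
      intro T1 h1 T2 h2 heq
      have := hstrip T1 h1
      rw [heq, hstrip T2 h2] at this
      exact this.symm
    have hle := Finset.card_le_card_of_injOn c hmem hinj
    have hcard : (((univ : Finset (Fin m)) \ {i, j}).powerset).card = 2 ^ (m - 2) := by
      rw [Finset.card_powerset, Finset.card_sdiff_of_subset (by intro x _; exact mem_univ x), card_univ,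
        Fintype.card_fin, card_insert_of_notMem (by simp [hij]), card_singleton]
    rw [← hcard]
    exact hle
end

section
/- Let m ≥ 2 and define f : 2^[m] → ℝ by f(T) = Σ_{S nonempty, S ∩ T ≠ ∅} w(S), where w(S) = m if |S| = 1, w(S) = −1 if |S| = 2, and w(S) = 0 if |S| ≥ 3. Then f is monotone with increments at least 1 (for every R ⊆ [m] and i ∉ R, f(R ∪ {i}) − f(R) ≥ 1) and f is nonnegative (f(T) ≥ 0 for all T ⊆ [m]). -/
open Finset

lemma fSupermod_eq (m : ℕ) (T : Finset (Fin m)) :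
    fSupermod m T = (T.card : ℝ) * (T.card + 1) / 2 := by
  classical
  set A : Finset (Finset (Fin m)) :=
    univ.filter (fun S : Finset (Fin m) => S.Nonempty ∧ (S ∩ T).Nonempty) with hA
  have hw : ∀ S : Finset (Fin m), wSupermod m S =
      (if S.card = 1 then (m : ℝ) else 0) + (if S.card = 2 then (-1 : ℝ) else 0) := by
    intro S
    by_cases h1 : S.card = 1 <;> by_cases h2 : S.card = 2 <;>
      simp [wSupermod, h1, h2] <;> omega
  have hsplit : fSupermod m T =
      (∑ S ∈ A, if S.card = 1 then (m : ℝ) else 0) +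
      (∑ S ∈ A, if S.card = 2 then (-1 : ℝ) else 0) := by
    rw [fSupermod, ← hA, ← Finset.sum_add_distrib]
    exact Finset.sum_congr rfl fun S _ => hw S
  have hA1 : A.filter (fun S => S.card = 1) = T.powersetCard 1 := by
    ext S
    simp only [hA, Finset.mem_filter, Finset.mem_univ, true_and, Finset.mem_powersetCard]
    constructor
    · rintro ⟨⟨-, hST⟩, hc⟩
      refine ⟨?_, hc⟩
      obtain ⟨a, ha⟩ := Finset.card_eq_one.mp hc
      obtain ⟨x, hx⟩ := hST
      rw [Finset.mem_inter] at hx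
      subst ha
      intro y hy
      simp only [Finset.mem_singleton] at hy hx ⊢
      subst hy; rw [hx.1] at hx; exact hx.2
    · rintro ⟨hST, hc⟩
      have hne : S.Nonempty := Finset.card_pos.mp (by omega)
      exact ⟨⟨hne, by rwa [Finset.inter_eq_left.mpr hST]⟩, hc⟩
  have hA2 : A.filter (fun S => S.card = 2) =
      (univ : Finset (Fin m)).powersetCard 2 \ Tᶜ.powersetCard 2 := by
    ext S
    simp only [hA, Finset.mem_filter, Finset.mem_univ, true_and, Finset.mem_sdiff,
      Finset.mem_powersetCard, Finset.subset_univ]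
    constructor
    · rintro ⟨⟨-, hST⟩, hc⟩
      refine ⟨hc, ?_⟩
      rintro ⟨hsub, -⟩
      obtain ⟨x, hx⟩ := hST
      rw [Finset.mem_inter] at hx
      exact (Finset.mem_compl.mp (hsub hx.1)) hx.2
    · rintro ⟨hc, hn⟩
      have hne : S.Nonempty := Finset.card_pos.mp (by omega)
      refine ⟨⟨hne, ?_⟩, hc⟩
      by_contra h
      apply hn
      refine ⟨fun x hx => Finset.mem_compl.mpr fun hxT => ?_, hc⟩
      exact h ⟨x, Finset.mem_inter.mpr ⟨hx, hxT⟩⟩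
  have hsub : Tᶜ.powersetCard 2 ⊆ (univ : Finset (Fin m)).powersetCard 2 :=
    Finset.powersetCard_mono (Finset.subset_univ _)
  have hcard2 : (A.filter (fun S => S.card = 2)).card =
      Nat.choose m 2 - Nat.choose (m - T.card) 2 := by
    rw [hA2, Finset.card_sdiff_of_subset hsub, Finset.card_powersetCard, Finset.card_powersetCard,
      Finset.card_univ, Fintype.card_fin, Finset.card_compl, Fintype.card_fin]
  have hcard1 : (A.filter (fun S => S.card = 1)).card = T.card := by
    rw [hA1, Finset.card_powersetCard, Nat.choose_one_right]
  have hT : T.card ≤ m := by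
    simpa using Finset.card_le_card (Finset.subset_univ T)
  have hchle : Nat.choose (m - T.card) 2 ≤ Nat.choose m 2 :=
    Nat.choose_le_choose 2 (Nat.sub_le _ _)
  rw [hsplit, ← Finset.sum_filter, ← Finset.sum_filter, Finset.sum_const, Finset.sum_const,
    hcard1, hcard2]
  have h1 : ((Nat.choose m 2 - Nat.choose (m - T.card) 2 : ℕ) : ℝ) =
      (m : ℝ) * (m - 1) / 2 - ((m : ℝ) - T.card) * (((m : ℝ) - T.card) - 1) / 2 := by
    rw [Nat.cast_sub hchle, Nat.cast_choose_two, Nat.cast_choose_two, Nat.cast_sub hT]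
  rw [nsmul_eq_mul, nsmul_eq_mul, h1]
  ring

theorem stmt16 (m : ℕ) (hm : 2 ≤ m) :
    (∀ (R : Finset (Fin m)) (i : Fin m), i ∉ R →
      1 ≤ fSupermod m (R ∪ {i}) - fSupermod m R) ∧
    (∀ T : Finset (Fin m), 0 ≤ fSupermod m T) := by
  constructor
  · intro R i hi
    have hc : (R ∪ {i}).card = R.card + 1 := by
      rw [Finset.union_comm, ← Finset.insert_eq, Finset.card_insert_of_notMem hi]
    rw [fSupermod_eq, fSupermod_eq, hc]
    push_cast
    have : (0 : ℝ) ≤ R.card := Nat.cast_nonneg _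
    nlinarith
  · intro T
    rw [fSupermod_eq]
    positivity
end

section
/- Let m ≥ 1 and 0 ≤ k < m, and let λ_0, λ_1, …, λ_m be real numbers with λ_j < 0 for every j > k. Define g : {0, 1, …, m} → ℝ by g(i) = Σ_{j=0}^{m} λ_j·C(i, j), where C(i, j) denotes the binomial coefficient. Then g has at most k + 1 zeros, i.e., |{i ∈ {0, …, m} : g(i) = 0}| ≤ k + 1. -/
open Finset

noncomputable def ddiff (f : ℕ → ℝ) (s : Finset ℕ) : ℝ :=
  ∑ x ∈ s, f x / ∏ y ∈ s.erase x, ((x : ℝ) - (y : ℝ))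

def fd : ℕ → (ℕ → ℝ) → ℕ → ℝ
  | 0, f, x => f x
  | n+1, f, x => fd n f (x+1) - fd n f x

lemma ddiff_erase (f : ℕ → ℝ) (s : Finset ℕ) (a : ℕ) (ha : a ∈ s) :
    ddiff f (s.erase a) =
      ∑ x ∈ s, f x * ((x : ℝ) - (a : ℝ)) / ∏ y ∈ s.erase x, ((x : ℝ) - (y : ℝ)) := by
  rw [ddiff, ← Finset.sum_erase s (f := fun x => f x * ((x : ℝ) - (a : ℝ)) / ∏ y ∈ s.erase x, ((x : ℝ) - (y : ℝ)))
    (a := a) (by simp)]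
  refine Finset.sum_congr rfl fun x hx => ?_
  have hxa : x ≠ a := (Finset.mem_erase.1 hx).1
  have hxs : x ∈ s := (Finset.mem_erase.1 hx).2
  have ham : a ∈ s.erase x := Finset.mem_erase.2 ⟨Ne.symm hxa, ha⟩
  have hP : ∏ y ∈ s.erase x, ((x : ℝ) - (y : ℝ))
      = ((x : ℝ) - (a : ℝ)) * ∏ y ∈ (s.erase x).erase a, ((x : ℝ) - (y : ℝ)) :=
    (Finset.mul_prod_erase _ _ ham).symm
  have hcomm : (s.erase x).erase a = (s.erase a).erase x := Finset.erase_right_comm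
  have hne : ((x : ℝ) - (a : ℝ)) ≠ 0 := sub_ne_zero.2 (by exact_mod_cast hxa)
  rw [hP, hcomm, mul_comm (f x) ((x : ℝ) - (a : ℝ)), mul_div_mul_left _ _ hne]

lemma ddiff_sub (f : ℕ → ℝ) (s : Finset ℕ) (a b : ℕ) (ha : a ∈ s) (hb : b ∈ s) :
    ddiff f (s.erase a) - ddiff f (s.erase b) = ((b : ℝ) - (a : ℝ)) * ddiff f s := by
  rw [ddiff_erase f s a ha, ddiff_erase f s b hb, ddiff, Finset.mul_sum,
    ← Finset.sum_sub_distrib]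
  refine Finset.sum_congr rfl fun x hx => ?_
  rw [div_sub_div_same, ← mul_div_assoc]
  congr 1
  ring

lemma ddiff_insert (f : ℕ → ℝ) (s : Finset ℕ) (a b y : ℕ) (ha : a ∈ s) (hb : b ∈ s)
    (hy : y ∉ s) (hay : a ≠ y) (hby : b ≠ y) :
    ((b : ℝ) - (a : ℝ)) * ddiff f s
      = ((b : ℝ) - (y : ℝ)) * ddiff f (insert y (s.erase a))
        + ((y : ℝ) - (a : ℝ)) * ddiff f (insert y (s.erase b)) := by
  have h1 := ddiff_sub f (insert y s) y a (Finset.mem_insert_self _ _) (Finset.mem_insert_of_mem ha)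
  have h2 := ddiff_sub f (insert y s) y b (Finset.mem_insert_self _ _) (Finset.mem_insert_of_mem hb)
  have ea : (insert y s).erase a = insert y (s.erase a) := by
    ext z
    simp only [Finset.mem_erase, Finset.mem_insert]
    constructor
    · rintro ⟨h1, h2 | h3⟩
      · exact Or.inl h2
      · exact Or.inr ⟨h1, h3⟩
    · rintro (rfl | ⟨h1, h2⟩)
      · exact ⟨Ne.symm hay, Or.inl rfl⟩
      · exact ⟨h1, Or.inr h2⟩
  have eb : (insert y s).erase b = insert y (s.erase b) := by
    ext z
    simp only [Finset.mem_erase, Finset.mem_insert]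
    constructor
    · rintro ⟨h1, h2 | h3⟩
      · exact Or.inl h2
      · exact Or.inr ⟨h1, h3⟩
    · rintro (rfl | ⟨h1, h2⟩)
      · exact ⟨Ne.symm hby, Or.inl rfl⟩
      · exact ⟨h1, Or.inr h2⟩
  rw [Finset.erase_insert hy, ea] at h1
  rw [Finset.erase_insert hy, eb] at h2
  linear_combination ((b : ℝ) - (y : ℝ)) * h1 - ((a : ℝ) - (y : ℝ)) * h2

lemma ddiff_Icc (f : ℕ → ℝ) : ∀ (n x : ℕ),
    ddiff f (Finset.Icc x (x + n)) = fd n f x / (n.factorial : ℝ) := by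
  intro n
  induction n with
  | zero =>
    intro x
    simp [ddiff, fd]
  | succ n ih =>
    intro x
    have ha : x ∈ Finset.Icc x (x + (n+1)) := by simp
    have hb : x + n + 1 ∈ Finset.Icc x (x + (n+1)) := by
      simp [Finset.mem_Icc]; omega
    have key := ddiff_sub f (Finset.Icc x (x + (n+1))) x (x + n + 1) ha hb
    have e1 : (Finset.Icc x (x + (n+1))).erase x = Finset.Icc (x+1) ((x+1) + n) := by
      ext z; simp only [Finset.mem_erase, Finset.mem_Icc]; omega
    have e2 : (Finset.Icc x (x + (n+1))).erase (x + n + 1) = Finset.Icc x (x + n) := by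
      ext z; simp only [Finset.mem_erase, Finset.mem_Icc]; omega
    rw [e1, e2, ih, ih] at key
    have hfd : fd (n+1) f x = fd n f (x+1) - fd n f x := rfl
    have hfac : ((n+1).factorial : ℝ) = ((n:ℝ) + 1) * (n.factorial : ℝ) := by
      rw [Nat.factorial_succ]; push_cast; ring
    have hfacne : (n.factorial : ℝ) ≠ 0 := by
      exact_mod_cast (Nat.factorial_pos n).ne'
    have hcast : ((x + n + 1 : ℕ) : ℝ) - (x : ℝ) = (n : ℝ) + 1 := by push_cast; ring
    rw [hcast] at key
    rw [hfd, hfac]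
    have hn1 : ((n : ℝ) + 1) ≠ 0 := by positivity
    field_simp at key ⊢
    linarith [key]

lemma fd_g (lam : ℕ → ℝ) (m : ℕ) : ∀ (n i : ℕ),
    fd n (fun x => ∑ j ∈ range (m+1), lam j * (x.choose j : ℝ)) i
      = ∑ j ∈ range (m+1), lam j * (if n ≤ j then ((i.choose (j - n) : ℕ) : ℝ) else 0) := by
  intro n
  induction n with
  | zero =>
    intro i
    simp [fd]
  | succ n ih =>
    intro i
    show fd n _ (i+1) - fd n _ i = _
    rw [ih, ih, ← Finset.sum_sub_distrib]
    refine Finset.sum_congr rfl fun j hj => ?_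
    rw [← mul_sub]
    congr 1
    by_cases h : n + 1 ≤ j
    · have hn : n ≤ j := by omega
      simp only [h, hn, if_true]
      have hjn : j - n = (j - (n+1)) + 1 := by omega
      rw [hjn, Nat.choose_succ_succ]
      push_cast
      ring
    · by_cases hn : n ≤ j
      · have hjn : j = n := by omega
        subst hjn
        simp [h, hn]
      · simp [h, hn]

lemma ddiff_neg (f : ℕ → ℝ) (M n : ℕ) (hf : ∀ i, i + n ≤ M → fd n f i < 0) :
    ∀ (d : ℕ) (s : Finset ℕ) (hs : s.Nonempty), s.card = n + 1 → (∀ x ∈ s, x ≤ M) →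
      s.max' hs - s.min' hs ≤ d → ddiff f s < 0 := by
  intro d
  induction d using Nat.strong_induction_on with
  | _ d ih =>
    intro s hs hcard hsM hd
    set a := s.min' hs with haa
    set b := s.max' hs with hbb
    have haS : a ∈ s := s.min'_mem hs
    have hbS : b ∈ s := s.max'_mem hs
    have hab : a ≤ b := s.min'_le b hbS
    have hbM : b ≤ M := hsM b hbS
    have hsub : s ⊆ Finset.Icc a b := fun x hx =>
      Finset.mem_Icc.2 ⟨s.min'_le x hx, s.le_max' x hx⟩
    have hcard_le : n + 1 ≤ b - a + 1 := by
      have := Finset.card_le_card hsub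
      rw [Nat.card_Icc] at this
      omega
    by_cases hgap : b - a = n
    · have hseq : s = Finset.Icc a b := by
        apply Finset.eq_of_subset_of_card_le hsub
        rw [Nat.card_Icc]; omega
      have hseq2 : s = Finset.Icc a (a + n) := by
        rw [hseq]; congr 1; omega
      rw [hseq2, ddiff_Icc]
      apply div_neg_of_neg_of_pos
      · exact hf a (by omega)
      · exact_mod_cast Nat.factorial_pos n
    · have hlt : n < b - a := by omega
      have hy : ∃ y, a < y ∧ y < b ∧ y ∉ s := by
        by_contra h
        push_neg at h
        have hIcc : Finset.Icc a b ⊆ s := by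
          intro x hx
          rw [Finset.mem_Icc] at hx
          rcases eq_or_lt_of_le hx.1 with rfl | h1
          · exact haS
          · rcases eq_or_lt_of_le hx.2 with rfl | h2
            · exact hbS
            · exact h x h1 h2
        have := Finset.card_le_card hIcc
        rw [Nat.card_Icc] at this
        omega
      obtain ⟨y, hay, hyb, hys⟩ := hy
      have key := ddiff_insert f s a b y haS hbS hys (by omega) (by omega)
      set s1 := insert y (s.erase a) with hs1
      set s2 := insert y (s.erase b) with hs2
      have hy1 : y ∉ s.erase a := fun h => hys (Finset.mem_of_mem_erase h)
      have hy2 : y ∉ s.erase b := fun h => hys (Finset.mem_of_mem_erase h)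
      have hs1ne : s1.Nonempty := Finset.insert_nonempty _ _
      have hs2ne : s2.Nonempty := Finset.insert_nonempty _ _
      have hcard1 : s1.card = n + 1 := by
        rw [hs1, Finset.card_insert_of_notMem hy1, Finset.card_erase_of_mem haS, hcard]
        omega
      have hcard2 : s2.card = n + 1 := by
        rw [hs2, Finset.card_insert_of_notMem hy2, Finset.card_erase_of_mem hbS, hcard]
        omega
      have hM1 : ∀ x ∈ s1, x ≤ M := by
        intro x hx
        rcases Finset.mem_insert.1 hx with rfl | hx'
        · omega
        · exact hsM x (Finset.mem_of_mem_erase hx')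
      have hM2 : ∀ x ∈ s2, x ≤ M := by
        intro x hx
        rcases Finset.mem_insert.1 hx with rfl | hx'
        · omega
        · exact hsM x (Finset.mem_of_mem_erase hx')
      -- spread bounds for s1 : all elements in [a+1, b]
      have hsp1 : s1.max' hs1ne - s1.min' hs1ne ≤ b - (a + 1) := by
        have hmax : s1.max' hs1ne ≤ b := by
          apply Finset.max'_le
          intro x hx
          rcases Finset.mem_insert.1 hx with rfl | hx'
          · omega
          · exact s.le_max' x (Finset.mem_of_mem_erase hx')
        have hmin : a + 1 ≤ s1.min' hs1ne := by
          apply Finset.le_min'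
          intro x hx
          rcases Finset.mem_insert.1 hx with rfl | hx'
          · omega
          · have h1 := s.min'_le x (Finset.mem_of_mem_erase hx')
            have h2 : x ≠ a := (Finset.mem_erase.1 hx').1
            omega
        omega
      have hsp2 : s2.max' hs2ne - s2.min' hs2ne ≤ (b - 1) - a := by
        have hmax : s2.max' hs2ne ≤ b - 1 := by
          apply Finset.max'_le
          intro x hx
          rcases Finset.mem_insert.1 hx with rfl | hx'
          · omega
          · have h1 := s.le_max' x (Finset.mem_of_mem_erase hx')
            have h2 : x ≠ b := (Finset.mem_erase.1 hx').1
            omega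
        have hmin : a ≤ s2.min' hs2ne := by
          apply Finset.le_min'
          intro x hx
          rcases Finset.mem_insert.1 hx with rfl | hx'
          · omega
          · exact s.min'_le x (Finset.mem_of_mem_erase hx')
        omega
      have hdlt : b - a - 1 < d := by omega
      have hdd1 : ddiff f s1 < 0 :=
        ih (b - a - 1) hdlt s1 hs1ne hcard1 hM1 (by omega)
      have hdd2 : ddiff f s2 < 0 :=
        ih (b - a - 1) hdlt s2 hs2ne hcard2 hM2 (by omega)
      have hba : (0:ℝ) < (b:ℝ) - (a:ℝ) := by
        rw [sub_pos]; exact_mod_cast (by omega : a < b)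
      have hbyr : (0:ℝ) < (b:ℝ) - (y:ℝ) := by
        rw [sub_pos]; exact_mod_cast hyb
      have hyar : (0:ℝ) < (y:ℝ) - (a:ℝ) := by
        rw [sub_pos]; exact_mod_cast hay
      nlinarith [mul_neg_of_pos_of_neg hbyr hdd1, mul_neg_of_pos_of_neg hyar hdd2,
        mul_pos hba hba]

theorem stmt17 (m k : ℕ) (hm : 1 ≤ m) (hk : k < m) (lam : ℕ → ℝ)
    (hlam : ∀ j : ℕ, k < j → j ≤ m → lam j < 0)
    (g : ℕ → ℝ)
    (hg : ∀ i : ℕ, g i = ∑ j ∈ range (m + 1), lam j * (i.choose j : ℝ)) :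
    ((range (m + 1)).filter (fun i => g i = 0)).card ≤ k + 1 := by
  by_contra hcon
  push_neg at hcon
  obtain ⟨s, hsub, hscard⟩ := Finset.exists_subset_card_eq (by omega :
    k + 2 ≤ ((range (m + 1)).filter (fun i => g i = 0)).card)
  have hzero : ∀ x ∈ s, g x = 0 := fun x hx => (Finset.mem_filter.1 (hsub hx)).2
  have hle : ∀ x ∈ s, x ≤ m := fun x hx => by
    have := Finset.mem_range.1 (Finset.mem_filter.1 (hsub hx)).1
    omega
  have hne : s.Nonempty := Finset.card_pos.1 (by omega)
  have hgfun : g = fun x => ∑ j ∈ range (m+1), lam j * (x.choose j : ℝ) := funext hg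
  have hfd : ∀ i, i + (k+1) ≤ m → fd (k+1) g i < 0 := by
    intro i hi
    rw [hgfun, fd_g]
    have hzsum : (0:ℝ) = ∑ j ∈ range (m+1), (0:ℝ) := by simp
    rw [hzsum]
    apply Finset.sum_lt_sum
    · intro j hj
      by_cases h : k + 1 ≤ j
      · simp only [h, if_true]
        apply mul_nonpos_of_nonpos_of_nonneg
        · exact le_of_lt (hlam j (by omega) (by exact Nat.lt_succ_iff.1 (Finset.mem_range.1 hj)))
        · positivity
      · simp [h]
    · refine ⟨k + 1, Finset.mem_range.2 (by omega), ?_⟩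
      simp only [le_refl, if_true, Nat.sub_self, Nat.choose_zero_right, Nat.cast_one, mul_one]
      exact hlam (k+1) (by omega) (by omega)
  have hdd0 : ddiff g s = 0 := by
    apply Finset.sum_eq_zero
    intro x hx
    rw [hzero x hx, zero_div]
  have hddneg := ddiff_neg g m (k+1) hfd (s.max' hne - s.min' hne) s hne hscard hle le_rfl
  linarith
end

section
/- Let C > 0 and suppose that every multilinear polynomial p(x_1, …, x_m) = Σ_{S ⊆ [m]} λ_S·Π_{i ∈ S} x_i with λ_S < 0 for every S with |S| > k has at most C·k·2^m/√m zeros in {0, 1}^m. Then every coverage function g : 2^[m] → ℝ agrees with f* on at most C·k·2^m/√m subsets: |{T ⊆ [m] : g(T) = f*(T)}| ≤ C·k·2^m/√m. -/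
open Finset

/-- The multilinear polynomial `p(x) = Σ_{S ⊆ [m]} λ_S Π_{i ∈ S} x_i`. -/
noncomputable def mlPoly (m : ℕ) (lam : Finset (Fin m) → ℝ) (x : Fin m → ℝ) : ℝ :=
  ∑ S : Finset (Fin m), lam S * ∏ i ∈ S, x i

theorem stmt18 (m k : ℕ) (hm : 2 ≤ m) (hk1 : 1 ≤ k) (hk2 : k ≤ m - 1)
    (N : ℝ) (hN : (Nat.factorial (2 ^ m) : ℝ) < N)
    (C : ℝ) (hC : 0 < C)
    (hconj : ∀ lam : Finset (Fin m) → ℝ,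
      (∀ S : Finset (Fin m), k < S.card → lam S < 0) →
      ((univ.filter (fun x : Fin m → Bool =>
          mlPoly m lam (fun i => if x i then 1 else 0) = 0)).card : ℝ)
        ≤ C * k * 2 ^ m / Real.sqrt m) :
    ∀ g : Finset (Fin m) → ℝ, IsCoverage m g →
      ((univ.filter (fun T : Finset (Fin m) => g T = fstar m k N T)).card : ℝ)
        ≤ C * k * 2 ^ m / Real.sqrt m := by
  classical
  intro g hg
  obtain ⟨U, _, _, A, wt, hwt, hgT⟩ := hg
  -- the index set of a point u : which A_i contain u
  set ind : U → Finset (Fin m) := fun u => univ.filter (fun i => u ∈ A i) with hind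
  -- the W-transform weights of g
  set w : Finset (Fin m) → ℝ := fun S => ∑ u ∈ univ.filter (fun u => ind u = S), wt u with hw
  have hw0 : ∀ S, 0 ≤ w S := fun S => Finset.sum_nonneg fun u _ => hwt u
  set a : Finset (Fin m) → ℝ := fun S => w S - wstar m k N S with ha
  set lam : Finset (Fin m) → ℝ := fun S =>
    if S.Nonempty then wstar m k N S - w S
    else ∑ S' ∈ univ.filter (fun S' : Finset (Fin m) => S'.Nonempty), a S' with hlam
  -- negativity of high-degree coefficients
  have hneg : ∀ S : Finset (Fin m), k < S.card → lam S < 0 := by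
    intro S hS
    have hSne : S.Nonempty := Finset.card_pos.mp (lt_of_le_of_lt (Nat.zero_le k) hS)
    have hws : wstar m k N S = -1 := by simp [wstar, not_le.mpr hS]
    simp only [hlam, if_pos hSne, hws]
    linarith [hw0 S]
  -- the W-transform formula for g
  have hgw : ∀ T : Finset (Fin m),
      g T = ∑ S ∈ univ.filter (fun S : Finset (Fin m) => (S ∩ T).Nonempty), w S := by
    intro T
    rw [hgT]
    simp only [hw]
    rw [Finset.sum_fiberwise_eq_sum_filter univ
      (univ.filter (fun S : Finset (Fin m) => (S ∩ T).Nonempty)) ind wt]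
    apply Finset.sum_congr _ (fun _ _ => rfl)
    ext u
    simp only [Finset.mem_biUnion, Finset.mem_filter, Finset.mem_univ, true_and, hind,
      Finset.Nonempty, Finset.mem_inter]
    constructor
    · rintro ⟨i, hiT, hiA⟩; exact ⟨i, by simp [hiA], hiT⟩
    · rintro ⟨i, hiA, hiT⟩; exact ⟨i, hiT, by simpa using hiA⟩
  -- rewrite fstar with the simpler filter
  have hfs : ∀ T : Finset (Fin m),
      fstar m k N T = ∑ S ∈ univ.filter (fun S : Finset (Fin m) => (S ∩ T).Nonempty),
        wstar m k N S := by
    intro T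
    unfold fstar
    apply Finset.sum_congr _ (fun _ _ => rfl)
    apply Finset.filter_congr
    intro S _
    constructor
    · exact fun h => h.2
    · exact fun h => ⟨h.mono Finset.inter_subset_left, h⟩
  -- the Boolean point corresponding to T (complement indicator)
  set Φ : Finset (Fin m) → (Fin m → Bool) := fun T i => decide (i ∉ T) with hΦ
  -- the key evaluation identity
  have hkey : ∀ T : Finset (Fin m),
      mlPoly m lam (fun i => if Φ T i then 1 else 0) = g T - fstar m k N T := by
    intro T
    have hprod : ∀ S : Finset (Fin m),
        (∏ i ∈ S, (if Φ T i then (1:ℝ) else 0)) = if (S ∩ T).Nonempty then 0 else 1 := by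
      intro S
      by_cases h : (S ∩ T).Nonempty
      · obtain ⟨i, hi⟩ := h
        rw [if_pos ⟨i, hi⟩]
        refine Finset.prod_eq_zero (Finset.mem_inter.mp hi).1 ?_
        simp [hΦ, (Finset.mem_inter.mp hi).2]
      · rw [if_neg h]
        refine Finset.prod_eq_one fun i hiS => ?_
        have hiT : i ∉ T := fun hiT => h ⟨i, Finset.mem_inter.mpr ⟨hiS, hiT⟩⟩
        simp [hΦ, hiT]
    unfold mlPoly
    simp only [hprod]
    have hterm : ∀ S : Finset (Fin m),
        lam S * (if (S ∩ T).Nonempty then (0:ℝ) else 1)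
          = if ¬ (S ∩ T).Nonempty then lam S else 0 := by
      intro S; by_cases h : (S ∩ T).Nonempty <;> simp [h]
    simp only [hterm]
    rw [← Finset.sum_filter]
    -- split the sum over S with S ∩ T = ∅ into S = ∅ and S nonempty
    rw [← Finset.sum_filter_add_sum_filter_not
      (univ.filter (fun S : Finset (Fin m) => ¬ (S ∩ T).Nonempty)) (fun S => S.Nonempty) lam]
    have hempt : (univ.filter (fun S : Finset (Fin m) => ¬ (S ∩ T).Nonempty)).filter
        (fun S => ¬ S.Nonempty) = {(∅ : Finset (Fin m))} := by
      ext S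
      simp only [Finset.mem_filter, Finset.mem_univ, true_and,
        Finset.not_nonempty_iff_eq_empty, Finset.mem_singleton]
      constructor
      · exact fun h => h.2
      · rintro rfl; exact ⟨by simp, rfl⟩
    rw [hempt, Finset.sum_singleton]
    have hlamempty : lam ∅ = ∑ S' ∈ univ.filter (fun S' : Finset (Fin m) => S'.Nonempty), a S' := by
      simp [hlam]
    have hfilter : (univ.filter (fun S : Finset (Fin m) => ¬ (S ∩ T).Nonempty)).filter
        (fun S => S.Nonempty)
        = (univ.filter (fun S : Finset (Fin m) => S.Nonempty)).filter
          (fun S => ¬ (S ∩ T).Nonempty) := by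
      ext S; simp; tauto
    have hsum1 : ∑ S ∈ (univ.filter (fun S : Finset (Fin m) => ¬ (S ∩ T).Nonempty)).filter
        (fun S => S.Nonempty), lam S
        = - ∑ S ∈ (univ.filter (fun S : Finset (Fin m) => S.Nonempty)).filter
          (fun S => ¬ (S ∩ T).Nonempty), a S := by
      rw [hfilter, ← Finset.sum_neg_distrib]
      apply Finset.sum_congr rfl
      intro S hS
      have hSne : S.Nonempty := (Finset.mem_filter.mp (Finset.mem_filter.mp hS).1).2
      simp only [hlam, ha, if_pos hSne]
      ring
    rw [hsum1, hlamempty]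
    rw [← Finset.sum_filter_add_sum_filter_not
      (univ.filter (fun S' : Finset (Fin m) => S'.Nonempty))
      (fun S => ¬ (S ∩ T).Nonempty) a]
    have hfilter2 : (univ.filter (fun S : Finset (Fin m) => S.Nonempty)).filter
        (fun S => ¬ ¬ (S ∩ T).Nonempty)
        = univ.filter (fun S : Finset (Fin m) => (S ∩ T).Nonempty) := by
      ext S
      simp only [Finset.mem_filter, Finset.mem_univ, true_and, not_not]
      constructor
      · exact fun h => h.2
      · exact fun h => ⟨h.mono Finset.inter_subset_left, h⟩
    rw [hfilter2, hgw, hfs, ← Finset.sum_sub_distrib]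
    simp only [ha]
    ring
  -- injection of the agreement set into the zero set
  have hcard : (univ.filter (fun T : Finset (Fin m) => g T = fstar m k N T)).card
      ≤ (univ.filter (fun x : Fin m → Bool =>
          mlPoly m lam (fun i => if x i then 1 else 0) = 0)).card := by
    apply Finset.card_le_card_of_injOn Φ
    · intro T hT
      simp only [Finset.mem_coe, Finset.mem_filter, Finset.mem_univ, true_and] at hT ⊢
      rw [hkey T, hT]
      ring
    · intro T _ T' _ h
      ext i
      have := congrFun h i
      simp only [hΦ, decide_eq_decide] at this
      tauto
  exact le_trans (Nat.cast_le.mpr hcard) (hconj lam hneg)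
end
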